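/- arXiv:2208.14732 — 8 statements merged into one kernel-verified Lean document; each statement's English description precedes it below -/
import Mathlib

section
/- Let μ be a doubling measure on a connected metric space X with doubling constant c_μ. Then there exist an exponent σ > 0 and a constant c_σ > 0, both depending only on c_μ, such that μ(B(x,r))/μ(B(x,R)) ≤ c_σ (r/R)^σ for all x ∈ X and all 0 < r < R ≤ 2 diam(X). -/
open MeasureTheory Metric Set ENNReal NNReal

private lemma exists_dist_eq' {X : Type*} [MetricSpace X] [ConnectedSpace X]
    (x : X) {R t : ℝ} (hR : 0 < R)
    (hdiam : ENNReal.ofReal R ≤ 2 * EMetric.diam (univ : Set X))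
    (ht0 : 0 ≤ t) (ht : t < R / 4) : ∃ y, dist x y = t := by
  have hS : EMetric.diam (univ : Set X) ≤ 2 * ⨆ y, edist x y := by
    apply EMetric.diam_le
    intro a _ b _
    calc edist a b ≤ edist a x + edist x b := edist_triangle _ _ _
      _ = edist x a + edist x b := by rw [edist_comm]
      _ ≤ (⨆ y, edist x y) + ⨆ y, edist x y := add_le_add (le_iSup _ a) (le_iSup _ b)
      _ = 2 * ⨆ y, edist x y := (two_mul _).symm
  have h4 : ENNReal.ofReal R ≤ (⨆ y, edist x y) * 4 := by
    calc ENNReal.ofReal R ≤ 2 * EMetric.diam (univ : Set X) := hdiam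
      _ ≤ 2 * (2 * ⨆ y, edist x y) := by gcongr
      _ = (⨆ y, edist x y) * 4 := by ring
  have hdivle : ENNReal.ofReal R / 4 ≤ ⨆ y, edist x y := ENNReal.div_le_of_le_mul h4
  have ht' : ENNReal.ofReal t < ⨆ y, edist x y := by
    refine lt_of_lt_of_le ?_ hdivle
    rw [show (4 : ℝ≥0∞) = ENNReal.ofReal 4 by norm_num,
      ← ENNReal.ofReal_div_of_pos (by norm_num)]
    rw [ENNReal.ofReal_lt_ofReal_iff (by linarith)]
    exact ht
  obtain ⟨y, hy⟩ := lt_iSup_iff.mp ht'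
  rw [edist_dist] at hy
  have hty : t < dist x y := by
    by_contra h
    push_neg at h
    exact absurd (ENNReal.ofReal_le_ofReal h) (not_le.mpr hy)
  have hcont : Continuous (fun z : X => dist x z) := continuous_const.dist continuous_id
  have hmem : t ∈ Icc (dist x x) (dist x y) := by
    rw [dist_self]; exact ⟨ht0, hty.le⟩
  obtain ⟨z, hz⟩ := intermediate_value_univ x y hcont hmem
  exact ⟨z, hz⟩

private lemma rev_dbl' {X : Type*} [MetricSpace X] [MeasurableSpace X] [BorelSpace X]
    (μ : Measure X)
    (c : ℝ≥0) (hc : 1 < c)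
    (hdbl : ∀ (x : X) (r : ℝ), 0 < r → μ (ball x (2 * r)) ≤ (c : ℝ≥0∞) * μ (ball x r))
    (x y : X) {s : ℝ} (hs : 0 < s) (hy : dist x y = 3 * s / 4) :
    μ (ball x (s / 2)) ≤ ((c ^ 3 / (c ^ 3 + 1) : ℝ≥0) : ℝ≥0∞) * μ (ball x s) := by
  have h1 : ball y (s / 4) ⊆ ball x s := by
    intro z hz
    rw [mem_ball] at hz ⊢
    have := dist_triangle z y x
    rw [dist_comm y x, hy] at this
    linarith
  have h2 : Disjoint (ball x (s / 2)) (ball y (s / 4)) := by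
    rw [Set.disjoint_left]
    intro z hz hz'
    rw [mem_ball] at hz hz'
    have := dist_triangle x z y
    rw [hy] at this
    linarith [dist_comm z x, dist_comm z y]
  have h3 : μ (ball x (s / 2)) + μ (ball y (s / 4)) ≤ μ (ball x s) := by
    rw [← measure_union h2 measurableSet_ball]
    exact measure_mono (union_subset (ball_subset_ball (by linarith)) h1)
  have h4 : ball x (s / 2) ⊆ ball y (2 * (2 * (2 * (s / 4)))) := by
    intro z hz
    rw [mem_ball] at hz ⊢
    have := dist_triangle z x y
    rw [hy] at this
    linarith
  have h5 : μ (ball x (s / 2)) ≤ (c : ℝ≥0∞) ^ 3 * μ (ball y (s / 4)) := by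
    calc μ (ball x (s / 2)) ≤ μ (ball y (2 * (2 * (2 * (s / 4))))) := measure_mono h4
      _ ≤ c * μ (ball y (2 * (2 * (s / 4)))) := hdbl y _ (by positivity)
      _ ≤ c * (c * μ (ball y (2 * (s / 4)))) := by
          exact mul_le_mul_right (hdbl y _ (by positivity)) _
      _ ≤ c * (c * (c * μ (ball y (s / 4)))) := by
          exact mul_le_mul_right (mul_le_mul_right (hdbl y _ (by positivity)) _) _
      _ = (c : ℝ≥0∞) ^ 3 * μ (ball y (s / 4)) := by ring
  have key : μ (ball x (s / 2)) * ((c : ℝ≥0∞) ^ 3 + 1) ≤ (c : ℝ≥0∞) ^ 3 * μ (ball x s) := by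
    calc μ (ball x (s / 2)) * ((c : ℝ≥0∞) ^ 3 + 1)
        = (c : ℝ≥0∞) ^ 3 * μ (ball x (s / 2)) + μ (ball x (s / 2)) := by ring
      _ ≤ (c : ℝ≥0∞) ^ 3 * μ (ball x (s / 2)) + (c : ℝ≥0∞) ^ 3 * μ (ball y (s / 4)) := by
          exact add_le_add_right h5 _
      _ = (c : ℝ≥0∞) ^ 3 * (μ (ball x (s / 2)) + μ (ball y (s / 4))) := by ring
      _ ≤ (c : ℝ≥0∞) ^ 3 * μ (ball x s) := mul_le_mul_right h3 _
  have hne0 : ((c : ℝ≥0∞) ^ 3 + 1) ≠ 0 := by simp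
  have hnetop : ((c : ℝ≥0∞) ^ 3 + 1) ≠ ∞ := by
    simp [ENNReal.add_ne_top, ENNReal.pow_ne_top, ENNReal.coe_ne_top]
  have hdiv : μ (ball x (s / 2)) ≤ (c : ℝ≥0∞) ^ 3 * μ (ball x s) / ((c : ℝ≥0∞) ^ 3 + 1) := by
    rw [ENNReal.le_div_iff_mul_le (Or.inl hne0) (Or.inl hnetop)]
    exact key
  have hcoe : ((c ^ 3 / (c ^ 3 + 1) : ℝ≥0) : ℝ≥0∞) = (c : ℝ≥0∞) ^ 3 / ((c : ℝ≥0∞) ^ 3 + 1) := by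
    rw [ENNReal.coe_div (by positivity)]
    push_cast
    ring_nf
  rw [hcoe]
  calc μ (ball x (s / 2)) ≤ (c : ℝ≥0∞) ^ 3 * μ (ball x s) / ((c : ℝ≥0∞) ^ 3 + 1) := hdiv
    _ = (c : ℝ≥0∞) ^ 3 / ((c : ℝ≥0∞) ^ 3 + 1) * μ (ball x s) := by
        rw [div_eq_mul_inv, div_eq_mul_inv, mul_right_comm]

theorem stmt1 {X : Type*} [MetricSpace X] [MeasurableSpace X] [BorelSpace X]
    [Nontrivial X] [ConnectedSpace X]
    (μ : Measure X)
    (hpos : ∀ (x : X) (r : ℝ), 0 < r → 0 < μ (ball x r))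
    (hfin : ∀ (x : X) (r : ℝ), μ (ball x r) < ∞)
    (c : ℝ≥0) (hc : 1 < c)
    (hdbl : ∀ (x : X) (r : ℝ), 0 < r → μ (ball x (2 * r)) ≤ (c : ℝ≥0∞) * μ (ball x r)) :
    ∃ σ cσ : ℝ, 0 < σ ∧ 0 < cσ ∧
      ∀ (x : X) (r R : ℝ), 0 < r → r < R →
        ENNReal.ofReal R ≤ 2 * EMetric.diam (univ : Set X) →
        μ (ball x r) ≤ ENNReal.ofReal (cσ * (r / R) ^ σ) * μ (ball x R) := by
  set θ : ℝ≥0 := c ^ 3 / (c ^ 3 + 1) with hθdef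
  have hcR : (1 : ℝ) < (c : ℝ) := hc
  have hθR : (θ : ℝ) = (c : ℝ) ^ 3 / ((c : ℝ) ^ 3 + 1) := by
    rw [hθdef]; push_cast [NNReal.coe_div]; ring
  have hc3pos : (0 : ℝ) < (c : ℝ) ^ 3 := by positivity
  have hθpos : (0 : ℝ) < (θ : ℝ) := by rw [hθR]; positivity
  have hθlt : (θ : ℝ) < 1 := by
    rw [hθR, div_lt_one (by linarith)]; linarith
  have hθinv : 1 < (θ : ℝ)⁻¹ := one_lt_inv_iff₀.mpr ⟨hθpos, hθlt⟩
  set σ : ℝ := Real.logb 2 (θ : ℝ)⁻¹ with hσdef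
  have hσpos : 0 < σ := Real.logb_pos (by norm_num) hθinv
  have h2σ : (2 : ℝ) ^ σ = (θ : ℝ)⁻¹ :=
    Real.rpow_logb (by norm_num) (by norm_num) (by positivity)
  refine ⟨σ, ((θ : ℝ)⁻¹) ^ 3, hσpos, by positivity, ?_⟩
  intro x r R hr hrR hdiam
  have hR : 0 < R := hr.trans hrR
  -- key real inequality
  have hkey : ∀ n : ℕ, ((2 : ℝ) ^ (n + 3))⁻¹ ≤ r / R →
      (θ : ℝ) ^ n ≤ ((θ : ℝ)⁻¹) ^ 3 * (r / R) ^ σ := by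
    intro n hn
    have hb : (0 : ℝ) < ((2 : ℝ) ^ (n + 3))⁻¹ := by positivity
    have h1 : (((2 : ℝ) ^ (n + 3))⁻¹) ^ σ ≤ (r / R) ^ σ :=
      Real.rpow_le_rpow hb.le hn hσpos.le
    have h2 : (((2 : ℝ) ^ (n + 3))⁻¹) ^ σ = (θ : ℝ) ^ (n + 3) := by
      have e1 : ((2 : ℝ) ^ (n + 3))⁻¹ = (2 : ℝ) ^ (-((n : ℝ) + 3)) := by
        rw [← Real.rpow_natCast (2 : ℝ) (n + 3), ← Real.rpow_neg (by norm_num)]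
        push_cast
        ring_nf
      have e2 : (θ : ℝ) = (2 : ℝ) ^ (-σ) := by
        rw [Real.rpow_neg (by norm_num), h2σ, inv_inv]
      rw [e1, e2, ← Real.rpow_natCast ((2:ℝ) ^ (-σ)) (n + 3),
        ← Real.rpow_mul (by norm_num), ← Real.rpow_mul (by norm_num)]
      congr 1
      push_cast
      ring
    have h3 : ((θ : ℝ)⁻¹) ^ 3 * (θ : ℝ) ^ (n + 3) = (θ : ℝ) ^ n := by
      field_simp
      ring
    calc (θ : ℝ) ^ n = ((θ : ℝ)⁻¹) ^ 3 * (θ : ℝ) ^ (n + 3) := h3.symm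
      _ ≤ ((θ : ℝ)⁻¹) ^ 3 * (r / R) ^ σ := by
          rw [← h2]
          exact mul_le_mul_of_nonneg_left h1 (by positivity)
  -- iteration
  have iter : ∀ n : ℕ, μ (ball x (R / 4 / 2 ^ n)) ≤ (θ : ℝ≥0∞) ^ n * μ (ball x (R / 4)) := by
    intro n
    induction n with
    | zero => simp
    | succ n ih =>
      set s : ℝ := R / 4 / 2 ^ n with hsdef
      have hs : 0 < s := by positivity
      have hsle : s ≤ R / 4 := by
        rw [hsdef]
        apply div_le_self (by positivity)
        exact_mod_cast Nat.one_le_two_pow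
      have h34 : 3 * s / 4 < R / 4 := by linarith
      obtain ⟨y, hy⟩ := exists_dist_eq' x hR hdiam (by positivity) h34
      have step := rev_dbl' μ c hc hdbl x y hs hy
      have hhalf : R / 4 / 2 ^ (n + 1) = s / 2 := by
        rw [hsdef, pow_succ]
        ring
      rw [hhalf]
      calc μ (ball x (s / 2)) ≤ (θ : ℝ≥0∞) * μ (ball x s) := step
        _ ≤ (θ : ℝ≥0∞) * ((θ : ℝ≥0∞) ^ n * μ (ball x (R / 4))) := mul_le_mul_right ih _
        _ = (θ : ℝ≥0∞) ^ (n + 1) * μ (ball x (R / 4)) := by ring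
  -- convert pow bound to ofReal bound
  have hofReal : ∀ n : ℕ, ((2 : ℝ) ^ (n + 3))⁻¹ ≤ r / R →
      (θ : ℝ≥0∞) ^ n ≤ ENNReal.ofReal (((θ : ℝ)⁻¹) ^ 3 * (r / R) ^ σ) := by
    intro n hn
    have := hkey n hn
    calc (θ : ℝ≥0∞) ^ n = ENNReal.ofReal ((θ : ℝ) ^ n) := by
          rw [← ENNReal.coe_pow, ← NNReal.coe_pow, ENNReal.ofReal_coe_nnreal]
      _ ≤ ENNReal.ofReal (((θ : ℝ)⁻¹) ^ 3 * (r / R) ^ σ) := ENNReal.ofReal_le_ofReal this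
  by_cases hcase : R / 4 < r
  · have h1 : ((2 : ℝ) ^ (0 + 3))⁻¹ ≤ r / R := by
      rw [le_div_iff₀ hR]
      norm_num
      linarith
    have h2 := hofReal 0 h1
    rw [pow_zero] at h2
    calc μ (ball x r) ≤ μ (ball x R) := measure_mono (ball_subset_ball hrR.le)
      _ = 1 * μ (ball x R) := (one_mul _).symm
      _ ≤ ENNReal.ofReal (((θ : ℝ)⁻¹) ^ 3 * (r / R) ^ σ) * μ (ball x R) :=
          mul_le_mul_left h2 _
  · push_neg at hcase
    have hex : ∃ n : ℕ, R / 4 / 2 ^ (n + 1) < r := by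
      obtain ⟨n, hn⟩ := pow_unbounded_of_one_lt ((R / 4) / r) (by norm_num : (1:ℝ) < 2)
      refine ⟨n, ?_⟩
      have h2n : (0:ℝ) < 2 ^ n := by positivity
      have : R / 4 / 2 ^ n < r := by
        rw [div_lt_iff₀ h2n]
        rw [div_lt_iff₀ hr] at hn
        linarith [hn]
      refine lt_of_le_of_lt ?_ this
      apply div_le_div_of_nonneg_left (by positivity) h2n
      exact pow_le_pow_right₀ (by norm_num) (Nat.le_succ n)
    set n : ℕ := Nat.find hex with hndef
    have hn1 : R / 4 / 2 ^ (n + 1) < r := Nat.find_spec hex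
    have hn2 : r ≤ R / 4 / 2 ^ n := by
      match hm : n, hndef with
      | 0, _ => simpa using hcase
      | m + 1, hdef =>
        have := Nat.find_min hex (by omega : m < Nat.find hex)
        push_neg at this
        exact this
    have h1 : ((2 : ℝ) ^ (n + 3))⁻¹ ≤ r / R := by
      have he : R / 4 / 2 ^ (n + 1) = R / 2 ^ (n + 3) := by
        rw [pow_add, pow_add]
        ring
      rw [he] at hn1
      rw [inv_eq_one_div, div_le_div_iff₀ (by positivity) hR]
      rw [div_lt_iff₀ (by positivity : (0:ℝ) < 2 ^ (n + 3))] at hn1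
      linarith
    calc μ (ball x r) ≤ μ (ball x (R / 4 / 2 ^ n)) := measure_mono (ball_subset_ball hn2)
      _ ≤ (θ : ℝ≥0∞) ^ n * μ (ball x (R / 4)) := iter n
      _ ≤ ENNReal.ofReal (((θ : ℝ)⁻¹) ^ 3 * (r / R) ^ σ) * μ (ball x R) :=
          mul_le_mul' (hofReal n h1) (measure_mono (ball_subset_ball (by linarith)))
end

section
/- Let 0 < β ≤ 1. If u : X → ℝ is a bounded β-Hölder function with Hajłasz β-gradient g_u, and ψ : X → ℝ is a bounded β-Hölder function with constant κ ≥ 0, then the product uψ is β-Hölder and the function (g_u ‖ψ‖_∞ + κ|u|)·χ_{ψ≠0} is a Hajłasz β-gradient of uψ. -/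
open MeasureTheory Metric Set ENNReal NNReal Filter Topology

/-- `u` is `β`-Hölder with constant `κ`. -/
def IsHolderWith {X : Type*} [MetricSpace X] (κ β : ℝ) (u : X → ℝ) : Prop :=
  ∀ x y, |u x - u y| ≤ κ * dist x y ^ β

/-- `g` is a Hajłasz `β`-gradient of `u`. -/
def IsHajlaszGradient {X : Type*} [MetricSpace X] [MeasurableSpace X]
    (μ : Measure X) (β : ℝ) (u : X → ℝ) (g : X → ℝ≥0∞) : Prop :=
  Measurable g ∧ ∃ N : Set X, μ N = 0 ∧ ∀ x ∉ N, ∀ y ∉ N,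
    ENNReal.ofReal |u x - u y| ≤ ENNReal.ofReal (dist x y ^ β) * (g x + g y)

lemma continuous_of_holder {X : Type*} [MetricSpace X] {β : ℝ} (hβ : 0 < β)
    {c : ℝ} {u : X → ℝ} (h : ∀ x y, |u x - u y| ≤ c * dist x y ^ β) :
    Continuous u := by
  have hc : ∀ x y : X, |u x - u y| ≤ |c| * dist x y ^ β := fun x y =>
    (h x y).trans (mul_le_mul_of_nonneg_right (le_abs_self c)
      (Real.rpow_nonneg dist_nonneg β))
  rw [continuous_iff_continuousAt]
  intro x
  rw [ContinuousAt, tendsto_iff_dist_tendsto_zero]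
  have hd : Tendsto (fun y : X => dist y x) (𝓝 x) (𝓝 0) := by
    have := (continuous_id.dist (continuous_const (y := x))).tendsto x
    simpa using this
  have h2 : Tendsto (fun y : X => |c| * dist y x ^ β) (𝓝 x) (𝓝 0) := by
    have h3 := (Real.continuousAt_rpow_const 0 β (Or.inr hβ.le)).tendsto.comp hd
    rw [Real.zero_rpow hβ.ne'] at h3
    simpa using h3.const_mul |c|
  exact squeeze_zero (fun y => dist_nonneg)
    (fun y => by rw [Real.dist_eq]; exact hc y x) h2

theorem stmt2 {X : Type*} [MetricSpace X] [MeasurableSpace X] [BorelSpace X]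
    (μ : Measure X) (β : ℝ) (hβ : 0 < β) (hβ1 : β ≤ 1)
    (u ψ : X → ℝ) (g_u : X → ℝ≥0∞) (κ Mu Mψ : ℝ)
    (hu : ∃ κu, IsHolderWith κu β u) (hub : ∀ x, |u x| ≤ Mu)
    (hgu : IsHajlaszGradient μ β u g_u)
    (hψ : IsHolderWith κ β ψ) (hκ : 0 ≤ κ) (hψb : ∀ x, |ψ x| ≤ Mψ) :
    (∃ κ', IsHolderWith κ' β (fun x => u x * ψ x)) ∧
    IsHajlaszGradient μ β (fun x => u x * ψ x)
      (fun x => if ψ x ≠ 0 then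
          g_u x * ENNReal.ofReal (sSup (range fun y => |ψ y|)) + ENNReal.ofReal (κ * |u x|)
        else 0) := by
  obtain ⟨κu, hκu⟩ := hu
  set M : ℝ := sSup (range fun y => |ψ y|) with hMdef
  have hbdd : BddAbove (range fun y => |ψ y|) := ⟨Mψ, by rintro _ ⟨y, rfl⟩; exact hψb y⟩
  have hM : ∀ x, |ψ x| ≤ M := fun x => le_csSup hbdd (mem_range_self x)
  have hdβ : ∀ x y : X, (0:ℝ) ≤ dist x y ^ β := fun x y => Real.rpow_nonneg dist_nonneg β
  constructor
  · -- Hölder part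
    refine ⟨|κu| * Mψ + κ * Mu, fun x y => ?_⟩
    have hMu : 0 ≤ Mu := (abs_nonneg _).trans (hub x)
    have hMψ : 0 ≤ Mψ := (abs_nonneg _).trans (hψb x)
    have key : |u x * ψ x - u y * ψ y| ≤ |u x - u y| * |ψ x| + |u y| * |ψ x - ψ y| := by
      have : u x * ψ x - u y * ψ y = (u x - u y) * ψ x + u y * (ψ x - ψ y) := by ring
      rw [this]
      exact (abs_add_le _ _).trans (by rw [abs_mul, abs_mul])
    refine key.trans ?_
    rw [add_mul]
    refine add_le_add ?_ ?_
    · calc |u x - u y| * |ψ x| ≤ (|κu| * dist x y ^ β) * Mψ := by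
            apply mul_le_mul _ (hψb x) (abs_nonneg _)
              (mul_nonneg (abs_nonneg _) (hdβ x y))
            exact (hκu x y).trans (mul_le_mul_of_nonneg_right (le_abs_self _) (hdβ x y))
        _ = |κu| * Mψ * dist x y ^ β := by ring
    · calc |u y| * |ψ x - ψ y| ≤ Mu * (κ * dist x y ^ β) :=
            mul_le_mul (hub y) (hψ x y) (abs_nonneg _) hMu
        _ = κ * Mu * dist x y ^ β := by ring
  · -- Hajłasz gradient part
    obtain ⟨hgmeas, N, hN, hN2⟩ := hgu
    have hucont : Continuous u := continuous_of_holder hβ hκu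
    have hψcont : Continuous ψ := continuous_of_holder hβ hψ
    constructor
    · have hs : MeasurableSet {x : X | ψ x ≠ 0} :=
        (hψcont.measurable (measurableSet_singleton 0).compl)
      refine Measurable.ite hs ?_ measurable_const
      exact (hgmeas.mul_const _).add
        (ENNReal.measurable_ofReal.comp ((continuous_const.mul hucont.abs).measurable))
    · refine ⟨N, hN, fun x hx y hy => ?_⟩
      have hineq := hN2 x hx y hy
      set G : X → ℝ≥0∞ := fun x => if ψ x ≠ 0 then
          g_u x * ENNReal.ofReal M + ENNReal.ofReal (κ * |u x|) else 0 with hG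
      show ENNReal.ofReal |u x * ψ x - u y * ψ y| ≤ ENNReal.ofReal (dist x y ^ β) * (G x + G y)
      by_cases hpx : ψ x = 0 <;> by_cases hpy : ψ y = 0
      · simp [hpx, hpy]
      · -- ψ x = 0, ψ y ≠ 0
        have hGy : ENNReal.ofReal (κ * |u y|) ≤ G y := by
          simp only [hG, if_pos hpy]; exact le_add_self
        have h1 : |u x * ψ x - u y * ψ y| ≤ κ * |u y| * dist x y ^ β := by
          have heq : |u x * ψ x - u y * ψ y| = |u y| * |ψ y - ψ x| := by
            rw [hpx, mul_zero, zero_sub, abs_neg, abs_mul]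
            rw [sub_zero]
          rw [heq]
          calc |u y| * |ψ y - ψ x| ≤ |u y| * (κ * dist y x ^ β) :=
                mul_le_mul_of_nonneg_left (hψ y x) (abs_nonneg _)
            _ = κ * |u y| * dist x y ^ β := by rw [dist_comm]; ring
        calc ENNReal.ofReal |u x * ψ x - u y * ψ y|
            ≤ ENNReal.ofReal (dist x y ^ β * (κ * |u y|)) := by
              apply ENNReal.ofReal_le_ofReal; linarith [h1]
          _ = ENNReal.ofReal (dist x y ^ β) * ENNReal.ofReal (κ * |u y|) :=
              ENNReal.ofReal_mul (hdβ x y)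
          _ ≤ ENNReal.ofReal (dist x y ^ β) * (G x + G y) := by
              apply mul_le_mul_right (hGy.trans le_add_self)
      · -- ψ x ≠ 0, ψ y = 0
        have hGx : ENNReal.ofReal (κ * |u x|) ≤ G x := by
          simp only [hG, if_pos hpx]; exact le_add_self
        have h1 : |u x * ψ x - u y * ψ y| ≤ κ * |u x| * dist x y ^ β := by
          have heq : |u x * ψ x - u y * ψ y| = |u x| * |ψ x - ψ y| := by
            rw [hpy, mul_zero, sub_zero, abs_mul]
            rw [sub_zero]
          rw [heq]
          calc |u x| * |ψ x - ψ y| ≤ |u x| * (κ * dist x y ^ β) :=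
                mul_le_mul_of_nonneg_left (hψ x y) (abs_nonneg _)
            _ = κ * |u x| * dist x y ^ β := by ring
        calc ENNReal.ofReal |u x * ψ x - u y * ψ y|
            ≤ ENNReal.ofReal (dist x y ^ β * (κ * |u x|)) := by
              apply ENNReal.ofReal_le_ofReal; linarith [h1]
          _ = ENNReal.ofReal (dist x y ^ β) * ENNReal.ofReal (κ * |u x|) :=
              ENNReal.ofReal_mul (hdβ x y)
          _ ≤ ENNReal.ofReal (dist x y ^ β) * (G x + G y) := by
              apply mul_le_mul_right (hGx.trans (le_add_of_nonneg_right zero_le))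
      · -- both nonzero
        have hGx : G x = g_u x * ENNReal.ofReal M + ENNReal.ofReal (κ * |u x|) := if_pos hpx
        have hGy : G y = g_u y * ENNReal.ofReal M + ENNReal.ofReal (κ * |u y|) := if_pos hpy
        have key : |u x * ψ x - u y * ψ y| ≤ |u x - u y| * M + κ * |u y| * dist x y ^ β := by
          have h0 : u x * ψ x - u y * ψ y = (u x - u y) * ψ x + u y * (ψ x - ψ y) := by ring
          rw [h0]
          refine (abs_add_le _ _).trans ?_
          rw [abs_mul, abs_mul]
          refine add_le_add ?_ ?_
          · exact mul_le_mul_of_nonneg_left (hM x) (abs_nonneg _)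
          · calc |u y| * |ψ x - ψ y| ≤ |u y| * (κ * dist x y ^ β) :=
                  mul_le_mul_of_nonneg_left (hψ x y) (abs_nonneg _)
              _ = κ * |u y| * dist x y ^ β := by ring
        have hM0 : 0 ≤ M := (abs_nonneg _).trans (hM x)
        calc ENNReal.ofReal |u x * ψ x - u y * ψ y|
            ≤ ENNReal.ofReal (|u x - u y| * M) + ENNReal.ofReal (κ * |u y| * dist x y ^ β) := by
              refine (ENNReal.ofReal_le_ofReal key).trans ?_
              exact ENNReal.ofReal_add_le
          _ ≤ ENNReal.ofReal (dist x y ^ β) * (g_u x + g_u y) * ENNReal.ofReal M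
              + ENNReal.ofReal (dist x y ^ β) * ENNReal.ofReal (κ * |u y|) := by
              refine add_le_add ?_ ?_
              · rw [ENNReal.ofReal_mul (abs_nonneg _)]
                exact mul_le_mul_left hineq _
              · rw [show κ * |u y| * dist x y ^ β = dist x y ^ β * (κ * |u y|) by ring,
                  ENNReal.ofReal_mul (hdβ x y)]
          _ ≤ ENNReal.ofReal (dist x y ^ β) * (G x + G y) := by
              rw [hGx, hGy]
              rw [mul_assoc]
              rw [← mul_add]
              apply mul_le_mul_right
              rw [add_mul]
              calc g_u x * ENNReal.ofReal M + g_u y * ENNReal.ofReal M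
                    + ENNReal.ofReal (κ * |u y|)
                  = g_u x * ENNReal.ofReal M
                    + (g_u y * ENNReal.ofReal M + ENNReal.ofReal (κ * |u y|)) := by
                    rw [add_assoc]
                _ ≤ (g_u x * ENNReal.ofReal M + ENNReal.ofReal (κ * |u x|))
                    + (g_u y * ENNReal.ofReal M + ENNReal.ofReal (κ * |u y|)) :=
                    add_le_add le_self_add le_rfl
end

section
/- Let 0 < β < η and let f be a nonnegative measurable function on X such that the Riesz potential I_β f(x) = ∫_X f(y) d(x,y)^β / μ(B(x,d(x,y))) dμ(y) is finite everywhere. Assume the kernel estimate: there is c_K > 0 such that for all w ≠ y in X and all z ∈ X ∖ B(w, 2d(w,y)), |d(w,z)^β/μ(B(w,d(w,z))) − d(y,z)^β/μ(B(y,d(y,z)))| ≤ c_K d(w,y)^η / (d(w,z)^{η−β} μ(B(w,d(w,z)))). Then there is a constant C₁ = C(c_μ,β,η,c_K) such that |I_β f(w) − I_β f(y)| ≤ C₁ d(w,y)^β (Mf(w) + Mf(y)) for every w, y ∈ X; in particular C₁ Mf is a Hajłasz β-gradient of I_β f. -/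
open MeasureTheory Metric Set ENNReal NNReal

/-- The Riesz kernel of order `β`: `d(x,y)^β / μ(B(x,d(x,y)))`. -/
noncomputable def rieszKernel {X : Type*} [MetricSpace X] [MeasurableSpace X]
    (μ : Measure X) (β : ℝ) (x y : X) : ℝ≥0∞ :=
  ENNReal.ofReal (dist x y ^ β) / μ (ball x (dist x y))

/-- The Riesz potential of order `β`. -/
noncomputable def rieszPotential {X : Type*} [MetricSpace X] [MeasurableSpace X]
    (μ : Measure X) (β : ℝ) (f : X → ℝ≥0∞) (x : X) : ℝ≥0∞ :=
  ∫⁻ y, f y * rieszKernel μ β x y ∂μ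

/-- The non-centered Hardy–Littlewood maximal function. -/
noncomputable def maximalFn {X : Type*} [MetricSpace X] [MeasurableSpace X]
    (μ : Measure X) (f : X → ℝ≥0∞) (x : X) : ℝ≥0∞ :=
  ⨆ (c : X) (r : ℝ) (_ : x ∈ ball c r), (μ (ball c r))⁻¹ * ∫⁻ y in ball c r, f y ∂μ

section Aux
variable {X : Type*} [MetricSpace X] [MeasurableSpace X] [BorelSpace X] (μ : Measure X)

lemma stmt5_meas_ballfun (x : X) : Measurable (fun z : X => μ (ball x (dist x z))) := by
  have h : Monotone (fun r : ℝ => μ (ball x r)) := fun a b hab => measure_mono (ball_subset_ball hab)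
  have h2 : Measurable (fun r : ℝ => μ (ball x r)) := h.measurable
  exact h2.comp (continuous_const.dist continuous_id).measurable

lemma stmt5_meas_kernel (β : ℝ) (hβ : 0 ≤ β) (x : X) : Measurable (rieszKernel μ β x) := by
  unfold rieszKernel
  exact (ENNReal.measurable_ofReal.comp
    ((Real.continuous_rpow_const hβ).measurable.comp
      (continuous_const.dist continuous_id).measurable)).div (stmt5_meas_ballfun μ x)

lemma stmt5_le_maximal (f : X → ℝ≥0∞) (x c' : X) (r : ℝ) (hx : x ∈ ball c' r) :
    (μ (ball c' r))⁻¹ * ∫⁻ y in ball c' r, f y ∂μ ≤ maximalFn μ f x :=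
  le_iSup_of_le c' (le_iSup_of_le r (le_iSup_of_le hx le_rfl))

lemma stmt5_meas_maximal (f : X → ℝ≥0∞) : Measurable (maximalFn μ f) := by
  apply measurable_of_Ioi
  intro t
  have : IsOpen (maximalFn μ f ⁻¹' Ioi t) := by
    rw [isOpen_iff_mem_nhds]
    intro x hx
    simp only [mem_preimage, mem_Ioi, maximalFn, lt_iSup_iff] at hx
    obtain ⟨c', r, hmem, hlt⟩ := hx
    refine Filter.mem_of_superset (isOpen_ball.mem_nhds hmem) ?_
    intro x' hx'
    simp only [mem_preimage, mem_Ioi]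
    exact lt_of_lt_of_le hlt (stmt5_le_maximal μ f x' c' r hx')
  exact this.measurableSet



lemma stmt5_pow_rpow (t : ℝ) (ht : 0 ≤ t) (b : ℝ) (j : ℕ) : ((t ^ j : ℝ)) ^ b = (t ^ b) ^ j := by
  rw [← Real.rpow_natCast t j, ← Real.rpow_mul ht, mul_comm, Real.rpow_mul ht, Real.rpow_natCast]

lemma stmt5_eq1 (R β : ℝ) (hR : 0 < R) (j : ℕ) :
    (R / 2 ^ j) ^ β = R ^ β * ((2:ℝ) ^ (-β)) ^ j := by
  rw [Real.div_rpow hR.le (by positivity), stmt5_pow_rpow 2 (by norm_num) β j,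
    div_eq_mul_inv, ← inv_pow, ← Real.rpow_neg (by norm_num)]

lemma stmt5_eq2 (d β η cK : ℝ) (hd : 0 < d) (j : ℕ) :
    cK * d ^ η / (2 * d * 2 ^ j) ^ (η - β) = cK * 2 ^ (β - η) * d ^ β * ((2:ℝ) ^ (β - η)) ^ j := by
  have h1 : ((2:ℝ) * d * 2 ^ j) ^ (η - β) = 2 ^ (η-β) * d ^ (η-β) * ((2:ℝ)^(η-β)) ^ j := by
    rw [Real.mul_rpow (by positivity) (by positivity), Real.mul_rpow (by norm_num) hd.le,
      stmt5_pow_rpow 2 (by norm_num)]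
  rw [h1, div_eq_mul_inv]
  rw [show (β - η) = -(η - β) by ring]
  rw [Real.rpow_neg (by norm_num : (0:ℝ) ≤ 2)]
  have hdb : d ^ β = d ^ η * (d ^ (η - β))⁻¹ := by
    rw [← Real.rpow_neg hd.le, ← Real.rpow_add hd]; ring_nf
  rw [hdb]; ring

lemma stmt5_inv_le {a b C : ℝ≥0∞} (ha : a ≠ 0) (hb : b ≠ ∞) (hC : C ≠ 0) (h : b ≤ C * a) :
    a⁻¹ ≤ C * b⁻¹ := by
  rcases eq_or_ne b 0 with rb | rb
  · rw [rb]; simp [ENNReal.mul_top hC]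
  · have e1 : a⁻¹ = b⁻¹ * (b * a⁻¹) := by
      rw [← mul_assoc, ENNReal.inv_mul_cancel rb hb, one_mul]
    rw [e1]
    calc b⁻¹ * (b * a⁻¹) ≤ b⁻¹ * (C * a * a⁻¹) := mul_le_mul_right (mul_le_mul_left h _) _
      _ = b⁻¹ * C * (a * a⁻¹) := by ring
      _ ≤ b⁻¹ * C * 1 := mul_le_mul_right (ENNReal.mul_inv_le_one a) _
      _ = C * b⁻¹ := by ring

lemma stmt5_abs_le {a b D : ℝ≥0∞} (ha : a ≠ ∞) (hb : b ≠ ∞) (h1 : a ≤ b + D) (h2 : b ≤ a + D) :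
    ENNReal.ofReal |a.toReal - b.toReal| ≤ D := by
  rcases eq_or_ne D ∞ with hD | hD
  · rw [hD]; exact le_top
  · have t1 : a.toReal ≤ b.toReal + D.toReal := by
      have := ENNReal.toReal_mono (by finiteness) h1
      rwa [ENNReal.toReal_add hb hD] at this
    have t2 : b.toReal ≤ a.toReal + D.toReal := by
      have := ENNReal.toReal_mono (by finiteness) h2
      rwa [ENNReal.toReal_add ha hD] at this
    rw [← ENNReal.ofReal_toReal hD]
    exact ENNReal.ofReal_le_ofReal (abs_le.2 ⟨by linarith, by linarith⟩)

lemma stmt5_ann1 {R d : ℝ} (hR : 0 < R) (hd : 0 < d) (hdR : d < R) :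
    ∃ j : ℕ, R / 2 ^ (j+1) ≤ d ∧ d < R / 2 ^ j := by
  classical
  have hex : ∃ n, R / 2 ^ (n+1) ≤ d := by
    obtain ⟨n, hn⟩ := pow_unbounded_of_one_lt (R / d) (one_lt_two (α := ℝ))
    refine ⟨n, ?_⟩
    rw [div_le_iff₀ (by positivity)]
    have : R / d ≤ 2 ^ (n+1) := le_of_lt (lt_of_lt_of_le hn (by
      apply pow_le_pow_right₀ (by norm_num) (Nat.le_succ n)))
    calc R = (R / d) * d := by field_simp
      _ ≤ 2 ^ (n+1) * d := by nlinarith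
      _ = d * 2 ^ (n+1) := by ring
  refine ⟨Nat.find hex, Nat.find_spec hex, ?_⟩
  rcases Nat.eq_zero_or_pos (Nat.find hex) with h0 | h0
  · rw [h0]; simpa using hdR
  · obtain ⟨k, hk⟩ := Nat.exists_eq_succ_of_ne_zero h0.ne'
    have := Nat.find_min hex (m := k) (by omega)
    rw [hk]
    push_neg at this
    exact this

lemma stmt5_ann2 {R d : ℝ} (hR : 0 < R) (hdR : R ≤ d) :
    ∃ j : ℕ, R * 2 ^ j ≤ d ∧ d < R * 2 ^ (j+1) := by
  classical
  have hex : ∃ n, d < R * 2 ^ (n+1) := by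
    obtain ⟨n, hn⟩ := pow_unbounded_of_one_lt (d / R) (one_lt_two (α := ℝ))
    refine ⟨n, ?_⟩
    have : d / R < 2 ^ (n+1) := lt_of_lt_of_le hn (by
      apply pow_le_pow_right₀ (by norm_num) (Nat.le_succ n))
    calc d = (d / R) * R := by field_simp
      _ < 2 ^ (n+1) * R := by nlinarith [lt_of_lt_of_le hR hdR]
      _ = R * 2 ^ (n+1) := by ring
  refine ⟨Nat.find hex, ?_, Nat.find_spec hex⟩
  rcases Nat.eq_zero_or_pos (Nat.find hex) with h0 | h0
  · rw [h0]; simpa using hdR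
  · obtain ⟨k, hk⟩ := Nat.exists_eq_succ_of_ne_zero h0.ne'
    have := Nat.find_min hex (m := k) (by omega)
    rw [hk]
    push_neg at this
    exact this

variable (hpos : ∀ (x : X) (r : ℝ), 0 < r → 0 < μ (ball x r))
  (hfin : ∀ (x : X) (r : ℝ), μ (ball x r) < ∞)
  {c : ℝ≥0} (hc : 1 < c)
  (hdbl : ∀ (x : X) (r : ℝ), 0 < r → μ (ball x (2 * r)) ≤ (c : ℝ≥0∞) * μ (ball x r))
  {f : X → ℝ≥0∞} (hf : Measurable f)

include hpos hfin hc hdbl hf in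
lemma stmt5_annulus (x : X) (r a : ℝ) (hr : 0 < r) (G : X → ℝ≥0∞)
    (hG : ∀ z ∈ ball x (2*r) \ ball x r, G z ≤ ENNReal.ofReal a / μ (ball x r)) :
    ∫⁻ z in ball x (2*r) \ ball x r, f z * G z ∂μ ≤
      (c : ℝ≥0∞) * ENNReal.ofReal a * maximalFn μ f x := by
  have hS : MeasurableSet (ball x (2*r) \ ball x r) :=
    measurableSet_ball.diff measurableSet_ball
  have hinv : (μ (ball x r))⁻¹ ≤ (c : ℝ≥0∞) * (μ (ball x (2*r)))⁻¹ :=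
    stmt5_inv_le (hpos x r hr).ne' (hfin x (2*r)).ne
      (by simpa using (zero_lt_one.trans hc).ne') (hdbl x r hr)
  calc ∫⁻ z in ball x (2*r) \ ball x r, f z * G z ∂μ
      ≤ ∫⁻ z in ball x (2*r) \ ball x r, f z * (ENNReal.ofReal a / μ (ball x r)) ∂μ := by
        refine lintegral_mono_ae ?_
        exact (ae_restrict_iff' hS).2 (Filter.Eventually.of_forall
          (fun z hz => mul_le_mul_right (hG z hz) _))
    _ ≤ ∫⁻ z in ball x (2*r), f z * (ENNReal.ofReal a / μ (ball x r)) ∂μ :=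
        lintegral_mono_set diff_subset
    _ = (∫⁻ z in ball x (2*r), f z ∂μ) * (ENNReal.ofReal a / μ (ball x r)) :=
        lintegral_mul_const _ hf
    _ ≤ (∫⁻ z in ball x (2*r), f z ∂μ) * (ENNReal.ofReal a * ((c : ℝ≥0∞) * (μ (ball x (2*r)))⁻¹)) := by
        rw [div_eq_mul_inv]
        exact mul_le_mul_right (mul_le_mul_right hinv _) _
    _ = (c : ℝ≥0∞) * ENNReal.ofReal a * ((μ (ball x (2*r)))⁻¹ * ∫⁻ z in ball x (2*r), f z ∂μ) := by
        ring
    _ ≤ (c : ℝ≥0∞) * ENNReal.ofReal a * maximalFn μ f x :=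
        mul_le_mul_right (stmt5_le_maximal μ f x x (2*r) (mem_ball_self (by positivity))) _

include hpos hfin hc hdbl hf in
lemma stmt5_near (β : ℝ) (hβ : 0 < β) (x : X) (R : ℝ) (hR : 0 < R) :
    ∫⁻ z in ball x R, f z * rieszKernel μ β x z ∂μ ≤
      (c : ℝ≥0∞) * (1 - ENNReal.ofReal ((2:ℝ) ^ (-β)))⁻¹ * ENNReal.ofReal (R ^ β) *
        maximalFn μ f x := by
  set r1 : ℝ≥0∞ := ENNReal.ofReal ((2:ℝ) ^ (-β)) with hr1
  set A : ℕ → Set X := fun j => ball x (2 * (R / 2 ^ (j+1))) \ ball x (R / 2 ^ (j+1)) with hA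
  have hhalf : ∀ j : ℕ, (2:ℝ) * (R / 2 ^ (j+1)) = R / 2 ^ j := by
    intro j; rw [pow_succ]; field_simp
  have hcov : ball x R ⊆ {x} ∪ ⋃ j, A j := by
    intro z hz
    rcases eq_or_ne z x with rfl | hzx
    · exact Or.inl rfl
    · refine Or.inr (mem_iUnion.2 ?_)
      have hd : 0 < dist z x := dist_pos.2 hzx
      have hdR : dist z x < R := mem_ball.1 hz
      obtain ⟨j, h1, h2⟩ := stmt5_ann1 hR hd hdR
      refine ⟨j, ⟨mem_ball.2 (by rw [hhalf j]; exact h2), fun hmem => ?_⟩⟩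
      exact absurd (mem_ball.1 hmem) (not_lt.2 h1)
  have hsingle : ∫⁻ z in {x}, f z * rieszKernel μ β x z ∂μ = 0 := by
    rw [lintegral_singleton]
    simp [rieszKernel, Real.zero_rpow hβ.ne']
  have hterm : ∀ j : ℕ, ∫⁻ z in A j, f z * rieszKernel μ β x z ∂μ ≤
      (c : ℝ≥0∞) * ENNReal.ofReal (R ^ β * ((2:ℝ) ^ (-β)) ^ j) * maximalFn μ f x := by
    intro j
    refine stmt5_annulus μ hpos hfin hc hdbl hf x (R / 2 ^ (j+1)) _ (by positivity) _ ?_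
    intro z hz
    obtain ⟨hz1, hz2⟩ := hz
    have hdle : dist x z ≤ R / 2 ^ j := by
      rw [dist_comm]
      exact le_of_lt (by rw [← hhalf j]; exact mem_ball.1 hz1)
    have hdge : R / 2 ^ (j+1) ≤ dist x z := by
      rw [dist_comm]; exact not_lt.1 (fun h => hz2 (mem_ball.2 h))
    unfold rieszKernel
    refine ENNReal.div_le_div ?_ ?_
    · refine ENNReal.ofReal_le_ofReal ?_
      rw [← stmt5_eq1 R β hR j]
      exact Real.rpow_le_rpow dist_nonneg hdle hβ.le
    · exact measure_mono (ball_subset_ball hdge)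
  calc ∫⁻ z in ball x R, f z * rieszKernel μ β x z ∂μ
      ≤ ∫⁻ z in {x} ∪ ⋃ j, A j, f z * rieszKernel μ β x z ∂μ := lintegral_mono_set hcov
    _ ≤ (∫⁻ z in {x}, f z * rieszKernel μ β x z ∂μ) +
          ∫⁻ z in ⋃ j, A j, f z * rieszKernel μ β x z ∂μ := lintegral_union_le _ _ _
    _ = ∫⁻ z in ⋃ j, A j, f z * rieszKernel μ β x z ∂μ := by rw [hsingle, zero_add]
    _ ≤ ∑' j, ∫⁻ z in A j, f z * rieszKernel μ β x z ∂μ := lintegral_iUnion_le _ _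
    _ ≤ ∑' j, (c : ℝ≥0∞) * ENNReal.ofReal (R ^ β * ((2:ℝ) ^ (-β)) ^ j) * maximalFn μ f x :=
        ENNReal.tsum_le_tsum hterm
    _ = ∑' j, ((c : ℝ≥0∞) * ENNReal.ofReal (R ^ β) * maximalFn μ f x) * r1 ^ j := by
        refine tsum_congr fun j => ?_
        rw [ENNReal.ofReal_mul (by positivity), ENNReal.ofReal_pow (by positivity)]
        ring
    _ = ((c : ℝ≥0∞) * ENNReal.ofReal (R ^ β) * maximalFn μ f x) * (1 - r1)⁻¹ := by
        rw [ENNReal.tsum_mul_left, ENNReal.tsum_geometric]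
    _ = (c : ℝ≥0∞) * (1 - r1)⁻¹ * ENNReal.ofReal (R ^ β) * maximalFn μ f x := by ring

include hpos hfin hc hdbl hf in
lemma stmt5_far (β η : ℝ) (hβ : 0 < β) (hβη : β < η) (cK : ℝ) (hcK : 0 < cK)
    (w : X) (d : ℝ) (hd : 0 < d) :
    ∫⁻ z in (ball w (2*d))ᶜ,
        f z * (ENNReal.ofReal (cK * d ^ η / dist w z ^ (η - β)) / μ (ball w (dist w z))) ∂μ ≤
      (c : ℝ≥0∞) * (1 - ENNReal.ofReal ((2:ℝ) ^ (β - η)))⁻¹ *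
        ENNReal.ofReal (cK * 2 ^ (β - η) * d ^ β) * maximalFn μ f w := by
  set r2 : ℝ≥0∞ := ENNReal.ofReal ((2:ℝ) ^ (β - η)) with hr2
  set A : ℕ → Set X := fun j => ball w (2 * (2 * d * 2 ^ j)) \ ball w (2 * d * 2 ^ j) with hA
  have hcov : (ball w (2*d))ᶜ ⊆ ⋃ j, A j := by
    intro z hz
    have hge : 2 * d ≤ dist z w := not_lt.1 (fun h => hz (mem_ball.2 h))
    obtain ⟨j, h1, h2⟩ := stmt5_ann2 (by positivity) hge
    refine mem_iUnion.2 ⟨j, ⟨mem_ball.2 ?_, fun hmem => ?_⟩⟩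
    · calc dist z w < 2 * d * 2 ^ (j+1) := h2
        _ = 2 * (2 * d * 2 ^ j) := by ring
    · exact absurd (mem_ball.1 hmem) (not_lt.2 h1)
  have hterm : ∀ j : ℕ, ∫⁻ z in A j,
      f z * (ENNReal.ofReal (cK * d ^ η / dist w z ^ (η - β)) / μ (ball w (dist w z))) ∂μ ≤
      (c : ℝ≥0∞) * ENNReal.ofReal ((cK * 2 ^ (β - η) * d ^ β) * ((2:ℝ) ^ (β - η)) ^ j) *
        maximalFn μ f w := by
    intro j
    refine stmt5_annulus μ hpos hfin hc hdbl hf w (2 * d * 2 ^ j) _ (by positivity) _ ?_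
    intro z hz
    obtain ⟨hz1, hz2⟩ := hz
    have hdge : 2 * d * 2 ^ j ≤ dist w z := by
      rw [dist_comm]; exact not_lt.1 (fun h => hz2 (mem_ball.2 h))
    refine ENNReal.div_le_div ?_ (measure_mono (ball_subset_ball hdge))
    refine ENNReal.ofReal_le_ofReal ?_
    rw [← stmt5_eq2 d β η cK hd j]
    have h1 : (0:ℝ) < (2 * d * 2 ^ j) ^ (η - β) := by positivity
    have h2 : (2 * d * 2 ^ j) ^ (η - β) ≤ dist w z ^ (η - β) :=
      Real.rpow_le_rpow (by positivity) hdge (by linarith)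
    exact div_le_div_of_nonneg_left (by positivity) h1 h2
  calc ∫⁻ z in (ball w (2*d))ᶜ,
        f z * (ENNReal.ofReal (cK * d ^ η / dist w z ^ (η - β)) / μ (ball w (dist w z))) ∂μ
      ≤ ∫⁻ z in ⋃ j, A j,
          f z * (ENNReal.ofReal (cK * d ^ η / dist w z ^ (η - β)) / μ (ball w (dist w z))) ∂μ :=
        lintegral_mono_set hcov
    _ ≤ ∑' j, ∫⁻ z in A j,
          f z * (ENNReal.ofReal (cK * d ^ η / dist w z ^ (η - β)) / μ (ball w (dist w z))) ∂μ :=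
        lintegral_iUnion_le _ _
    _ ≤ ∑' j, (c : ℝ≥0∞) * ENNReal.ofReal ((cK * 2 ^ (β - η) * d ^ β) * ((2:ℝ) ^ (β - η)) ^ j) *
          maximalFn μ f w := ENNReal.tsum_le_tsum hterm
    _ = ∑' j, ((c : ℝ≥0∞) * ENNReal.ofReal (cK * 2 ^ (β - η) * d ^ β) * maximalFn μ f w) * r2 ^ j := by
        refine tsum_congr fun j => ?_
        rw [ENNReal.ofReal_mul (by positivity), ENNReal.ofReal_pow (by positivity)]
        ring
    _ = ((c : ℝ≥0∞) * ENNReal.ofReal (cK * 2 ^ (β - η) * d ^ β) * maximalFn μ f w) * (1 - r2)⁻¹ := by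
        rw [ENNReal.tsum_mul_left, ENNReal.tsum_geometric]
    _ = (c : ℝ≥0∞) * (1 - r2)⁻¹ * ENNReal.ofReal (cK * 2 ^ (β - η) * d ^ β) * maximalFn μ f w := by
        ring

end Aux

theorem stmt5 {X : Type*} [MetricSpace X] [MeasurableSpace X] [BorelSpace X]
    (μ : Measure X)
    (hpos : ∀ (x : X) (r : ℝ), 0 < r → 0 < μ (ball x r))
    (hfin : ∀ (x : X) (r : ℝ), μ (ball x r) < ∞)
    (c : ℝ≥0) (hc : 1 < c)
    (hdbl : ∀ (x : X) (r : ℝ), 0 < r → μ (ball x (2 * r)) ≤ (c : ℝ≥0∞) * μ (ball x r))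
    (β η : ℝ) (hβ : 0 < β) (hβη : β < η)
    (f : X → ℝ≥0∞) (hf : Measurable f)
    (hfin' : ∀ x, rieszPotential μ β f x ≠ ∞)
    (cK : ℝ) (hcK : 0 < cK)
    (hker : ∀ w y : X, w ≠ y → ∀ z ∉ ball w (2 * dist w y),
      rieszKernel μ β w z ≤ rieszKernel μ β y z +
        ENNReal.ofReal (cK * dist w y ^ η / dist w z ^ (η - β)) / μ (ball w (dist w z)) ∧
      rieszKernel μ β y z ≤ rieszKernel μ β w z +
        ENNReal.ofReal (cK * dist w y ^ η / dist w z ^ (η - β)) / μ (ball w (dist w z))) :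
    ∃ C₁ : ℝ≥0, 0 < C₁ ∧
      (∀ w y : X,
        ENNReal.ofReal |(rieszPotential μ β f w).toReal - (rieszPotential μ β f y).toReal| ≤
          (C₁ : ℝ≥0∞) * ENNReal.ofReal (dist w y ^ β) * (maximalFn μ f w + maximalFn μ f y)) ∧
      IsHajlaszGradient μ β (fun x => (rieszPotential μ β f x).toReal)
        (fun x => (C₁ : ℝ≥0∞) * maximalFn μ f x) := by
  classical
  set S1 : ℝ≥0∞ := (1 - ENNReal.ofReal ((2:ℝ) ^ (-β)))⁻¹ with hS1
  set S2 : ℝ≥0∞ := (1 - ENNReal.ofReal ((2:ℝ) ^ (β - η)))⁻¹ with hS2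
  have hS1top : S1 ≠ ∞ := by
    have h1 : ENNReal.ofReal ((2:ℝ) ^ (-β)) < 1 :=
      ENNReal.ofReal_lt_one.2 (Real.rpow_lt_one_of_one_lt_of_neg one_lt_two (by linarith))
    rw [hS1]
    exact ENNReal.inv_ne_top.2 (by simp [tsub_eq_zero_iff_le, not_le.2 h1])
  have hS2top : S2 ≠ ∞ := by
    have h1 : ENNReal.ofReal ((2:ℝ) ^ (β - η)) < 1 :=
      ENNReal.ofReal_lt_one.2 (Real.rpow_lt_one_of_one_lt_of_neg one_lt_two (by linarith))
    rw [hS2]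
    exact ENNReal.inv_ne_top.2 (by simp [tsub_eq_zero_iff_le, not_le.2 h1])
  set K : ℝ≥0∞ := (c : ℝ≥0∞) * S1 * ENNReal.ofReal ((2:ℝ) ^ β) +
      (c : ℝ≥0∞) * S1 * ENNReal.ofReal ((3:ℝ) ^ β) +
      (c : ℝ≥0∞) * S2 * ENNReal.ofReal (cK * 2 ^ (β - η)) with hK
  have hKtop : K ≠ ∞ := by
    rw [hK]
    refine ENNReal.add_ne_top.2 ⟨ENNReal.add_ne_top.2 ⟨?_, ?_⟩, ?_⟩ <;>
      exact ENNReal.mul_ne_top (ENNReal.mul_ne_top ENNReal.coe_ne_top (by assumption))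
        ENNReal.ofReal_ne_top
  set C₁ : ℝ≥0 := K.toNNReal + 1 with hC₁
  have hKC : K ≤ (C₁ : ℝ≥0∞) := by
    rw [hC₁, ENNReal.coe_add, ENNReal.coe_toNNReal hKtop]
    exact le_self_add
  have main : ∀ w y : X,
      ENNReal.ofReal |(rieszPotential μ β f w).toReal - (rieszPotential μ β f y).toReal| ≤
        K * ENNReal.ofReal (dist w y ^ β) * (maximalFn μ f w + maximalFn μ f y) := by
    intro w y
    rcases eq_or_ne w y with rfl | hwy
    · simp
    · have hd : 0 < dist w y := dist_pos.2 hwy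
      set d := dist w y with hd0
      set B := ball w (2 * d) with hB
      have hBm : MeasurableSet B := measurableSet_ball
      set E : X → ℝ≥0∞ :=
        fun z => ENNReal.ofReal (cK * d ^ η / dist w z ^ (η - β)) / μ (ball w (dist w z)) with hE
      have hky : Measurable (fun z => f z * rieszKernel μ β y z) :=
        hf.mul (stmt5_meas_kernel μ β hβ.le y)
      have hkw : Measurable (fun z => f z * rieszKernel μ β w z) :=
        hf.mul (stmt5_meas_kernel μ β hβ.le w)
      set A1 := ∫⁻ z in B, f z * rieszKernel μ β w z ∂μ with hA1
      set A2 := ∫⁻ z in Bᶜ, f z * rieszKernel μ β w z ∂μ with hA2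
      set B1 := ∫⁻ z in B, f z * rieszKernel μ β y z ∂μ with hB1
      set B2 := ∫⁻ z in Bᶜ, f z * rieszKernel μ β y z ∂μ with hB2
      set EE := ∫⁻ z in Bᶜ, f z * E z ∂μ with hEE
      have hsplitw : rieszPotential μ β f w = A1 + A2 := (lintegral_add_compl _ hBm).symm
      have hsplity : rieszPotential μ β f y = B1 + B2 := (lintegral_add_compl _ hBm).symm
      have cross1 : A2 ≤ B2 + EE := by
        have hpt : ∀ z ∈ Bᶜ,
            f z * rieszKernel μ β w z ≤ f z * rieszKernel μ β y z + f z * E z := by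
          intro z hz
          have h := (hker w y hwy z hz).1
          calc f z * rieszKernel μ β w z
              ≤ f z * (rieszKernel μ β y z + E z) := mul_le_mul_right h _
            _ = f z * rieszKernel μ β y z + f z * E z := mul_add _ _ _
        calc A2 ≤ ∫⁻ z in Bᶜ, (f z * rieszKernel μ β y z + f z * E z) ∂μ :=
            lintegral_mono_ae ((ae_restrict_iff' hBm.compl).2 (Filter.Eventually.of_forall hpt))
          _ = B2 + EE := lintegral_add_left hky _
      have cross2 : B2 ≤ A2 + EE := by
        have hpt : ∀ z ∈ Bᶜ,
            f z * rieszKernel μ β y z ≤ f z * rieszKernel μ β w z + f z * E z := by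
          intro z hz
          have h := (hker w y hwy z hz).2
          calc f z * rieszKernel μ β y z
              ≤ f z * (rieszKernel μ β w z + E z) := mul_le_mul_right h _
            _ = f z * rieszKernel μ β w z + f z * E z := mul_add _ _ _
        calc B2 ≤ ∫⁻ z in Bᶜ, (f z * rieszKernel μ β w z + f z * E z) ∂μ :=
            lintegral_mono_ae ((ae_restrict_iff' hBm.compl).2 (Filter.Eventually.of_forall hpt))
          _ = A2 + EE := lintegral_add_left hkw _
      have bA1 : A1 ≤ (c : ℝ≥0∞) * S1 * ENNReal.ofReal ((2 * d) ^ β) * maximalFn μ f w :=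
        stmt5_near μ hpos hfin hc hdbl hf β hβ w (2 * d) (by positivity)
      have bB1 : B1 ≤ (c : ℝ≥0∞) * S1 * ENNReal.ofReal ((3 * d) ^ β) * maximalFn μ f y := by
        have hsub : B ⊆ ball y (3 * d) := by
          intro z hz
          rw [hB, mem_ball] at hz
          rw [mem_ball]
          calc dist z y ≤ dist z w + dist w y := dist_triangle z w y
            _ < 2 * d + d := add_lt_add_of_lt_of_le hz (le_of_eq hd0.symm)
            _ = 3 * d := by ring
        calc B1 ≤ ∫⁻ z in ball y (3 * d), f z * rieszKernel μ β y z ∂μ :=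
            lintegral_mono_set hsub
          _ ≤ _ := stmt5_near μ hpos hfin hc hdbl hf β hβ y (3 * d) (by positivity)
      have bEE : EE ≤ (c : ℝ≥0∞) * S2 * ENNReal.ofReal (cK * 2 ^ (β - η) * d ^ β) *
          maximalFn μ f w :=
        stmt5_far μ hpos hfin hc hdbl hf β η hβ hβη cK hcK w d hd
      have hIw : rieszPotential μ β f w ≤ rieszPotential μ β f y + (A1 + B1 + EE) := by
        rw [hsplitw, hsplity]
        calc A1 + A2 ≤ A1 + (B2 + EE) := add_le_add_right cross1 _
          _ = B2 + (A1 + EE) := by ring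
          _ ≤ (B1 + B2) + (A1 + (B1 + EE)) :=
            add_le_add (self_le_add_left _ _) (add_le_add_right (self_le_add_left _ _) _)
          _ = (B1 + B2) + (A1 + B1 + EE) := by ring
      have hIy : rieszPotential μ β f y ≤ rieszPotential μ β f w + (A1 + B1 + EE) := by
        rw [hsplitw, hsplity]
        calc B1 + B2 ≤ B1 + (A2 + EE) := add_le_add_right cross2 _
          _ = A2 + (B1 + EE) := by ring
          _ ≤ (A1 + A2) + (A1 + (B1 + EE)) :=
            add_le_add (self_le_add_left _ _) (self_le_add_left _ _)
          _ = (A1 + A2) + (A1 + B1 + EE) := by ring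
      have habs := stmt5_abs_le (hfin' w) (hfin' y) hIw hIy
      refine le_trans habs ?_
      have e2 : ENNReal.ofReal ((2 * d) ^ β) =
          ENNReal.ofReal ((2:ℝ) ^ β) * ENNReal.ofReal (d ^ β) := by
        rw [Real.mul_rpow (by norm_num) hd.le, ENNReal.ofReal_mul (by positivity)]
      have e3 : ENNReal.ofReal ((3 * d) ^ β) =
          ENNReal.ofReal ((3:ℝ) ^ β) * ENNReal.ofReal (d ^ β) := by
        rw [Real.mul_rpow (by norm_num) hd.le, ENNReal.ofReal_mul (by positivity)]
      have ef : ENNReal.ofReal (cK * 2 ^ (β - η) * d ^ β) =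
          ENNReal.ofReal (cK * 2 ^ (β - η)) * ENNReal.ofReal (d ^ β) :=
        ENNReal.ofReal_mul (by positivity)
      have hcoef1 : (c : ℝ≥0∞) * S1 * ENNReal.ofReal ((2:ℝ) ^ β) +
          (c : ℝ≥0∞) * S2 * ENNReal.ofReal (cK * 2 ^ (β - η)) ≤ K := by
        rw [hK]
        exact add_le_add_left (self_le_add_right _ _) _
      have hcoef2 : (c : ℝ≥0∞) * S1 * ENNReal.ofReal ((3:ℝ) ^ β) ≤ K := by
        rw [hK]
        exact le_add_of_le_of_nonneg (self_le_add_left _ _) (by positivity)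
      calc A1 + B1 + EE
          ≤ (c : ℝ≥0∞) * S1 * (ENNReal.ofReal ((2:ℝ) ^ β) * ENNReal.ofReal (d ^ β)) *
                maximalFn μ f w +
              (c : ℝ≥0∞) * S1 * (ENNReal.ofReal ((3:ℝ) ^ β) * ENNReal.ofReal (d ^ β)) *
                maximalFn μ f y +
              (c : ℝ≥0∞) * S2 * (ENNReal.ofReal (cK * 2 ^ (β - η)) * ENNReal.ofReal (d ^ β)) *
                maximalFn μ f w := by
            rw [← e2, ← e3, ← ef]
            exact add_le_add (add_le_add bA1 bB1) bEE
        _ = ((c : ℝ≥0∞) * S1 * ENNReal.ofReal ((2:ℝ) ^ β) +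
              (c : ℝ≥0∞) * S2 * ENNReal.ofReal (cK * 2 ^ (β - η))) * ENNReal.ofReal (d ^ β) *
                maximalFn μ f w +
              ((c : ℝ≥0∞) * S1 * ENNReal.ofReal ((3:ℝ) ^ β)) * ENNReal.ofReal (d ^ β) *
                maximalFn μ f y := by ring
        _ ≤ K * ENNReal.ofReal (d ^ β) * maximalFn μ f w +
              K * ENNReal.ofReal (d ^ β) * maximalFn μ f y :=
            add_le_add (mul_le_mul_left (mul_le_mul_left hcoef1 _) _)
              (mul_le_mul_left (mul_le_mul_left hcoef2 _) _)
        _ = K * ENNReal.ofReal (d ^ β) * (maximalFn μ f w + maximalFn μ f y) := by ring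
  have final : ∀ w y : X,
      ENNReal.ofReal |(rieszPotential μ β f w).toReal - (rieszPotential μ β f y).toReal| ≤
        (C₁ : ℝ≥0∞) * ENNReal.ofReal (dist w y ^ β) * (maximalFn μ f w + maximalFn μ f y) :=
    fun w y => le_trans (main w y) (mul_le_mul_left (mul_le_mul_left hKC _) _)
  refine ⟨C₁, ?_, final, ?_⟩
  · rw [hC₁]; positivity
  · refine ⟨measurable_const.mul (stmt5_meas_maximal μ f), ∅, measure_empty, ?_⟩
    intro x _ y _
    refine le_trans (final x y) (le_of_eq ?_)
    ring
end

section
/- Suppose μ is a Q-uniform measure on X for some Q > 0, i.e. μ(B(x,r)) = C₁ r^Q for all x ∈ X and r > 0 with a fixed constant C₁ > 0. If 0 < β < min{Q,1}, then the kernel estimate holds with η = 1: there is c_K > 0 such that for all w ≠ y in X and all z ∈ X ∖ B(w, 2d(w,y)), |d(w,z)^β/μ(B(w,d(w,z))) − d(y,z)^β/μ(B(y,d(y,z)))| ≤ c_K d(w,y) / (d(w,z)^{1−β} μ(B(w,d(w,z)))). -/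
open MeasureTheory Metric Set ENNReal NNReal


private lemma bern_neg {γ : ℝ} (hγ : γ < 0) {x : ℝ} (hx : 1 ≤ x) :
    1 + γ * (x - 1) ≤ x ^ γ := by
  have hmono : MonotoneOn (fun x : ℝ => x ^ γ - γ * x) (Set.Ici 1) := by
    apply monotoneOn_of_deriv_nonneg (convex_Ici 1)
    · apply ContinuousOn.sub
      · exact ContinuousOn.rpow_const continuousOn_id
          (fun x hx => Or.inl (by simp at hx; positivity))
      · fun_prop
    · intro x hx
      rw [interior_Ici] at hx
      have hx1 : (1:ℝ) < x := hx
      have hx0 : (x : ℝ) ≠ 0 := ne_of_gt (by linarith)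
      exact ((Real.hasDerivAt_rpow_const (Or.inl hx0)).sub
        ((hasDerivAt_id x).const_mul γ)).differentiableAt.differentiableWithinAt
    · intro x hx
      rw [interior_Ici] at hx
      have hx1 : (1:ℝ) < x := hx
      have hx0 : (x : ℝ) ≠ 0 := ne_of_gt (by linarith)
      have hd : deriv (fun x : ℝ => x ^ γ - γ * x) x = γ * x ^ (γ - 1) - γ * 1 := by
        have := ((Real.hasDerivAt_rpow_const (p := γ) (Or.inl hx0)).sub
          ((hasDerivAt_id x).const_mul γ)).deriv
        exact this
      rw [hd]
      have h1 : x ^ (γ - 1) ≤ 1 :=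
        Real.rpow_le_one_of_one_le_of_nonpos hx1.le (by linarith)
      nlinarith
  have := hmono (Set.mem_Ici.2 le_rfl) (Set.mem_Ici.2 hx) hx
  simp only [Real.one_rpow] at this
  nlinarith

private lemma grad_ineq {γ : ℝ} (hγ : γ < 0) {a b : ℝ} (ha : 0 < a) (hab : a ≤ b) :
    a ^ γ - b ^ γ ≤ (-γ) * a ^ (γ - 1) * (b - a) := by
  have hb : 0 < b := lt_of_lt_of_le ha hab
  have hx : 1 ≤ b / a := (one_le_div ha).2 hab
  have hber := bern_neg hγ hx
  have hmul : (b / a) ^ γ * a ^ γ = b ^ γ := by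
    rw [← Real.mul_rpow (by positivity) ha.le, div_mul_cancel₀ _ ha.ne']
  have hpow : a ^ γ / a = a ^ (γ - 1) := by
    rw [Real.rpow_sub ha, Real.rpow_one]
  have haγ : 0 < a ^ γ := Real.rpow_pos_of_pos ha γ
  have h2 : (1 + γ * (b / a - 1)) * a ^ γ ≤ b ^ γ := by
    rw [← hmul]
    exact mul_le_mul_of_nonneg_right hber haγ.le
  have h3 : (1 + γ * (b / a - 1)) * a ^ γ = a ^ γ + γ * a ^ (γ - 1) * (b - a) := by
    rw [← hpow]
    simp only [div_eq_mul_inv]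
    have hinv : a * a⁻¹ = 1 := mul_inv_cancel₀ ha.ne'
    linear_combination (γ * a ^ γ) * hinv
  nlinarith [h2, h3]

private lemma key_ineq {γ : ℝ} (hγ : γ < 0) {s t d : ℝ} (hs : 0 < s) (ht : 0 < t)
    (h1 : s ≤ t + d) (h2 : t ≤ s + d) (hhalf : s / 2 ≤ t) :
    |s ^ γ - t ^ γ| ≤ ((-γ) * 2 ^ (1 - γ)) * d * s ^ (γ - 1) := by
  have hd0 : 0 ≤ d := by linarith
  have hγpos : (0:ℝ) < -γ := by linarith
  have hsp : (0:ℝ) < s ^ (γ - 1) := Real.rpow_pos_of_pos hs _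
  have htpp : (0:ℝ) < t ^ (γ - 1) := Real.rpow_pos_of_pos ht _
  have h2p : (1:ℝ) ≤ 2 ^ (1 - γ) := Real.one_le_rpow one_le_two (by linarith)
  rcases le_total s t with h | h
  · have hg := grad_ineq hγ hs h
    have hmono : t ^ γ ≤ s ^ γ := Real.rpow_le_rpow_of_nonpos hs h hγ.le
    rw [abs_of_nonneg (by linarith)]
    have q1 : (-γ) * s ^ (γ - 1) * (t - s) ≤ (-γ) * s ^ (γ - 1) * d :=
      mul_le_mul_of_nonneg_left (by linarith) (mul_nonneg hγpos.le hsp.le)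
    nlinarith [mul_nonneg (mul_nonneg hγpos.le hsp.le) hd0]
  · have hg := grad_ineq hγ ht h
    have hmono : s ^ γ ≤ t ^ γ := Real.rpow_le_rpow_of_nonpos ht h hγ.le
    have htp : t ^ (γ - 1) ≤ (s / 2) ^ (γ - 1) :=
      Real.rpow_le_rpow_of_nonpos (by linarith) hhalf (by linarith)
    have hsplit : (s / 2) ^ (γ - 1) = 2 ^ (1 - γ) * s ^ (γ - 1) := by
      rw [Real.div_rpow hs.le (by norm_num), div_eq_mul_inv,
        ← Real.rpow_neg (by norm_num : (0:ℝ) ≤ 2), neg_sub]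
      ring
    have htps : t ^ (γ - 1) ≤ 2 ^ (1 - γ) * s ^ (γ - 1) := hsplit ▸ htp
    rw [abs_of_nonpos (by linarith), neg_sub]
    have p1 : (-γ) * t ^ (γ - 1) * (s - t) ≤ (-γ) * t ^ (γ - 1) * d :=
      mul_le_mul_of_nonneg_left (by linarith) (mul_nonneg hγpos.le htpp.le)
    have p2 : (-γ) * t ^ (γ - 1) * d ≤ (-γ) * (2 ^ (1 - γ) * s ^ (γ - 1)) * d :=
      mul_le_mul_of_nonneg_right (mul_le_mul_of_nonneg_left htps hγpos.le) hd0
    nlinarith [hg, p1, p2]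

theorem stmt6 {X : Type*} [MetricSpace X] [MeasurableSpace X] [BorelSpace X]
    (μ : Measure X) (Q C₁ : ℝ) (hQ : 0 < Q) (hC₁ : 0 < C₁)
    (hunif : ∀ (x : X) (r : ℝ), 0 < r → μ (ball x r) = ENNReal.ofReal (C₁ * r ^ Q))
    (β : ℝ) (hβ : 0 < β) (hβQ : β < Q) (hβ1 : β < 1) :
    ∃ cK : ℝ, 0 < cK ∧
      ∀ w y : X, w ≠ y → ∀ z ∉ ball w (2 * dist w y),
        rieszKernel μ β w z ≤ rieszKernel μ β y z +
          ENNReal.ofReal (cK * dist w y / dist w z ^ (1 - β)) / μ (ball w (dist w z)) ∧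
        rieszKernel μ β y z ≤ rieszKernel μ β w z +
          ENNReal.ofReal (cK * dist w y / dist w z ^ (1 - β)) / μ (ball w (dist w z)) := by
  have hγ : β - Q < 0 := by linarith
  have hcK : (0:ℝ) < -(β - Q) * 2 ^ (1 - (β - Q)) :=
    mul_pos (by linarith) (Real.rpow_pos_of_pos two_pos _)
  refine ⟨-(β - Q) * 2 ^ (1 - (β - Q)), hcK, ?_⟩
  intro w y hwy z hz
  rw [mem_ball', not_lt] at hz
  have hd : 0 < dist w y := dist_pos.2 hwy
  have hs : 0 < dist w z := by linarith
  have htri1 : dist w z ≤ dist w y + dist y z := dist_triangle w y z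
  have htri2 : dist y z ≤ dist y w + dist w z := dist_triangle y w z
  rw [dist_comm y w] at htri2
  have ht : 0 < dist y z := by linarith
  have hhalf : dist w z / 2 ≤ dist y z := by linarith
  have hkey := key_ineq (d := dist w y) hγ hs ht (by linarith) (by linarith) hhalf
  have kere : ∀ (x : X) (r : ℝ), 0 < r → ∀ a : ℝ,
      ENNReal.ofReal a / μ (ball x r) = ENNReal.ofReal (a / (C₁ * r ^ Q)) := by
    intro x r hr a
    rw [hunif x r hr,
      ← ENNReal.ofReal_div_of_pos (mul_pos hC₁ (Real.rpow_pos_of_pos hr Q))]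
  have hw : rieszKernel μ β w z
      = ENNReal.ofReal (dist w z ^ β / (C₁ * dist w z ^ Q)) := kere w _ hs _
  have hy : rieszKernel μ β y z
      = ENNReal.ofReal (dist y z ^ β / (C₁ * dist y z ^ Q)) := kere y _ ht _
  have herr : ENNReal.ofReal (-(β - Q) * 2 ^ (1 - (β - Q)) * dist w y
        / dist w z ^ (1 - β)) / μ (ball w (dist w z))
      = ENNReal.ofReal (-(β - Q) * 2 ^ (1 - (β - Q)) * dist w y / dist w z ^ (1 - β)
        / (C₁ * dist w z ^ Q)) :=
    kere w _ hs _
  have eA : dist w z ^ β / (C₁ * dist w z ^ Q) = dist w z ^ (β - Q) * C₁⁻¹ := by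
    rw [Real.rpow_sub hs]
    field_simp [hC₁.ne', (Real.rpow_pos_of_pos hs Q).ne']
  have eB : dist y z ^ β / (C₁ * dist y z ^ Q) = dist y z ^ (β - Q) * C₁⁻¹ := by
    rw [Real.rpow_sub ht]
    field_simp [hC₁.ne', (Real.rpow_pos_of_pos ht Q).ne']
  have eE : -(β - Q) * 2 ^ (1 - (β - Q)) * dist w y / dist w z ^ (1 - β)
        / (C₁ * dist w z ^ Q)
      = -(β - Q) * 2 ^ (1 - (β - Q)) * dist w y * dist w z ^ (β - Q - 1) * C₁⁻¹ := by
    rw [show β - Q - 1 = -((1 - β) + Q) by ring, Real.rpow_neg hs.le, Real.rpow_add hs]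
    field_simp [hC₁.ne', (Real.rpow_pos_of_pos hs (1 - β)).ne',
      (Real.rpow_pos_of_pos hs Q).ne']
  have habs := abs_le.1 hkey
  have hBnn : (0:ℝ) ≤ dist y z ^ (β - Q) * C₁⁻¹ :=
    mul_nonneg (Real.rpow_nonneg dist_nonneg _) (by positivity)
  have hAnn : (0:ℝ) ≤ dist w z ^ (β - Q) * C₁⁻¹ :=
    mul_nonneg (Real.rpow_nonneg dist_nonneg _) (by positivity)
  have hEnn : (0:ℝ) ≤ -(β - Q) * 2 ^ (1 - (β - Q)) * dist w y
      * dist w z ^ (β - Q - 1) * C₁⁻¹ :=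
    mul_nonneg (mul_nonneg (mul_nonneg hcK.le dist_nonneg)
      (Real.rpow_nonneg dist_nonneg _)) (by positivity)
  have hCinv : (0:ℝ) < C₁⁻¹ := by positivity
  constructor
  · rw [hw, hy, herr, eA, eB, eE, ← ENNReal.ofReal_add hBnn hEnn]
    apply ENNReal.ofReal_le_ofReal
    nlinarith [habs.2, hCinv]
  · rw [hw, hy, herr, eA, eB, eE, ← ENNReal.ofReal_add hAnn hEnn]
    apply ENNReal.ofReal_le_ofReal
    nlinarith [habs.1, hCinv]
end

section
/- Assume X is connected, 1 ≤ p < ∞ and 0 < β ≤ 1. Then there is a constant C = C(c_μ,p) > 0 such that C^{−1} r^{−βp} μ(B(x,r)) ≤ cap_{β,p}(closure of B(x,r), B(x,2r)) ≤ C r^{−βp} μ(B(x,r)) for all x ∈ X and all 0 < r < (1/8) diam(X), where cap_{β,p} denotes the variational Hajłasz (β,p)-capacity. The upper bound holds even without connectivity. -/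
open MeasureTheory Metric Set ENNReal NNReal

/-- The variational Hajłasz `(β,p)`-capacity of `F` relative to `Ω`. -/
noncomputable def hajlaszCapacity {X : Type*} [MetricSpace X] [MeasurableSpace X]
    (μ : Measure X) (β p : ℝ) (F Ω : Set X) : ℝ≥0∞ :=
  sInf { t | ∃ u : X → ℝ, (∃ κ : ℝ, IsHolderWith κ β u) ∧
    (∀ x ∈ F, 1 ≤ u x) ∧ (∀ x ∉ Ω, u x = 0) ∧
    ∃ g : X → ℝ≥0∞, IsHajlaszGradient μ β u g ∧ t = ∫⁻ x, g x ^ p ∂μ }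

/-- The cut-off function `min 1 (max 0 (2 - d(y,x)/r))` is `β`-Hölder with constant
`r ^ (-β)`. -/
lemma holder_aux {X : Type*} [MetricSpace X] (x : X) (r β : ℝ) (hr : 0 < r)
    (hβ : 0 < β) (hβ1 : β ≤ 1) (y z : X) :
    |min 1 (max 0 (2 - dist y x / r)) - min 1 (max 0 (2 - dist z x / r))|
      ≤ r^(-β) * dist y z ^ β := by
  set u : X → ℝ := fun y => min 1 (max 0 (2 - dist y x / r)) with hu
  have hrange : ∀ w, 0 ≤ u w ∧ u w ≤ 1 := by
    intro w; rw [hu]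
    exact ⟨le_min (by norm_num) (le_max_left _ _), min_le_left _ _⟩
  have h2 : |u y - u z| ≤ dist y z / r := by
    have ha : |(2 - dist y x / r) - (2 - dist z x / r)| ≤ dist y z / r := by
      have he : (2 - dist y x / r) - (2 - dist z x / r) = (dist z x - dist y x)/r := by ring
      rw [he, abs_div, abs_of_pos hr]
      have hd : |dist z x - dist y x| ≤ dist y z := by
        rw [dist_comm y z]; exact abs_dist_sub_le z y x
      gcongr
    rw [hu]
    calc |min 1 (max 0 (2 - dist y x / r)) - min 1 (max 0 (2 - dist z x / r))|
        ≤ |(1:ℝ)-1| ⊔ |max 0 (2 - dist y x / r) - max 0 (2 - dist z x / r)| :=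
          abs_min_sub_min_le_max _ _ _ _
      _ = |max 0 (2 - dist y x / r) - max 0 (2 - dist z x / r)| := by
          rw [sub_self, abs_zero]; exact sup_eq_right.mpr (abs_nonneg _)
      _ ≤ |(0:ℝ)-0| ⊔ |(2 - dist y x / r) - (2 - dist z x / r)| :=
          abs_max_sub_max_le_max _ _ _ _
      _ = |(2 - dist y x / r) - (2 - dist z x / r)| := by
          rw [sub_self, abs_zero]; exact sup_eq_right.mpr (abs_nonneg _)
      _ ≤ dist y z / r := ha
  have h1 : |u y - u z| ≤ 1 := by
    have hy := hrange y; have hz := hrange z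
    rw [abs_le]; constructor <;> linarith [hy.1, hy.2, hz.1, hz.2]
  calc |u y - u z| ≤ min 1 (dist y z / r) := le_min h1 h2
    _ ≤ (dist y z / r) ^ β := by
        have hnn : (0:ℝ) ≤ dist y z / r := by positivity
        rcases le_or_gt (dist y z / r) 1 with h | h
        · rw [min_eq_right h]
          rcases hnn.eq_or_lt with h0 | h0
          · simp [← h0, Real.zero_rpow hβ.ne']
          · calc dist y z / r = (dist y z / r) ^ (1:ℝ) := (Real.rpow_one _).symm
              _ ≤ _ := Real.rpow_le_rpow_of_exponent_ge h0 h hβ1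
        · rw [min_eq_left h.le]
          exact Real.one_le_rpow h.le hβ.le
    _ = r^(-β) * dist y z ^ β := by
        rw [Real.div_rpow dist_nonneg hr.le, Real.rpow_neg hr.le, div_eq_mul_inv, mul_comm]

/-- The key scalar inequality relating the constant `10^p * c^2` to the lower-bound
estimate. -/
lemma scalar_aux (c : ℝ≥0) (hc : 1 < c) (p β r : ℝ) (hp : 1 ≤ p) (hβ : 0 < β) (hβ1 : β ≤ 1)
    (hr : 0 < r) :
    ((((10:ℝ≥0)^p * c^2 : ℝ≥0)) : ℝ≥0∞)⁻¹ * (c:ℝ≥0∞)^2 * ENNReal.ofReal (r ^ (-(β*p)))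
      ≤ ENNReal.ofReal ((5*r)^(-β)/2) ^ p := by
  have hp0 : (0:ℝ) < p := lt_of_lt_of_le one_pos hp
  have h5r : (0:ℝ) < 5*r := by linarith
  have hs : (0:ℝ) < (5*r)^(-β)/2 := by positivity
  have hc0 : (0:ℝ≥0) < c := lt_trans one_pos hc
  rw [ENNReal.ofReal_rpow_of_pos hs]
  have hcoe10 : ENNReal.ofReal ((10:ℝ)^p) = (((10:ℝ≥0)^p : ℝ≥0) : ℝ≥0∞) := by
    rw [← ENNReal.ofReal_coe_nnreal, NNReal.coe_rpow]
    norm_num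
  have hC1 : ((((10:ℝ≥0)^p * c^2 : ℝ≥0)) : ℝ≥0∞)⁻¹ * (c:ℝ≥0∞)^2
      = ENNReal.ofReal ((10:ℝ)^(-p)) := by
    calc ((((10:ℝ≥0)^p * c^2 : ℝ≥0)) : ℝ≥0∞)⁻¹ * (c:ℝ≥0∞)^2
        = ((((10:ℝ≥0)^p * c^2 : ℝ≥0)) : ℝ≥0∞)⁻¹ * ((c^2 : ℝ≥0) : ℝ≥0∞) := by
          rw [ENNReal.coe_pow]
      _ = ((((10:ℝ≥0)^p * c^2)⁻¹ : ℝ≥0) : ℝ≥0∞) * ((c^2 : ℝ≥0) : ℝ≥0∞) := by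
          rw [ENNReal.coe_inv (mul_pos (NNReal.rpow_pos (by norm_num)) (pow_pos hc0 2)).ne']
      _ = (((((10:ℝ≥0)^p * c^2)⁻¹ * c^2 : ℝ≥0)) : ℝ≥0∞) := (ENNReal.coe_mul _ _).symm
      _ = ((((10:ℝ≥0)^p)⁻¹ : ℝ≥0) : ℝ≥0∞) := by
          rw [mul_inv, mul_assoc, inv_mul_cancel₀ (pow_pos hc0 2).ne', mul_one]
      _ = ENNReal.ofReal ((10:ℝ)^(-p)) := by
          rw [Real.rpow_neg (by norm_num : (0:ℝ) ≤ 10),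
            ENNReal.ofReal_inv_of_pos (Real.rpow_pos_of_pos (by norm_num) p), hcoe10,
            ← ENNReal.coe_inv (NNReal.rpow_pos (by norm_num)).ne']
  rw [hC1, ← ENNReal.ofReal_mul (by positivity)]
  apply ENNReal.ofReal_le_ofReal
  have e1 : ((5*r)^(-β)/2)^p = (5:ℝ)^(-(β*p)) * r^(-(β*p)) * 2^(-p) := by
    rw [div_eq_mul_inv, ← Real.rpow_neg_one 2,
      Real.mul_rpow (by positivity) (by positivity),
      ← Real.rpow_mul (by norm_num : (0:ℝ) ≤ 2), ← Real.rpow_mul h5r.le,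
      neg_mul, neg_one_mul, Real.mul_rpow (by norm_num : (0:ℝ) ≤ 5) hr.le]
  have e2 : (10:ℝ)^(-p) = (5:ℝ)^(-p) * 2^(-p) := by
    rw [show (10:ℝ) = 5*2 by norm_num, Real.mul_rpow (by norm_num) (by norm_num)]
  have h55 : (5:ℝ)^(-p) ≤ 5^(-(β*p)) :=
    Real.rpow_le_rpow_of_exponent_le (by norm_num) (by nlinarith)
  rw [e1, e2]
  calc (5:ℝ)^(-p) * 2^(-p) * r ^ (-(β*p)) ≤ (5:ℝ)^(-(β*p)) * 2^(-p) * r ^ (-(β*p)) := by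
        gcongr
    _ = (5:ℝ)^(-(β*p)) * r^(-(β*p)) * 2^(-p) := by ring

theorem stmt7 {X : Type*} [MetricSpace X] [MeasurableSpace X] [BorelSpace X]
    [Nontrivial X] [ConnectedSpace X]
    (μ : Measure X)
    (hpos : ∀ (x : X) (r : ℝ), 0 < r → 0 < μ (ball x r))
    (hfin : ∀ (x : X) (r : ℝ), μ (ball x r) < ∞)
    (c : ℝ≥0) (hc : 1 < c)
    (hdbl : ∀ (x : X) (r : ℝ), 0 < r → μ (ball x (2 * r)) ≤ (c : ℝ≥0∞) * μ (ball x r))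
    (p β : ℝ) (hp : 1 ≤ p) (hβ : 0 < β) (hβ1 : β ≤ 1) :
    ∃ C : ℝ≥0, 0 < C ∧
      ∀ (x : X) (r : ℝ), 0 < r →
        ENNReal.ofReal (8 * r) < EMetric.diam (univ : Set X) →
        (C : ℝ≥0∞)⁻¹ * ENNReal.ofReal (r ^ (-(β * p))) * μ (ball x r) ≤
          hajlaszCapacity μ β p (closure (ball x r)) (ball x (2 * r)) ∧
        hajlaszCapacity μ β p (closure (ball x r)) (ball x (2 * r)) ≤
          (C : ℝ≥0∞) * ENNReal.ofReal (r ^ (-(β * p))) * μ (ball x r) := by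
  have hp0 : (0:ℝ) < p := lt_of_lt_of_le one_pos hp
  have hc0 : (0:ℝ≥0) < c := lt_trans one_pos hc
  have hten : (1:ℝ≥0) ≤ (10:ℝ≥0) ^ p := NNReal.one_le_rpow (by norm_num) hp0.le
  refine ⟨(10:ℝ≥0)^p * c^2,
    mul_pos (NNReal.rpow_pos (by norm_num)) (pow_pos hc0 2), ?_⟩
  intro x r hr hdiam
  -- the cut-off function, used for the upper bound
  set u : X → ℝ := fun y => min 1 (max 0 (2 - dist y x / r)) with hudef
  have key : ∀ y z : X, |u y - u z| ≤ r^(-β) * dist y z ^ β :=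
    fun y z => holder_aux x r β hr hβ hβ1 y z
  have hu1 : ∀ y ∈ closure (ball x r), 1 ≤ u y := by
    intro y hy
    have hd : dist y x ≤ r := closure_ball_subset_closedBall hy
    have hdd : (1:ℝ) ≤ 2 - dist y x / r := by
      have : dist y x / r ≤ 1 := div_le_one_of_le₀ hd hr.le
      linarith
    rw [hudef]
    exact le_min le_rfl (le_trans hdd (le_max_right _ _))
  have hu0 : ∀ y ∉ ball x (2*r), u y = 0 := by
    intro y hy
    have hd : 2*r ≤ dist y x := not_lt.mp (by simpa [mem_ball] using hy)
    have h1 : 2 - dist y x / r ≤ 0 := by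
      have : 2 ≤ dist y x / r := (le_div_iff₀ hr).mpr (by linarith)
      linarith
    rw [hudef]
    simp [max_eq_left h1]
  constructor
  · -- LOWER BOUND
    -- find a point z₀ at distance 3r from x
    obtain ⟨w, hw⟩ : ∃ w : X, 4*r ≤ dist x w := by
      have h : ¬ EMetric.diam (univ : Set X) ≤ ENNReal.ofReal (8 * r) := hdiam.not_ge
      rw [show EMetric.diam (univ : Set X) = Metric.ediam univ from rfl, Metric.ediam_le_iff] at h
      push_neg at h
      obtain ⟨a, -, b, -, hab⟩ := h
      rw [edist_dist] at hab
      have h8 : 8*r < dist a b := by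
        by_contra hcon
        push_neg at hcon
        exact hab.not_ge (ENNReal.ofReal_le_ofReal hcon)
      have htri : dist a b ≤ dist x a + dist x b := by
        rw [dist_comm x a]; exact dist_triangle a x b
      rcases le_or_gt (4*r) (dist x a) with h4 | h4
      · exact ⟨a, h4⟩
      · exact ⟨b, by linarith⟩
    obtain ⟨z₀, hz₀⟩ : ∃ z₀ : X, dist x z₀ = 3*r := by
      have hf : Continuous fun y : X => dist x y := continuous_const.dist continuous_id
      have h3 : (3*r) ∈ Icc (dist x x) (dist x w) := by
        rw [dist_self]; exact ⟨by linarith, by linarith⟩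
      exact intermediate_value_univ x w hf h3
    refine le_sInf ?_
    rintro t ⟨v, -, hv1, hv0, g, ⟨hgm, N, hN, hgrad⟩, rfl⟩
    set t0 : ℝ≥0∞ := ENNReal.ofReal ((5*r)^(-β)/2) with ht0
    -- dichotomy: g ≥ t0 a.e. on one of the two balls
    have hdich : μ ((ball x r ∩ {y | g y < t0}) \ N) = 0 ∨
        μ ((ball z₀ r ∩ {y | g y < t0}) \ N) = 0 := by
      by_contra hcon
      push_neg at hcon
      obtain ⟨y, hy⟩ := nonempty_of_measure_ne_zero hcon.1
      obtain ⟨z, hz⟩ := nonempty_of_measure_ne_zero hcon.2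
      obtain ⟨⟨hyball, hygs⟩, hyN⟩ := hy
      obtain ⟨⟨hzball, hzgs⟩, hzN⟩ := hz
      have h5r : (0:ℝ) < 5*r := by linarith
      have hzout : z ∉ ball x (2*r) := by
        intro hmem
        rw [mem_ball] at hmem hzball
        have h1 : dist x z₀ ≤ dist x z + dist z z₀ := dist_triangle _ _ _
        rw [dist_comm z x] at hmem
        linarith
      have huy : (1:ℝ) ≤ |v y - v z| := by
        rw [hv0 z hzout, sub_zero]
        exact le_trans (hv1 y (subset_closure hyball)) (le_abs_self _)
      have hlb : (1:ℝ≥0∞) ≤ ENNReal.ofReal (dist y z ^ β) * (g y + g z) := by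
        calc (1:ℝ≥0∞) = ENNReal.ofReal 1 := by simp
          _ ≤ ENNReal.ofReal |v y - v z| := ENNReal.ofReal_le_ofReal huy
          _ ≤ _ := hgrad y hyN z hzN
      have hd5 : dist y z ≤ 5*r := by
        rw [mem_ball] at hyball hzball
        calc dist y z ≤ dist y z₀ + dist z₀ z := dist_triangle _ _ _
          _ ≤ (dist y x + dist x z₀) + dist z₀ z := by linarith [dist_triangle y x z₀]
          _ ≤ 5*r := by rw [dist_comm z₀ z] ; linarith [hz₀]
      have hub : ENNReal.ofReal (dist y z ^ β) * (g y + g z) < 1 := by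
        have hmono : ENNReal.ofReal (dist y z ^ β) ≤ ENNReal.ofReal ((5*r) ^ β) :=
          ENNReal.ofReal_le_ofReal (Real.rpow_le_rpow dist_nonneg hd5 hβ.le)
        have hsum : g y + g z < ENNReal.ofReal ((5*r)^(-β)) := by
          have := ENNReal.add_lt_add hygs hzgs
          rwa [← ENNReal.ofReal_add (by positivity) (by positivity), add_halves] at this
        calc ENNReal.ofReal (dist y z ^ β) * (g y + g z)
            ≤ ENNReal.ofReal ((5*r) ^ β) * (g y + g z) := _root_.mul_le_mul_left hmono _
          _ < ENNReal.ofReal ((5*r) ^ β) * ENNReal.ofReal ((5*r)^(-β)) := by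
              rw [ENNReal.mul_lt_mul_iff_right (by simp [Real.rpow_pos_of_pos h5r])
                ENNReal.ofReal_ne_top]
              exact hsum
          _ = 1 := by
              rw [← ENNReal.ofReal_mul (Real.rpow_nonneg h5r.le _), ← Real.rpow_add h5r,
                add_neg_cancel, Real.rpow_zero, ENNReal.ofReal_one]
      exact absurd hlb hub.not_ge
    -- the main integral estimate
    have main : ∀ w' : X, μ ((ball w' r ∩ {y | g y < t0}) \ N) = 0 →
        t0 ^ p * μ (ball w' r) ≤ ∫⁻ y, g y ^ p ∂μ := by
      intro w' hE
      have hae : ∀ᵐ y ∂μ.restrict (ball w' r), t0 ≤ g y := by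
        rw [ae_restrict_iff' measurableSet_ball, ae_iff]
        refine measure_mono_null ?_ (measure_union_null hE hN)
        intro y hy
        simp only [mem_setOf_eq, _root_.not_imp, not_le] at hy
        by_cases hyN : y ∈ N
        · exact Or.inr hyN
        · exact Or.inl ⟨⟨hy.1, hy.2⟩, hyN⟩
      calc t0 ^ p * μ (ball w' r) = ∫⁻ _ in ball w' r, t0 ^ p ∂μ :=
            (setLIntegral_const _ _).symm
        _ ≤ ∫⁻ y in ball w' r, g y ^ p ∂μ :=
            lintegral_mono_ae (hae.mono fun y hy => ENNReal.rpow_le_rpow hy hp0.le)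
        _ ≤ ∫⁻ y, g y ^ p ∂μ := setLIntegral_le_lintegral _ _
    have scalar := scalar_aux c hc p β r hp hβ hβ1 hr
    rw [← ht0] at scalar
    have hc2 : (1:ℝ≥0∞) ≤ (c:ℝ≥0∞)^2 := by
      rw [← one_pow 2]
      gcongr
      exact_mod_cast hc.le
    rcases hdich with hE | hE
    · have hmain := main x hE
      have h1 : ((((10:ℝ≥0)^p * c^2 : ℝ≥0)) : ℝ≥0∞)⁻¹ * ENNReal.ofReal (r^(-(β*p)))
          ≤ t0 ^ p := by
        calc ((((10:ℝ≥0)^p * c^2 : ℝ≥0)) : ℝ≥0∞)⁻¹ * ENNReal.ofReal (r^(-(β*p)))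
            = ((((10:ℝ≥0)^p * c^2 : ℝ≥0)) : ℝ≥0∞)⁻¹ * 1 * ENNReal.ofReal (r^(-(β*p))) := by
              rw [mul_one]
          _ ≤ ((((10:ℝ≥0)^p * c^2 : ℝ≥0)) : ℝ≥0∞)⁻¹ * (c:ℝ≥0∞)^2
              * ENNReal.ofReal (r^(-(β*p))) := by gcongr
          _ ≤ t0 ^ p := scalar
      exact le_trans (_root_.mul_le_mul_left h1 _) hmain
    · have hmain := main z₀ hE
      have hμ : μ (ball x r) ≤ (c:ℝ≥0∞)^2 * μ (ball z₀ r) := by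
        have hsub : ball x r ⊆ ball z₀ (2*(2*r)) := by
          intro y hy
          rw [mem_ball] at hy ⊢
          have h1 : dist y z₀ ≤ dist y x + dist x z₀ := dist_triangle _ _ _
          linarith
        calc μ (ball x r) ≤ μ (ball z₀ (2*(2*r))) := measure_mono hsub
          _ ≤ c * μ (ball z₀ (2*r)) := hdbl z₀ (2*r) (by linarith)
          _ ≤ c * ((c:ℝ≥0∞) * μ (ball z₀ r)) := _root_.mul_le_mul_right (hdbl z₀ r hr) _
          _ = (c:ℝ≥0∞)^2 * μ (ball z₀ r) := by rw [← mul_assoc, sq]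
      calc ((((10:ℝ≥0)^p * c^2 : ℝ≥0)) : ℝ≥0∞)⁻¹ * ENNReal.ofReal (r ^ (-(β * p)))
            * μ (ball x r)
          ≤ ((((10:ℝ≥0)^p * c^2 : ℝ≥0)) : ℝ≥0∞)⁻¹ * ENNReal.ofReal (r ^ (-(β * p)))
            * ((c:ℝ≥0∞)^2 * μ (ball z₀ r)) := _root_.mul_le_mul_right hμ _
        _ = (((((10:ℝ≥0)^p * c^2 : ℝ≥0)) : ℝ≥0∞)⁻¹ * (c:ℝ≥0∞)^2
            * ENNReal.ofReal (r ^ (-(β * p)))) * μ (ball z₀ r) := by ring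
        _ ≤ t0 ^ p * μ (ball z₀ r) := _root_.mul_le_mul_left scalar _
        _ ≤ ∫⁻ y, g y ^ p ∂μ := hmain
  · -- UPPER BOUND
    set g : X → ℝ≥0∞ := (ball x (2*r)).indicator (fun _ => ENNReal.ofReal (r^(-β))) with hg
    have hgm : Measurable g := measurable_const.indicator measurableSet_ball
    have hgrad : ∀ y z : X,
        ENNReal.ofReal |u y - u z| ≤ ENNReal.ofReal (dist y z ^ β) * (g y + g z) := by
      intro y z
      have hmain : ∀ w : X, w ∈ ball x (2*r) →
          ENNReal.ofReal |u y - u z| ≤ ENNReal.ofReal (dist y z ^ β) * g w := by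
        intro w hw
        rw [hg]
        simp only [indicator_of_mem hw]
        rw [← ENNReal.ofReal_mul (Real.rpow_nonneg dist_nonneg β)]
        apply ENNReal.ofReal_le_ofReal
        rw [mul_comm]
        exact key y z
      by_cases hy : y ∈ ball x (2*r)
      · exact le_trans (hmain y hy) (_root_.mul_le_mul_right le_self_add _)
      · by_cases hz : z ∈ ball x (2*r)
        · exact le_trans (hmain z hz) (_root_.mul_le_mul_right le_add_self _)
        · rw [hu0 y hy, hu0 z hz]
          simp
    have hint : ∫⁻ y, g y ^ p ∂μ = ENNReal.ofReal (r ^ (-(β*p))) * μ (ball x (2*r)) := by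
      have h1 : ∀ y, g y ^ p
          = (ball x (2*r)).indicator (fun _ => ENNReal.ofReal (r^(-β)) ^ p) y := by
        intro y
        by_cases hy : y ∈ ball x (2*r) <;>
          simp [hg, indicator_of_mem, indicator_of_notMem, hy, ENNReal.zero_rpow_of_pos hp0]
      rw [lintegral_congr h1, lintegral_indicator measurableSet_ball, setLIntegral_const,
        ENNReal.ofReal_rpow_of_pos (Real.rpow_pos_of_pos hr _)]
      congr 2
      rw [← Real.rpow_mul hr.le, neg_mul]
    have hmem : (∫⁻ y, g y ^ p ∂μ) ∈ { t | ∃ v : X → ℝ, (∃ κ : ℝ, IsHolderWith κ β v) ∧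
        (∀ y ∈ closure (ball x r), 1 ≤ v y) ∧ (∀ y ∉ ball x (2*r), v y = 0) ∧
        ∃ g' : X → ℝ≥0∞, IsHajlaszGradient μ β v g' ∧ t = ∫⁻ y, g' y ^ p ∂μ } :=
      ⟨u, ⟨r^(-β), key⟩, hu1, hu0,
        g, ⟨hgm, ∅, measure_empty, fun y _ z _ => hgrad y z⟩, rfl⟩
    have hcC : (c : ℝ≥0∞) ≤ (((10:ℝ≥0)^p * c^2 : ℝ≥0) : ℝ≥0∞) := by
      have : c ≤ (10:ℝ≥0)^p * c^2 := by
        calc c = 1 * c := (one_mul c).symm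
          _ ≤ (10:ℝ≥0)^p * c^2 := mul_le_mul' hten (le_self_pow hc.le two_ne_zero)
      exact_mod_cast this
    calc hajlaszCapacity μ β p (closure (ball x r)) (ball x (2 * r))
        ≤ ∫⁻ y, g y ^ p ∂μ := sInf_le hmem
      _ = ENNReal.ofReal (r ^ (-(β*p))) * μ (ball x (2*r)) := hint
      _ ≤ ENNReal.ofReal (r ^ (-(β*p))) * ((c:ℝ≥0∞) * μ (ball x r)) :=
          _root_.mul_le_mul_right (hdbl x r hr) _
      _ = (c:ℝ≥0∞) * ENNReal.ofReal (r ^ (-(β*p))) * μ (ball x r) := by ring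
      _ ≤ (((10:ℝ≥0)^p * c^2 : ℝ≥0) : ℝ≥0∞) * ENNReal.ofReal (r ^ (-(β*p)))
          * μ (ball x r) := by gcongr
end

section
/- Let 1 ≤ p < ∞, 0 < β ≤ 1, and assume μ satisfies the quantitative reverse doubling condition μ(B(x,r))/μ(B(x,R)) ≤ c_σ (r/R)^σ for all 0 < r < R ≤ 2 diam(X), with σ > βp. Let x ∈ X, 0 < r < (1/8) diam(X), and let f ∈ L^p(X) be nonnegative. If for some z in the closure of B(x,r) one has ∫_{X ∖ B(z,r/5)} f(y) d(z,y)^β / μ(B(z,d(z,y))) dμ(y) ≥ 1/2, then ‖f‖_{L^p(X)}^p ≥ C r^{−βp} μ(B(x,r)) with C = C(c_μ, c_σ, β, σ, p) > 0. -/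
open MeasureTheory Metric Set ENNReal NNReal

lemma aux_holder {X : Type*} [MeasurableSpace X] (ν : Measure X) {p : ℝ} (hp : 1 ≤ p)
    {f : X → ℝ≥0∞} (hf : Measurable f) :
    ∫⁻ y, f y ∂ν ≤ (∫⁻ y, f y ^ p ∂ν) ^ (1/p) * (ν univ) ^ (1 - 1/p) := by
  rcases eq_or_lt_of_le hp with h1 | h1
  · simp [← h1]
  · have hpq := Real.HolderConjugate.conjExponent h1
    have := ENNReal.lintegral_mul_le_Lp_mul_Lq ν hpq hf.aemeasurable
      (measurable_const (a := (1:ℝ≥0∞))).aemeasurable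
    simp only [Pi.mul_apply, Pi.one_apply, mul_one, ENNReal.one_rpow, lintegral_const,
      one_mul] at this
    rw [one_div, hpq.one_sub_inv]; rwa [one_div, one_div] at this

lemma aux_inv {a b k : ℝ≥0∞} (ha0 : a ≠ 0) (hb : b ≠ ∞) (hk : k ≠ ∞) (h : a ≤ k * b) :
    b⁻¹ ≤ k * a⁻¹ := by
  have haT : a ≠ ∞ := ne_top_of_le_ne_top (ENNReal.mul_ne_top hk hb) h
  have hb0 : b ≠ 0 := by
    rintro rfl
    exact ha0 (le_antisymm (by simpa using h) zero_le)
  calc b⁻¹ = a⁻¹ * a * b⁻¹ := by rw [ENNReal.inv_mul_cancel ha0 haT, one_mul]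
    _ ≤ a⁻¹ * (k * b) * b⁻¹ := by gcongr
    _ = k * a⁻¹ * (b * b⁻¹) := by ring
    _ = k * a⁻¹ := by rw [ENNReal.mul_inv_cancel hb0 hb, mul_one]

lemma aux_geom {s cσ' β σ p : ℝ} (hs : 0 < s) (hc' : 0 < cσ') (hp : 0 < p) (j : ℕ) :
    ((2:ℝ)^(j+1) * s) ^ β * (cσ' * (((2:ℝ)^j)⁻¹) ^ σ) ^ (1/p)
      = (2*s)^β * cσ' ^ (1/p) * ((2:ℝ) ^ (β - σ/p)) ^ j := by
  have h2 : (0:ℝ) < 2 := two_pos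
  have e1 : ((2:ℝ)^(j+1) * s)^β = 2 ^ (((j:ℝ)+1)*β) * s^β := by
    rw [Real.mul_rpow (by positivity) hs.le, ← Real.rpow_natCast (2:ℝ) (j+1),
      ← Real.rpow_mul (by norm_num)]
    push_cast; ring_nf
  have e2 : (cσ' * (((2:ℝ)^j)⁻¹)^σ)^(1/p) = cσ'^(1/p) * 2 ^ (-((j:ℝ)*σ)/p) := by
    rw [Real.mul_rpow hc'.le (by positivity), ← Real.rpow_natCast (2:ℝ) j,
      ← Real.rpow_neg (by norm_num : (0:ℝ) ≤ 2), ← Real.rpow_mul (by positivity),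
      ← Real.rpow_mul (by positivity)]
    congr 1
    ring
  have e3 : ((2:ℝ)^(β - σ/p))^j = 2 ^ ((j:ℝ)*(β - σ/p)) := by
    rw [← Real.rpow_natCast ((2:ℝ) ^ (β - σ/p)) j, ← Real.rpow_mul (by norm_num)]
    ring_nf
  calc ((2:ℝ)^(j+1) * s) ^ β * (cσ' * (((2:ℝ)^j)⁻¹) ^ σ) ^ (1/p)
      = 2 ^ (((j:ℝ)+1)*β + -((j:ℝ)*σ)/p) * (s^β * cσ'^(1/p)) := by
        rw [e1, e2, Real.rpow_add h2]; ring
    _ = 2 ^ (β + (j:ℝ)*(β - σ/p)) * (s^β * cσ'^(1/p)) := by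
        rw [show ((j:ℝ)+1)*β + -((j:ℝ)*σ)/p = β + (j:ℝ)*(β-σ/p) by ring]
    _ = (2*s)^β * cσ' ^ (1/p) * ((2:ℝ) ^ (β - σ/p)) ^ j := by
        rw [Real.rpow_add h2, e3, Real.mul_rpow h2.le hs.le]; ring
theorem stmt9 {X : Type*} [MetricSpace X] [MeasurableSpace X] [BorelSpace X]
    (μ : Measure X)
    (hpos : ∀ (x : X) (r : ℝ), 0 < r → 0 < μ (ball x r))
    (hfin : ∀ (x : X) (r : ℝ), μ (ball x r) < ∞)
    (c : ℝ≥0) (hc : 1 < c)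
    (hdbl : ∀ (x : X) (r : ℝ), 0 < r → μ (ball x (2 * r)) ≤ (c : ℝ≥0∞) * μ (ball x r))
    (p β σ cσ : ℝ) (hp : 1 ≤ p) (hβ : 0 < β) (hβ1 : β ≤ 1)
    (hσ : β * p < σ) (hcσ : 0 < cσ)
    (hrd : ∀ (x : X) (r R : ℝ), 0 < r → r < R →
      ENNReal.ofReal R ≤ 2 * EMetric.diam (univ : Set X) →
      μ (ball x r) ≤ ENNReal.ofReal (cσ * (r / R) ^ σ) * μ (ball x R)) :
    ∃ C : ℝ≥0, 0 < C ∧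
      ∀ (x z : X) (r : ℝ) (f : X → ℝ≥0∞), Measurable f →
        (∫⁻ y, f y ^ p ∂μ) ≠ ∞ →
        0 < r → ENNReal.ofReal (8 * r) < EMetric.diam (univ : Set X) →
        z ∈ closure (ball x r) →
        (1 / 2 : ℝ≥0∞) ≤ ∫⁻ y in (ball z (r / 5))ᶜ, f y * rieszKernel μ β z y ∂μ →
        (C : ℝ≥0∞) * ENNReal.ofReal (r ^ (-(β * p))) * μ (ball x r) ≤
          ∫⁻ y, f y ^ p ∂μ := by
  have hp0 : (0:ℝ) < p := lt_of_lt_of_le one_pos hp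
  set cσ' : ℝ := max cσ 1 with hcσ'def
  have hcσ'1 : (1:ℝ) ≤ cσ' := le_max_right _ _
  have hcσ'0 : (0:ℝ) < cσ' := lt_of_lt_of_le one_pos hcσ'1
  set t : ℝ := β - σ / p with htdef
  have ht : t < 0 := by
    have : β < σ / p := (lt_div_iff₀ hp0).2 hσ
    simp [htdef]; linarith
  set w : ℝ := (2:ℝ) ^ t with hwdef
  have hw0 : 0 < w := Real.rpow_pos_of_pos two_pos t
  have hw1 : w < 1 := Real.rpow_lt_one_of_one_lt_of_neg one_lt_two ht
  have hc0 : (c:ℝ≥0∞) ≠ 0 := by simp; positivity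
  have hcT : (c:ℝ≥0∞) ≠ ∞ := ENNReal.coe_ne_top
  have hc1 : (1:ℝ≥0∞) ≤ (c:ℝ≥0∞) := by exact_mod_cast hc.le
  set W : ℝ≥0∞ := ENNReal.ofReal w with hWdef
  have hW1 : W < 1 := by
    rw [hWdef, ← ENNReal.ofReal_one]; exact ENNReal.ofReal_lt_ofReal_iff_of_nonneg hw0.le |>.2 hw1
  have hWsub0 : (1:ℝ≥0∞) - W ≠ 0 := by
    simp only [ne_eq, tsub_eq_zero_iff_le, not_le]; exact hW1
  have hWsubT : (1:ℝ≥0∞) - W ≠ ∞ := by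
    exact ne_top_of_le_ne_top one_ne_top tsub_le_self
  set Q0 : ℝ := (2/5:ℝ) ^ β * cσ' ^ (1/p) with hQ0def
  have hQ0 : 0 < Q0 := by positivity
  set U0 : ℝ≥0∞ := (1/2) * (c:ℝ≥0∞)⁻¹ * (ENNReal.ofReal Q0)⁻¹ * (1 - W) with hU0def
  have hU00 : U0 ≠ 0 := by
    rw [hU0def]
    refine mul_ne_zero (mul_ne_zero (mul_ne_zero (by simp) ?_) ?_) hWsub0
    · simp [hcT]
    · simp [ENNReal.ofReal_ne_top]
  have hU0T : U0 ≠ ∞ := by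
    rw [hU0def]
    refine ENNReal.mul_ne_top (ENNReal.mul_ne_top (ENNReal.mul_ne_top (by simp) ?_) ?_) hWsubT
    · simp [hc0]
    · simp [(ENNReal.ofReal_pos.2 hQ0).ne']
  set Cen : ℝ≥0∞ := U0 ^ p * ((c:ℝ≥0∞) ^ (4:ℕ))⁻¹ with hCendef
  have hCen0 : Cen ≠ 0 := by
    rw [hCendef]
    refine mul_ne_zero ?_ ?_
    · simp [ENNReal.rpow_eq_zero_iff, hU00, hU0T]
    · simp [pow_ne_top hcT]
  have hCenT : Cen ≠ ∞ := by
    rw [hCendef]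
    refine ENNReal.mul_ne_top ?_ ?_
    · exact (ENNReal.rpow_lt_top_of_nonneg hp0.le hU0T).ne
    · simp [pow_ne_zero, hc0]
  refine ⟨Cen.toNNReal, ?_, ?_⟩
  · exact ENNReal.toNNReal_pos hCen0 hCenT
  intro x z r f hf hfT hr hdiam hz hint
  rw [ENNReal.coe_toNNReal hCenT]
  set s : ℝ := r/5 with hsdef
  have hs : 0 < s := by positivity
  set m : ℕ → ℝ≥0∞ := fun j => μ (ball z ((2:ℝ)^j * s)) with hmdef
  have hm0 : ∀ j, m j ≠ 0 := fun j => (hpos z _ (by positivity)).ne'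
  have hmT : ∀ j, m j ≠ ∞ := fun j => (hfin z _).ne
  have hdbl' : ∀ j, m (j+1) ≤ c * m j := by
    intro j
    have e : (2:ℝ)^(j+1) * s = 2*((2:ℝ)^j*s) := by ring
    show μ (ball z ((2:ℝ)^(j+1) * s)) ≤ c * μ (ball z ((2:ℝ)^j * s))
    rw [e]; exact hdbl z _ (by positivity)
  have hm4 : μ (ball x r) ≤ (c:ℝ≥0∞)^(4:ℕ) * m 0 := by
    have hzx : dist z x ≤ r := by
      have := (closure_ball_subset_closedBall) hz
      rwa [mem_closedBall] at this
    have hsub : ball x r ⊆ ball z ((2:ℝ)^(4:ℕ) * s) := by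
      intro y hy
      rw [mem_ball] at *
      have h1 : dist y z ≤ dist y x + dist x z := dist_triangle _ _ _
      have h2 : dist x z = dist z x := dist_comm _ _
      have : (2:ℝ)^(4:ℕ) * s = 16/5 * r := by rw [hsdef]; ring
      rw [this]
      linarith
    have h0 : μ (ball x r) ≤ m 4 := measure_mono hsub
    have i1 := hdbl' 0; have i2 := hdbl' 1; have i3 := hdbl' 2; have i4 := hdbl' 3
    calc μ (ball x r) ≤ m 4 := h0
      _ ≤ c * m 3 := i4
      _ ≤ c * (c * m 2) := by gcongr
      _ ≤ c * (c * (c * m 1)) := by gcongr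
      _ ≤ c * (c * (c * (c * m 0))) := by gcongr
      _ = (c:ℝ≥0∞)^(4:ℕ) * m 0 := by ring
  set G := ∫⁻ y, f y ^ p ∂μ with hGdef
  set A : ℕ → Set X := fun j => ball z ((2:ℝ)^(j+1) * s) \ ball z ((2:ℝ)^j * s) with hAdef
  have hcov : (ball z s)ᶜ ⊆ ⋃ j, A j := by
    intro y hy
    have hy' : s ≤ dist y z := by
      rw [mem_compl_iff, mem_ball] at hy; exact not_lt.1 hy
    have hex : ∃ n : ℕ, dist y z < (2:ℝ)^n * s := by
      obtain ⟨n, hn⟩ := pow_unbounded_of_one_lt (dist y z / s) (one_lt_two (α := ℝ))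
      rw [div_lt_iff₀ hs] at hn
      exact ⟨n, by linarith⟩
    classical
    have hspec : dist y z < (2:ℝ)^(Nat.find hex) * s := Nat.find_spec hex
    have hn₀pos : Nat.find hex ≠ 0 := by
      intro h0; rw [h0] at hspec; simp at hspec; linarith
    obtain ⟨k, hk⟩ := Nat.exists_eq_succ_of_ne_zero hn₀pos
    refine mem_iUnion.2 ⟨k, ?_, ?_⟩
    · rw [mem_ball]; rw [hk] at hspec; exact hspec
    · intro hmem
      rw [mem_ball] at hmem
      exact Nat.find_min hex (hk ▸ k.lt_succ_self) hmem
  have hm00 : m 0 = μ (ball z s) := by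
    show μ (ball z ((2:ℝ)^(0:ℕ) * s)) = μ (ball z s)
    norm_num
  have hexp1 : (0:ℝ) ≤ 1 - 1/p := by
    have : 1/p ≤ 1 := by rw [div_le_one hp0]; exact hp
    linarith
  have hwgeom : ((2:ℝ)^(β - σ/p)) = w := by rw [hwdef]
  have key : ∀ j : ℕ, ∫⁻ y in A j, f y * rieszKernel μ β z y ∂μ ≤
      (G ^ (1/p) * (m 0) ^ (-(1/p)) * c) * ENNReal.ofReal ((2*s)^β * cσ'^(1/p) * w^j) := by
    intro j
    rcases eq_empty_or_nonempty (A j) with hAe | ⟨y₀, hy₀⟩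
    · rw [hAe]; simp
    have hy₀2 : (2:ℝ)^j * s ≤ dist y₀ z := by
      have := hy₀.2; rw [mem_ball] at this; exact not_lt.1 this
    have hrdj : m 0 ≤ ENNReal.ofReal (cσ' * (((2:ℝ)^j)⁻¹) ^ σ) * m j := by
      rcases Nat.eq_zero_or_pos j with rfl | hj
      · simp only [pow_zero, inv_one, Real.one_rpow, mul_one]
        exact le_mul_of_one_le_left zero_le (ENNReal.one_le_ofReal.2 hcσ'1)
      · have hRle : ENNReal.ofReal ((2:ℝ)^j * s) ≤ 2 * EMetric.diam (univ : Set X) := by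
          calc ENNReal.ofReal ((2:ℝ)^j * s) ≤ ENNReal.ofReal (dist y₀ z) :=
                ENNReal.ofReal_le_ofReal hy₀2
            _ = edist y₀ z := (edist_dist _ _).symm
            _ ≤ EMetric.diam (univ : Set X) := EMetric.edist_le_diam_of_mem trivial trivial
            _ ≤ 2 * EMetric.diam (univ : Set X) := le_mul_of_one_le_left zero_le one_le_two
        have hlt : s < (2:ℝ)^j * s := by
          have h1 : (1:ℝ) < 2^j := one_lt_pow₀ (one_lt_two : (1:ℝ) < 2) hj.ne'
          nlinarith
        have h := hrd z s ((2:ℝ)^j * s) hs hlt hRle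
        rw [show s / ((2:ℝ)^j * s) = ((2:ℝ)^j)⁻¹ by field_simp] at h
        rw [hm00]
        refine h.trans (mul_le_mul_left (ENNReal.ofReal_le_ofReal ?_) _)
        exact mul_le_mul_of_nonneg_right (le_max_left _ _)
          (Real.rpow_nonneg (by positivity) _)
    set κ : ℝ≥0∞ := ENNReal.ofReal (((2:ℝ)^(j+1) * s)^β) / m j with hκdef
    have hker : ∀ y ∈ A j, f y * rieszKernel μ β z y ≤ f y * κ := by
      intro y hy
      refine mul_le_mul_right ?_ _
      rw [rieszKernel, hκdef]
      have hy1 : dist y z < (2:ℝ)^(j+1) * s := by have := hy.1; rwa [mem_ball] at this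
      have hy2 : (2:ℝ)^j * s ≤ dist y z := by
        have := hy.2; rw [mem_ball] at this; exact not_lt.1 this
      refine ENNReal.div_le_div ?_ ?_
      · apply ENNReal.ofReal_le_ofReal
        rw [dist_comm]
        exact Real.rpow_le_rpow dist_nonneg hy1.le hβ.le
      · refine measure_mono (ball_subset_ball ?_)
        rw [dist_comm]; exact hy2
    have harith : (G ^ (1/p) * ((c:ℝ≥0∞) * m j) ^ (1 - 1/p)) * κ ≤
        (G ^ (1/p) * (m 0) ^ (-(1/p)) * c) * ENNReal.ofReal ((2*s)^β * cσ'^(1/p) * w^j) := by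
      have stepb : (c:ℝ≥0∞) ^ ((1:ℝ) - 1/p) ≤ c := by
        calc (c:ℝ≥0∞) ^ ((1:ℝ) - 1/p) ≤ (c:ℝ≥0∞) ^ (1:ℝ) :=
              ENNReal.rpow_le_rpow_of_exponent_le hc1 (by have := one_div_nonneg.2 hp0.le; linarith)
          _ = c := ENNReal.rpow_one _
      have stepc : (m j) ^ ((1:ℝ) - 1/p) * (m j)⁻¹ = (m j) ^ (-(1/p)) := by
        rw [← ENNReal.rpow_neg_one (m j), ← ENNReal.rpow_add _ _ (hm0 j) (hmT j)]
        congr 1; ring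
      have stepd : (m j) ^ (-(1/p)) ≤
          (ENNReal.ofReal (cσ' * (((2:ℝ)^j)⁻¹) ^ σ)) ^ (1/p) * (m 0) ^ (-(1/p)) := by
        rw [ENNReal.rpow_neg, ENNReal.rpow_neg]
        refine aux_inv ?_ ?_ ?_ ?_
        · exact (ENNReal.rpow_pos (pos_iff_ne_zero.2 (hm0 0)) (hmT 0)).ne'
        · exact (ENNReal.rpow_lt_top_of_nonneg (by positivity) (hmT j)).ne
        · exact (ENNReal.rpow_lt_top_of_nonneg (by positivity) ENNReal.ofReal_ne_top).ne
        · rw [← ENNReal.mul_rpow_of_ne_top ENNReal.ofReal_ne_top (hmT j)]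
          exact ENNReal.rpow_le_rpow hrdj (by positivity)
      have stepe : (ENNReal.ofReal (cσ' * (((2:ℝ)^j)⁻¹) ^ σ)) ^ (1/p) =
          ENNReal.ofReal ((cσ' * (((2:ℝ)^j)⁻¹) ^ σ) ^ (1/p)) :=
        ENNReal.ofReal_rpow_of_pos (by positivity)
      calc (G ^ (1/p) * ((c:ℝ≥0∞) * m j) ^ (1 - 1/p)) * κ
          = G ^ (1/p) * (c:ℝ≥0∞) ^ ((1:ℝ) - 1/p) * ((m j) ^ ((1:ℝ) - 1/p) * (m j)⁻¹) *
              ENNReal.ofReal (((2:ℝ)^(j+1) * s)^β) := by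
            rw [hκdef, ENNReal.div_eq_inv_mul, ENNReal.mul_rpow_of_ne_top ENNReal.coe_ne_top (hmT j)]
            ring
        _ = G ^ (1/p) * (c:ℝ≥0∞) ^ ((1:ℝ) - 1/p) * (m j) ^ (-(1/p)) *
              ENNReal.ofReal (((2:ℝ)^(j+1) * s)^β) := by rw [stepc]
        _ ≤ G ^ (1/p) * c *
              ((ENNReal.ofReal (cσ' * (((2:ℝ)^j)⁻¹) ^ σ)) ^ (1/p) * (m 0) ^ (-(1/p))) *
              ENNReal.ofReal (((2:ℝ)^(j+1) * s)^β) := by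
            refine mul_le_mul_left ?_ _
            rw [mul_assoc, mul_assoc]
            exact mul_le_mul' le_rfl (mul_le_mul' stepb stepd)
        _ = (G ^ (1/p) * (m 0) ^ (-(1/p)) * c) *
              (ENNReal.ofReal (((2:ℝ)^(j+1) * s)^β) *
                ENNReal.ofReal ((cσ' * (((2:ℝ)^j)⁻¹) ^ σ) ^ (1/p))) := by
            rw [stepe]; ring
        _ = (G ^ (1/p) * (m 0) ^ (-(1/p)) * c) *
              ENNReal.ofReal ((2*s)^β * cσ'^(1/p) * w^j) := by
            rw [← ENNReal.ofReal_mul (by positivity), aux_geom hs hcσ'0 hp0 j, hwgeom]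
    calc ∫⁻ y in A j, f y * rieszKernel μ β z y ∂μ
        ≤ ∫⁻ y in A j, f y * κ ∂μ := setLIntegral_mono (hf.mul_const _) hker
      _ = (∫⁻ y in A j, f y ∂μ) * κ := lintegral_mul_const _ hf
      _ ≤ ((∫⁻ y in A j, f y ^ p ∂μ) ^ (1/p) * (μ (A j)) ^ (1 - 1/p)) * κ := by
          refine mul_le_mul_left ?_ _
          have := aux_holder (μ.restrict (A j)) hp hf
          rwa [Measure.restrict_apply_univ] at this
      _ ≤ (G ^ (1/p) * ((c:ℝ≥0∞) * m j) ^ (1 - 1/p)) * κ := by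
          refine mul_le_mul_left (mul_le_mul' ?_ ?_) _
          · exact ENNReal.rpow_le_rpow (setLIntegral_le_lintegral _ _) (by positivity)
          · refine ENNReal.rpow_le_rpow ?_ hexp1
            calc μ (A j) ≤ μ (ball z ((2:ℝ)^(j+1) * s)) := measure_mono diff_subset
              _ ≤ c * m j := hdbl' j
      _ ≤ (G ^ (1/p) * (m 0) ^ (-(1/p)) * c) *
            ENNReal.ofReal ((2*s)^β * cσ'^(1/p) * w^j) := harith
  set Z : ℝ≥0∞ := (m 0) ^ (-(1/p)) * c * ENNReal.ofReal ((2*s)^β * cσ'^(1/p)) * (1-W)⁻¹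
    with hZdef
  have hsum : (1/2 : ℝ≥0∞) ≤ G ^ (1/p) * Z := by
    calc (1/2 : ℝ≥0∞) ≤ ∫⁻ y in (ball z s)ᶜ, f y * rieszKernel μ β z y ∂μ := hint
      _ ≤ ∫⁻ y in ⋃ j, A j, f y * rieszKernel μ β z y ∂μ := lintegral_mono_set hcov
      _ ≤ ∑' j, ∫⁻ y in A j, f y * rieszKernel μ β z y ∂μ := lintegral_iUnion_le _ _
      _ ≤ ∑' j, (G ^ (1/p) * (m 0) ^ (-(1/p)) * c) *
            ENNReal.ofReal ((2*s)^β * cσ'^(1/p) * w^j) := ENNReal.tsum_le_tsum key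
      _ = (G ^ (1/p) * (m 0) ^ (-(1/p)) * c) *
            ∑' j, ENNReal.ofReal ((2*s)^β * cσ'^(1/p) * w^j) := ENNReal.tsum_mul_left
      _ = (G ^ (1/p) * (m 0) ^ (-(1/p)) * c) *
            (ENNReal.ofReal ((2*s)^β * cσ'^(1/p)) * ∑' j, W^j) := by
          congr 1
          rw [← ENNReal.tsum_mul_left]
          congr 1; funext j
          rw [ENNReal.ofReal_mul (by positivity), hWdef, ENNReal.ofReal_pow hw0.le]
      _ = G ^ (1/p) * Z := by rw [ENNReal.tsum_geometric, hZdef]; ring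
  have hrβ0 : ENNReal.ofReal (r^β) ≠ 0 := (ENNReal.ofReal_pos.2 (Real.rpow_pos_of_pos hr β)).ne'
  have hm0r0 : (m 0) ^ ((1:ℝ)/p) ≠ 0 :=
    (ENNReal.rpow_pos (pos_iff_ne_zero.2 (hm0 0)) (hmT 0)).ne'
  have hm0rT : (m 0) ^ ((1:ℝ)/p) ≠ ∞ :=
    (ENNReal.rpow_lt_top_of_nonneg (by positivity) (hmT 0)).ne
  have hQof0 : ENNReal.ofReal ((2*s)^β * cσ'^(1/p)) ≠ 0 :=
    (ENNReal.ofReal_pos.2 (by positivity)).ne'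
  have hZ0 : Z ≠ 0 := by
    rw [hZdef]
    refine mul_ne_zero (mul_ne_zero (mul_ne_zero ?_ hc0) hQof0) ?_
    · simp [ENNReal.rpow_eq_zero_iff, hm0 0, hmT 0]
    · simp [hWsubT]
  have hZT : Z ≠ ∞ := by
    rw [hZdef]
    refine ENNReal.mul_ne_top (ENNReal.mul_ne_top (ENNReal.mul_ne_top ?_ hcT)
      ENNReal.ofReal_ne_top) ?_
    · simp [ENNReal.rpow_eq_top_iff, hm0 0, hmT 0]
    · simp [hWsub0]
  have hG2 : (1/2 : ℝ≥0∞) * Z⁻¹ ≤ G ^ (1/p) := by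
    calc (1/2 : ℝ≥0∞) * Z⁻¹ ≤ (G ^ (1/p) * Z) * Z⁻¹ := mul_le_mul_left hsum _
      _ = G ^ (1/p) * (Z * Z⁻¹) := mul_assoc _ _ _
      _ = G ^ (1/p) := by rw [ENNReal.mul_inv_cancel hZ0 hZT, mul_one]
  set Xl : ℝ≥0∞ := U0 * (ENNReal.ofReal (r^β))⁻¹ * (m 0) ^ ((1:ℝ)/p) with hXldef
  have hQsplit : ENNReal.ofReal ((2*s)^β * cσ'^(1/p)) =
      ENNReal.ofReal Q0 * ENNReal.ofReal (r^β) := by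
    have h1 : (2*s)^β = (2/5:ℝ)^β * r^β := by
      rw [show 2*s = (2/5:ℝ)*r by rw [hsdef]; ring, Real.mul_rpow (by norm_num) hr.le]
    rw [h1, hQ0def, ← ENNReal.ofReal_mul (by positivity)]
    congr 1; ring
  have hXZ : Xl * Z = 1/2 := by
    have e1 : (c:ℝ≥0∞)⁻¹ * c = 1 := ENNReal.inv_mul_cancel hc0 hcT
    have e2 : (ENNReal.ofReal Q0)⁻¹ * ENNReal.ofReal Q0 = 1 :=
      ENNReal.inv_mul_cancel (ENNReal.ofReal_pos.2 hQ0).ne' ENNReal.ofReal_ne_top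
    have e3 : (1-W) * (1-W)⁻¹ = 1 := ENNReal.mul_inv_cancel hWsub0 hWsubT
    have e4 : (ENNReal.ofReal (r^β))⁻¹ * ENNReal.ofReal (r^β) = 1 :=
      ENNReal.inv_mul_cancel hrβ0 ENNReal.ofReal_ne_top
    have e5 : (m 0) ^ ((1:ℝ)/p) * ((m 0) ^ ((1:ℝ)/p))⁻¹ = 1 :=
      ENNReal.mul_inv_cancel hm0r0 hm0rT
    calc Xl * Z = (1/2 : ℝ≥0∞) * ((c:ℝ≥0∞)⁻¹ * c) * ((ENNReal.ofReal Q0)⁻¹ * ENNReal.ofReal Q0) *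
          ((1-W) * (1-W)⁻¹) * ((ENNReal.ofReal (r^β))⁻¹ * ENNReal.ofReal (r^β)) *
          ((m 0) ^ ((1:ℝ)/p) * ((m 0) ^ ((1:ℝ)/p))⁻¹) := by
            rw [hXldef, hZdef, hU0def, hQsplit, ENNReal.rpow_neg (m 0) (1/p)]
            ring
      _ = 1/2 := by rw [e1, e2, e3, e4, e5]; simp
  have hXl : Xl ≤ G ^ (1/p) := by
    have : Xl = (1/2 : ℝ≥0∞) * Z⁻¹ := by
      rw [← hXZ, mul_assoc, ENNReal.mul_inv_cancel hZ0 hZT, mul_one]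
    rw [this]; exact hG2
  have hGlow : Xl ^ p ≤ G := by
    calc Xl ^ p ≤ (G ^ (1/p)) ^ p := ENNReal.rpow_le_rpow hXl hp0.le
      _ = G := by rw [← ENNReal.rpow_mul, one_div, inv_mul_cancel₀ hp0.ne', ENNReal.rpow_one]
  have hXlp : Xl ^ p = U0 ^ p * ENNReal.ofReal (r ^ (-(β*p))) * m 0 := by
    rw [hXldef, ENNReal.mul_rpow_of_ne_top (ENNReal.mul_ne_top hU0T (by simp [hrβ0])) hm0rT,
      ENNReal.mul_rpow_of_ne_top hU0T (by simp [hrβ0])]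
    have h1 : ((ENNReal.ofReal (r^β))⁻¹) ^ p = ENNReal.ofReal (r ^ (-(β*p))) := by
      rw [ENNReal.inv_rpow, ENNReal.ofReal_rpow_of_pos (Real.rpow_pos_of_pos hr β),
        ← Real.rpow_mul hr.le, show r ^ (-(β*p)) = (r^(β*p))⁻¹ from Real.rpow_neg hr.le _,
        ENNReal.ofReal_inv_of_pos (Real.rpow_pos_of_pos hr _)]
    have h2 : ((m 0) ^ ((1:ℝ)/p)) ^ p = m 0 := by
      rw [← ENNReal.rpow_mul, one_div, inv_mul_cancel₀ hp0.ne', ENNReal.rpow_one]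
    rw [h1, h2]
  calc Cen * ENNReal.ofReal (r ^ (-(β * p))) * μ (ball x r)
      ≤ Cen * ENNReal.ofReal (r ^ (-(β * p))) * ((c:ℝ≥0∞)^(4:ℕ) * m 0) := by gcongr
    _ = U0 ^ p * (((c:ℝ≥0∞)^(4:ℕ))⁻¹ * (c:ℝ≥0∞)^(4:ℕ)) * ENNReal.ofReal (r ^ (-(β*p))) *
          m 0 := by rw [hCendef]; ring
    _ = Xl ^ p := by
        rw [ENNReal.inv_mul_cancel (pow_ne_zero _ hc0) (pow_ne_top hcT), mul_one, hXlp]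
    _ ≤ G := hGlow
end

section
/- Assume X is connected, let 1 ≤ p < ∞ and 0 < β ≤ 1, let E ⊂ X be closed, x ∈ E, and 0 < r < (1/8) diam(X). Then cap_{β,p}(E ∩ closure of B(x,r), B(x,2r)) ≥ C(c_μ,p) · R_{β,p}(E ∩ closure of B(x,r)), where R_{β,p} is the Riesz (β,p)-capacity. -/
open MeasureTheory Metric Set ENNReal NNReal

/-- The Riesz `(β,p)`-capacity of `F`. -/
noncomputable def rieszCapacity {X : Type*} [MetricSpace X] [MeasurableSpace X]
    (μ : Measure X) (β p : ℝ) (F : Set X) : ℝ≥0∞ :=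
  sInf { t | ∃ f : X → ℝ≥0∞, Measurable f ∧
    (∀ x ∈ F, 1 ≤ rieszPotential μ β f x) ∧ t = ∫⁻ x, f x ^ p ∂μ }

set_option linter.unusedSectionVars false

section Helpers
variable {X : Type*} [MetricSpace X] [MeasurableSpace X]


private lemma aux_Jlow (μ : Measure X) {D : Set X} (hD : MeasurableSet D)
    (g k : X → ℝ≥0∞) (K0 : ℝ≥0∞) (hK0 : K0 ≠ ∞) (hk : ∀ w ∈ D, K0 ≤ k w) :
    K0 * ∫⁻ w in D, g w ∂μ ≤ ∫⁻ w in D, g w * k w ∂μ := by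
  calc K0 * ∫⁻ w in D, g w ∂μ = ∫⁻ w in D, K0 * g w ∂μ :=
        (lintegral_const_mul' _ _ hK0).symm
    _ = ∫⁻ w, D.indicator (fun w => K0 * g w) w ∂μ := (lintegral_indicator hD _).symm
    _ ≤ ∫⁻ w, D.indicator (fun w => g w * k w) w ∂μ := by
        refine lintegral_mono fun w => ?_
        by_cases hw : w ∈ D
        · simp only [Set.indicator_of_mem hw]
          calc K0 * g w = g w * K0 := mul_comm _ _
            _ ≤ g w * k w := mul_le_mul_right (hk w hw) _
        · simp [Set.indicator_of_notMem hw]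
    _ = ∫⁻ w in D, g w * k w ∂μ := lintegral_indicator hD _

private lemma aux_div (K Y m J : ℝ≥0∞) (hK0 : K ≠ 0) (hKt : K ≠ ∞)
    (h : Y * (K * m)⁻¹ ≤ J) : Y * m⁻¹ ≤ K * J := by
  have h1 : (K * m)⁻¹ = K⁻¹ * m⁻¹ := ENNReal.mul_inv (Or.inl hK0) (Or.inl hKt)
  have h2 : K * K⁻¹ = 1 := ENNReal.mul_inv_cancel hK0 hKt
  calc Y * m⁻¹ = (K * K⁻¹) * (Y * m⁻¹) := by rw [h2, one_mul]
    _ = K * (Y * (K⁻¹ * m⁻¹)) := by ring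
    _ = K * (Y * (K * m)⁻¹) := by rw [h1]
    _ ≤ K * J := mul_le_mul_right h _

private lemma aux_select (μ : Measure X) {g : X → ℝ≥0∞} (hg : Measurable g)
    {N D : Set X} (hN : μ N = 0) (hDpos : 0 < μ D) (hDfin : μ D < ∞)
    (ha : ∫⁻ w in D, g w ∂μ ≠ ∞) :
    ∃ w, w ∈ D ∧ w ∉ N ∧ g w ≤ 2 * ((∫⁻ w in D, g w ∂μ) / μ D) := by
  by_contra hcon
  push_neg at hcon
  set a := ∫⁻ w in D, g w ∂μ with ha_def
  set ε := 2 * (a / μ D) with hε_def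
  by_cases h0 : a = 0
  · have h1 : g =ᵐ[μ.restrict D] 0 := (lintegral_eq_zero_iff hg).mp h0
    have hms : MeasurableSet {w | g w ≠ 0} := (hg (measurableSet_singleton 0)).compl
    have h2 : μ ({w | g w ≠ 0} ∩ D) = 0 := by
      have h2' : (μ.restrict D) {w | g w ≠ 0} = 0 := by
        rw [Filter.EventuallyEq, ae_iff] at h1
        simpa using h1
      rwa [Measure.restrict_apply hms] at h2'
    have hsub : D ⊆ N ∪ ({w | g w ≠ 0} ∩ D) := by
      intro v hvD
      by_cases hvN : v ∈ N
      · exact Or.inl hvN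
      · refine Or.inr ⟨?_, hvD⟩
        intro h'
        have h5 : (0:ℝ≥0∞) < g v := by simpa [hε_def, h0] using hcon v hvD hvN
        exact h5.ne' h'
    have : μ D ≤ 0 := by
      calc μ D ≤ μ (N ∪ ({w | g w ≠ 0} ∩ D)) := measure_mono hsub
        _ ≤ μ N + μ ({w | g w ≠ 0} ∩ D) := measure_union_le _ _
        _ = 0 := by rw [hN, h2, add_zero]
    exact absurd (le_antisymm this zero_le) hDpos.ne'
  · have hεtop : ε ≠ ∞ := by
      have h1 : a / μ D ≠ ∞ := (ENNReal.div_lt_top ha hDpos.ne').ne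
      exact ENNReal.mul_ne_top (by norm_num) h1
    have hms : MeasurableSet {w | ε ≤ g w} := measurableSet_le measurable_const hg
    have hmark : ε * μ ({w | ε ≤ g w} ∩ D) ≤ a := by
      have := mul_meas_ge_le_lintegral₀ (μ := μ.restrict D) hg.aemeasurable ε
      rwa [Measure.restrict_apply hms] at this
    have hlt : ε * μ D = 2 * a := by
      rw [hε_def, mul_assoc, ENNReal.div_mul_cancel hDpos.ne' hDfin.ne]
    have haa : a < 2 * a := by
      have h12 : (1:ℝ≥0∞) < 2 := one_lt_two
      have := ENNReal.mul_lt_mul_left h0 ha h12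
      rwa [one_mul] at this
    have hmeas_lt : μ ({w | ε ≤ g w} ∩ D) < μ D := by
      by_contra hge
      push_neg at hge
      have h3 : ε * μ D ≤ ε * μ ({w | ε ≤ g w} ∩ D) := mul_le_mul_right hge _
      have h4 : 2 * a ≤ a := by rw [← hlt]; exact h3.trans hmark
      exact absurd (lt_of_lt_of_le haa h4) (lt_irrefl _)
    have hsub : D ⊆ N ∪ ({w | ε ≤ g w} ∩ D) := by
      intro v hvD
      by_cases hvN : v ∈ N
      · exact Or.inl hvN
      · exact Or.inr ⟨(hcon v hvD hvN).le, hvD⟩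
    have : μ D ≤ μ ({w | ε ≤ g w} ∩ D) := by
      calc μ D ≤ μ (N ∪ ({w | ε ≤ g w} ∩ D)) := measure_mono hsub
        _ ≤ μ N + μ ({w | ε ≤ g w} ∩ D) := measure_union_le _ _
        _ = μ ({w | ε ≤ g w} ∩ D) := by rw [hN, zero_add]
    exact absurd (lt_of_lt_of_le hmeas_lt this) (lt_irrefl _)

private lemma aux_dist [ConnectedSpace X] {r : ℝ} (hr : 0 < r)
    (hab : ∃ a b : X, 8 * r < dist a b) (w : X) (s : ℝ) (hs0 : 0 ≤ s) (hs : s ≤ 4 * r) :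
    ∃ z : X, dist w z = s := by
  obtain ⟨a, b, hab⟩ := hab
  have key : ∀ z0 : X, 4 * r < dist w z0 → ∃ z, dist w z = s := by
    intro z0 h
    have hcont : Continuous (fun z => dist w z) := continuous_const.dist continuous_id
    have hiv := intermediate_value_univ w z0 hcont
    have hmem : s ∈ Icc (dist w w) (dist w z0) := by
      rw [dist_self]
      exact ⟨hs0, le_of_lt (lt_of_le_of_lt hs h)⟩
    obtain ⟨z, hz⟩ := hiv hmem
    exact ⟨z, hz⟩
  rcases le_or_gt (dist w a) (4 * r) with h | h
  · refine key b ?_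
    have h1 := dist_triangle a w b
    have h2 : dist a w = dist w a := dist_comm a w
    linarith
  · exact key a h

set_option maxHeartbeats 1000000 in
private lemma aux_key [BorelSpace X] [ConnectedSpace X]
    (μ : Measure X)
    (hpos : ∀ (x : X) (r : ℝ), 0 < r → 0 < μ (ball x r))
    (hfin : ∀ (x : X) (r : ℝ), μ (ball x r) < ∞)
    (c : ℝ≥0) (hc : 1 < c)
    (hdbl : ∀ (x : X) (r : ℝ), 0 < r → μ (ball x (2 * r)) ≤ (c : ℝ≥0∞) * μ (ball x r))
    (β : ℝ) (hβ : 0 < β) (hβ1 : β ≤ 1)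
    (x y : X) (r : ℝ) (hr : 0 < r)
    (hab : ∃ a b : X, 8 * r < dist a b)
    (hxy : dist x y ≤ r)
    (u : X → ℝ) (κ : ℝ) (hu : IsHolderWith κ β u)
    (hu1 : 1 ≤ u y) (hu0 : ∀ z ∉ ball x (2 * r), u z = 0)
    (g : X → ℝ≥0∞) (hgm : Measurable g) (N : Set X) (hN : μ N = 0)
    (hH : ∀ w ∉ N, ∀ w' ∉ N, ENNReal.ofReal |u w - u w'| ≤
      ENNReal.ofReal (dist w w' ^ β) * (g w + g w')) :
    1 ≤ ((240 : ℝ≥0∞) * (c : ℝ≥0∞) ^ 5) * rieszPotential μ β g y := by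
  have hc0 : (c : ℝ≥0∞) ≠ 0 := by
    exact_mod_cast (lt_trans zero_lt_one hc).ne'
  have hc1 : (1 : ℝ≥0∞) ≤ (c : ℝ≥0∞) := by exact_mod_cast hc.le
  have hcfin : (c : ℝ≥0∞) ≠ ∞ := ENNReal.coe_ne_top
  by_cases hItop : rieszPotential μ β g y = ∞
  · rw [hItop, ENNReal.mul_top (mul_ne_zero (by norm_num) (pow_ne_zero 5 hc0))]
    exact le_top
  -- doubling iterated
  have hdbl2 : ∀ (z : X) (s : ℝ) (k : ℕ), 0 < s →
      μ (ball z (2 ^ k * s)) ≤ (c : ℝ≥0∞) ^ k * μ (ball z s) := by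
    intro z s k hs
    induction k with
    | zero => simp
    | succ k ih =>
      have he : (2:ℝ) ^ (k+1) * s = 2 * ((2:ℝ) ^ k * s) := by ring
      rw [he]
      calc μ (ball z (2 * ((2:ℝ) ^ k * s))) ≤ (c:ℝ≥0∞) * μ (ball z ((2:ℝ) ^ k * s)) :=
            hdbl z _ (by positivity)
        _ ≤ (c:ℝ≥0∞) * ((c:ℝ≥0∞) ^ k * μ (ball z s)) := mul_le_mul_right ih _
        _ = (c:ℝ≥0∞) ^ (k+1) * μ (ball z s) := by ring
  -- radii
  set ρ : ℕ → ℝ := fun i => 4 * r * (1/2) ^ i with hρ_def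
  have hρpos : ∀ i, 0 < ρ i := fun i => by positivity
  have hρle : ∀ i, ρ i ≤ 4 * r := by
    intro i
    have h1 : ((1:ℝ)/2) ^ i ≤ 1 := pow_le_one₀ (by norm_num) (by norm_num)
    have := hρpos i
    calc ρ i = 4 * r * (1/2)^i := rfl
      _ ≤ 4 * r * 1 := by nlinarith
      _ = 4 * r := by ring
  have hρsucc : ∀ i, ρ i = 2 * ρ (i+1) := by
    intro i; show 4*r*(1/2)^i = 2*(4*r*(1/2)^(i+1)); rw [pow_succ]; ring
  have hanti : ∀ i j, i ≤ j → ρ j ≤ ρ i := by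
    intro i j hij
    have h1 : ((1:ℝ)/2) ^ j ≤ (1/2) ^ i :=
      pow_le_pow_of_le_one (by norm_num) (by norm_num) hij
    have hr4 : (0:ℝ) ≤ 4 * r := by linarith
    calc ρ j = 4*r*(1/2)^j := rfl
      _ ≤ 4*r*(1/2)^i := by nlinarith
  -- annuli
  set D : ℕ → Set X := fun i => {w | ρ (i+1) ≤ dist y w ∧ dist y w < ρ i} with hD_def
  have hDm : ∀ i, MeasurableSet (D i) := by
    intro i
    have : D i = (fun w => dist y w) ⁻¹' (Set.Ico (ρ (i+1)) (ρ i)) := rfl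
    rw [this]
    exact (continuous_const.dist continuous_id).measurable measurableSet_Ico
  have hDsub : ∀ i, D i ⊆ ball y (ρ i) := by
    intro i v hv
    rw [mem_ball, dist_comm]
    exact hv.2
  have hDdisj : ∀ i j, i < j → ∀ v, v ∈ D i → v ∉ D j := by
    intro i j hij v hvi hvj
    have h1 : ρ j ≤ ρ (i+1) := hanti (i+1) j hij
    have h2 := hvi.1
    have h3 := hvj.2
    linarith
  -- annulus centers
  have hzex : ∀ i : ℕ, ∃ z, dist y z = 3/2 * ρ (i+1) := by
    intro i
    refine aux_dist hr hab y _ (by have := hρpos (i+1); linarith) ?_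
    have h1 : ρ (i+1) ≤ ρ 1 := hanti 1 (i+1) (by omega)
    have h1b : ρ 1 = 2*r := by show 4*r*(1/2)^1 = 2*r; ring
    have h2 := hρpos (i+1)
    linarith
  choose z hz using hzex
  have hball_sub : ∀ i, ball (z i) (ρ (i+1) / 2) ⊆ D i := by
    intro i v hv
    rw [mem_ball] at hv
    have h1 : dist y (z i) ≤ dist y v + dist v (z i) := dist_triangle y v (z i)
    have h2 : dist y v ≤ dist y (z i) + dist (z i) v := dist_triangle y (z i) v
    have h3 : dist (z i) v = dist v (z i) := dist_comm _ _
    have h4 := hz i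
    have h5 := hρsucc i
    have h6 := hρpos i
    have h7 := hρpos (i+1)
    refine ⟨by linarith, by linarith⟩
  have hmpos : ∀ i, 0 < μ (D i) := by
    intro i
    exact lt_of_lt_of_le (hpos (z i) _ (by have := hρpos (i+1); positivity))
      (measure_mono (hball_sub i))
  have hmfin : ∀ i, μ (D i) < ∞ :=
    fun i => lt_of_le_of_lt (measure_mono (hDsub i)) (hfin y (ρ i))
  have hdbl3 : ∀ i, μ (ball y (ρ i)) ≤ (c:ℝ≥0∞) ^ 3 * μ (D i) := by
    intro i
    have hsub : ball y (ρ i) ⊆ ball (z i) (2 ^ 3 * (ρ (i+1) / 2)) := by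
      intro v hv
      rw [mem_ball] at hv ⊢
      have h1 : dist v (z i) ≤ dist v y + dist y (z i) := dist_triangle v y (z i)
      have h2 : dist v y = dist y v := dist_comm _ _
      have h3 := hz i
      have h4 := hρsucc i
      have h5 := hρpos (i+1)
      have h6 : dist y v = dist v y := dist_comm _ _
      nlinarith [hv]
    calc μ (ball y (ρ i)) ≤ μ (ball (z i) (2 ^ 3 * (ρ (i+1)/2))) := measure_mono hsub
      _ ≤ (c:ℝ≥0∞) ^ 3 * μ (ball (z i) (ρ (i+1)/2)) :=
          hdbl2 (z i) _ 3 (by have := hρpos (i+1); positivity)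
      _ ≤ (c:ℝ≥0∞) ^ 3 * μ (D i) := mul_le_mul_right (measure_mono (hball_sub i)) _
  -- integrals
  set h : X → ℝ≥0∞ := fun w => g w * rieszKernel μ β y w with hh_def
  have hIeq : rieszPotential μ β g y = ∫⁻ w, h w ∂μ := rfl
  set a : ℕ → ℝ≥0∞ := fun i => ∫⁻ w in D i, g w ∂μ with ha_def
  set J : ℕ → ℝ≥0∞ := fun i => ∫⁻ w in D i, h w ∂μ with hJ_def
  have hJle : ∀ i, J i ≤ rieszPotential μ β g y := by
    intro i; rw [hIeq]; exact setLIntegral_le_lintegral _ _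
  have hKone : ∀ i : ℕ, ENNReal.ofReal (ρ (i+1) ^ β) / μ (ball y (ρ i)) ≠ ∞ :=
    fun i => (ENNReal.div_lt_top ENNReal.ofReal_ne_top (hpos y (ρ i) (hρpos i)).ne').ne
  have hker : ∀ i, ∀ w ∈ D i,
      ENNReal.ofReal (ρ (i+1) ^ β) / μ (ball y (ρ i)) ≤ rieszKernel μ β y w := by
    intro i w hw
    refine ENNReal.div_le_div (ENNReal.ofReal_le_ofReal
      (Real.rpow_le_rpow (hρpos (i+1)).le hw.1 hβ.le)) ?_
    exact measure_mono (ball_subset_ball hw.2.le)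
  have hJlow : ∀ i, (ENNReal.ofReal (ρ (i+1) ^ β) / μ (ball y (ρ i))) * a i ≤ J i :=
    fun i => aux_Jlow μ (hDm i) g (rieszKernel μ β y) _ (hKone i) (hker i)
  have hnum0 : ∀ i : ℕ, ENNReal.ofReal (ρ i ^ β) ≠ 0 :=
    fun i => (ENNReal.ofReal_pos.mpr (Real.rpow_pos_of_pos (hρpos i) β)).ne'
  have hafin : ∀ i, a i ≠ ∞ := by
    intro i hatop
    apply hItop
    have hK0ne : ENNReal.ofReal (ρ (i+1) ^ β) / μ (ball y (ρ i)) ≠ 0 := by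
      rw [div_eq_mul_inv]
      exact mul_ne_zero (hnum0 (i+1)) (ENNReal.inv_ne_zero.mpr (hfin y (ρ i)).ne)
    have h1 := hJlow i
    rw [hatop, ENNReal.mul_top hK0ne] at h1
    exact top_le_iff.mp (le_trans (le_trans h1 (hJle i)) le_rfl)
  -- P bound
  have hρβ2 : ∀ i : ℕ, ENNReal.ofReal (ρ i ^ β) ≤ 2 * ENNReal.ofReal (ρ (i+1) ^ β) := by
    intro i
    have h1 : ρ i ^ β = 2 ^ β * ρ (i+1) ^ β := by
      rw [hρsucc i, Real.mul_rpow (by norm_num) (hρpos (i+1)).le]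
    have h2 : (2:ℝ) ^ β ≤ 2 := by
      have := Real.rpow_le_rpow_of_exponent_le one_le_two hβ1
      rwa [Real.rpow_one] at this
    have h3 : ρ i ^ β ≤ 2 * ρ (i+1) ^ β := by
      rw [h1]
      have := Real.rpow_nonneg (hρpos (i+1)).le β
      nlinarith
    calc ENNReal.ofReal (ρ i ^ β) ≤ ENNReal.ofReal (2 * ρ (i+1) ^ β) :=
          ENNReal.ofReal_le_ofReal h3
      _ = ENNReal.ofReal 2 * ENNReal.ofReal (ρ (i+1) ^ β) := ENNReal.ofReal_mul (by norm_num)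
      _ = 2 * ENNReal.ofReal (ρ (i+1) ^ β) := by norm_num
  have hc3 : ((c:ℝ≥0∞) ^ 3) ≠ 0 := pow_ne_zero _ hc0
  have hc3t : ((c:ℝ≥0∞) ^ 3) ≠ ∞ := ENNReal.pow_ne_top hcfin
  have hP : ∀ i, ENNReal.ofReal (ρ i ^ β) * (a i / μ (D i)) ≤ 2 * (c:ℝ≥0∞) ^ 3 * J i := by
    intro i
    have h1 : (ENNReal.ofReal (ρ (i+1) ^ β) * a i) * ((c:ℝ≥0∞) ^ 3 * μ (D i))⁻¹ ≤ J i := by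
      refine le_trans ?_ (hJlow i)
      have he : (ENNReal.ofReal (ρ (i+1) ^ β) / μ (ball y (ρ i))) * a i
          = (ENNReal.ofReal (ρ (i+1) ^ β) * a i) * (μ (ball y (ρ i)))⁻¹ := by
        rw [div_eq_mul_inv]; ring
      rw [he]
      exact mul_le_mul_right (ENNReal.inv_le_inv.mpr (hdbl3 i)) _
    have h2 : (ENNReal.ofReal (ρ (i+1) ^ β) * a i) * (μ (D i))⁻¹ ≤ (c:ℝ≥0∞) ^ 3 * J i :=
      aux_div _ _ _ _ hc3 hc3t h1
    calc ENNReal.ofReal (ρ i ^ β) * (a i / μ (D i))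
        ≤ (2 * ENNReal.ofReal (ρ (i+1) ^ β)) * (a i / μ (D i)) :=
          mul_le_mul_left (hρβ2 i) _
      _ = 2 * ((ENNReal.ofReal (ρ (i+1) ^ β) * a i) * (μ (D i))⁻¹) := by
          rw [div_eq_mul_inv]; ring
      _ ≤ 2 * ((c:ℝ≥0∞) ^ 3 * J i) := mul_le_mul_right h2 _
      _ = 2 * (c:ℝ≥0∞) ^ 3 * J i := by ring
  -- point selection in annuli
  have hsel : ∀ i, ∃ w, w ∈ D i ∧ w ∉ N ∧ g w ≤ 2 * (a i / μ (D i)) :=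
    fun i => aux_select μ hgm hN (hmpos i) (hmfin i) (hafin i)
  choose w hwD hwN hwg using hsel
  -- far ball
  obtain ⟨z', hz'⟩ := aux_dist hr hab x (3 * r) (by linarith) (by linarith)
  have hm'pos : 0 < μ (ball z' (r/2)) := hpos z' _ (by linarith)
  have hm'fin : μ (ball z' (r/2)) < ∞ := hfin _ _
  have hu0' : ∀ v ∈ ball z' (r/2), u v = 0 := by
    intro v hv
    apply hu0
    rw [mem_ball] at hv ⊢
    intro hmem
    have h1 : dist x z' ≤ dist x v + dist v z' := dist_triangle x v z'
    have h2 : dist x v = dist v x := dist_comm _ _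
    linarith
  have hyv : ∀ v ∈ ball z' (r/2), r ≤ dist y v ∧ dist y v < 5 * r := by
    intro v hv
    rw [mem_ball] at hv
    have h1 : dist x z' ≤ dist x y + dist y v + dist v z' := dist_triangle4 x y v z'
    have h2 : dist y v ≤ dist y x + dist x z' + dist z' v := dist_triangle4 y x z' v
    have h3 : dist y x = dist x y := dist_comm _ _
    have h4 : dist z' v = dist v z' := dist_comm _ _
    constructor <;> linarith
  set a' : ℝ≥0∞ := ∫⁻ w' in ball z' (r/2), g w' ∂μ with ha'_def
  set J' : ℝ≥0∞ := ∫⁻ w' in ball z' (r/2), h w' ∂μ with hJ'_def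
  have hJ'le : J' ≤ rieszPotential μ β g y := by
    rw [hIeq]; exact setLIntegral_le_lintegral _ _
  have hK'ne : ENNReal.ofReal (r ^ β) / μ (ball y (5*r)) ≠ ∞ :=
    (ENNReal.div_lt_top ENNReal.ofReal_ne_top (hpos y (5*r) (by linarith)).ne').ne
  have hker' : ∀ v ∈ ball z' (r/2),
      ENNReal.ofReal (r ^ β) / μ (ball y (5*r)) ≤ rieszKernel μ β y v := by
    intro v hv
    obtain ⟨hlow, hhigh⟩ := hyv v hv
    refine ENNReal.div_le_div (ENNReal.ofReal_le_ofReal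
      (Real.rpow_le_rpow hr.le hlow hβ.le)) ?_
    exact measure_mono (ball_subset_ball hhigh.le)
  have hJ'low : (ENNReal.ofReal (r ^ β) / μ (ball y (5*r))) * a' ≤ J' :=
    aux_Jlow μ measurableSet_ball g (rieszKernel μ β y) _ hK'ne hker'
  have hnum' : ENNReal.ofReal (r ^ β) ≠ 0 :=
    (ENNReal.ofReal_pos.mpr (Real.rpow_pos_of_pos hr β)).ne'
  have ha'fin : a' ≠ ∞ := by
    intro hatop
    apply hItop
    have hK0ne : ENNReal.ofReal (r ^ β) / μ (ball y (5*r)) ≠ 0 := by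
      rw [div_eq_mul_inv]
      exact mul_ne_zero hnum' (ENNReal.inv_ne_zero.mpr (hfin y (5*r)).ne)
    have h1 := hJ'low
    rw [hatop, ENNReal.mul_top hK0ne] at h1
    exact top_le_iff.mp (le_trans h1 hJ'le)
  have hdbl5 : μ (ball y (5*r)) ≤ (c:ℝ≥0∞) ^ 5 * μ (ball z' (r/2)) := by
    have hsub : ball y (5*r) ⊆ ball z' (2 ^ 5 * (r/2)) := by
      intro v hv
      rw [mem_ball] at hv ⊢
      have h1 : dist v z' ≤ dist v y + dist y x + dist x z' := dist_triangle4 v y x z'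
      have h2 : dist v y = dist y v := dist_comm _ _
      have h3 : dist y x = dist x y := dist_comm _ _
      nlinarith [hv]
    calc μ (ball y (5*r)) ≤ μ (ball z' (2 ^ 5 * (r/2))) := measure_mono hsub
      _ ≤ (c:ℝ≥0∞) ^ 5 * μ (ball z' (r/2)) := hdbl2 z' _ 5 (by linarith)
  have hc5 : ((c:ℝ≥0∞) ^ 5) ≠ 0 := pow_ne_zero _ hc0
  have hc5t : ((c:ℝ≥0∞) ^ 5) ≠ ∞ := ENNReal.pow_ne_top hcfin
  have hP' : ENNReal.ofReal (r ^ β) * (a' / μ (ball z' (r/2))) ≤ (c:ℝ≥0∞) ^ 5 * J' := by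
    have h1 : (ENNReal.ofReal (r ^ β) * a') * ((c:ℝ≥0∞) ^ 5 * μ (ball z' (r/2)))⁻¹ ≤ J' := by
      refine le_trans ?_ hJ'low
      have he : (ENNReal.ofReal (r ^ β) / μ (ball y (5*r))) * a'
          = (ENNReal.ofReal (r ^ β) * a') * (μ (ball y (5*r)))⁻¹ := by
        rw [div_eq_mul_inv]; ring
      rw [he]
      exact mul_le_mul_right (ENNReal.inv_le_inv.mpr hdbl5) _
    have h2 := aux_div _ _ _ _ hc5 hc5t h1
    rw [div_eq_mul_inv, ← mul_assoc]
    exact h2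
  obtain ⟨v', hv'B, hv'N, hv'g⟩ :=
    aux_select μ hgm hN hm'pos hm'fin ha'fin
  -- κ nonneg
  have hκ0 : 0 ≤ κ := by
    obtain ⟨A, B, hAB⟩ := hab
    by_contra hneg
    push_neg at hneg
    have h1 := hu A B
    have h2 : 0 < dist A B ^ β := Real.rpow_pos_of_pos (by linarith) β
    nlinarith [abs_nonneg (u A - u B)]
  -- choose n
  have hq1 : (1/2:ℝ) ^ β < 1 := Real.rpow_lt_one (by norm_num) (by norm_num) hβ
  have hq0 : (0:ℝ) < (1/2:ℝ) ^ β := Real.rpow_pos_of_pos (by norm_num) β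
  have hρβ : ∀ i : ℕ, ρ i ^ β = (4*r) ^ β * ((1/2:ℝ) ^ β) ^ i := by
    intro i
    have e1 : ρ i = 4*r*(1/2)^i := rfl
    rw [e1, Real.mul_rpow (by linarith) (by positivity)]
    congr 1
    rw [← Real.rpow_natCast (1/2:ℝ) i, ← Real.rpow_natCast ((1/2:ℝ) ^ β) i,
      ← Real.rpow_mul (by norm_num), ← Real.rpow_mul (by norm_num)]
    ring_nf
  have hKnn : 0 ≤ κ * (4*r) ^ β := mul_nonneg hκ0 (Real.rpow_nonneg (by linarith) β)
  obtain ⟨n, hn⟩ := exists_pow_lt_of_lt_one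
    (x := 1/(2*(κ * (4*r) ^ β + 1))) (by positivity) hq1
  have hn2 : κ * ρ n ^ β ≤ 1/2 := by
    rw [hρβ n]
    have hq : (0:ℝ) ≤ ((1/2:ℝ) ^ β) ^ n := by positivity
    have hKp : (0:ℝ) < κ * (4*r) ^ β + 1 := by linarith
    have h1 : (κ * (4*r) ^ β + 1) * ((1/2:ℝ) ^ β) ^ n < (κ * (4*r) ^ β + 1) * (1/(2*(κ * (4*r) ^ β + 1))) :=
      mul_lt_mul_of_pos_left hn hKp
    have h2 : (κ * (4*r) ^ β + 1) * (1/(2*(κ * (4*r) ^ β + 1))) = 1/2 := by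
      field_simp
    nlinarith
  -- the chain
  set b : ℕ → ℝ := fun j => Nat.casesOn j (u v') (fun i => u (w i)) with hb_def
  have hb0 : b 0 = 0 := hu0' v' hv'B
  have hreal : 1 ≤ 1/2 + ∑ i ∈ Finset.range (n+1), |b (i+1) - b i| := by
    have hwn : dist y (w n) < ρ n := by
      have := (hwD n).2; exact this
    have h1 : |u y - u (w n)| ≤ 1/2 := by
      calc |u y - u (w n)| ≤ κ * dist y (w n) ^ β := hu y (w n)
        _ ≤ κ * ρ n ^ β := by
            have := Real.rpow_le_rpow dist_nonneg hwn.le hβ.le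
            nlinarith
        _ ≤ 1/2 := hn2
    have h2 : |b (n+1) - b 0| ≤ ∑ i ∈ Finset.range (n+1), |b (i+1) - b i| := by
      calc |b (n+1) - b 0| = |∑ i ∈ Finset.range (n+1), (b (i+1) - b i)| := by
            rw [Finset.sum_range_sub]
        _ ≤ ∑ i ∈ Finset.range (n+1), |b (i+1) - b i| := Finset.abs_sum_le_sum_abs _ _
    have h3 : u y = (u y - u (w n)) + (b (n+1) - b 0) := by
      have : b (n+1) = u (w n) := rfl
      rw [this, hb0]; ring
    have h4 : u y ≤ |u y - u (w n)| + |b (n+1) - b 0| := by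
      calc u y = (u y - u (w n)) + (b (n+1) - b 0) := h3
        _ ≤ |u y - u (w n)| + |b (n+1) - b 0| := add_le_add (le_abs_self _) (le_abs_self _)
    linarith
  have hEsum : ENNReal.ofReal (1/2) ≤
      ∑ i ∈ Finset.range (n+1), ENNReal.ofReal |b (i+1) - b i| := by
    rw [← ENNReal.ofReal_sum_of_nonneg (fun i _ => abs_nonneg _)]
    exact ENNReal.ofReal_le_ofReal (by linarith)
  -- term bounds
  have hterm0 : ENNReal.ofReal |b 1 - b 0| ≤
      64 * (c:ℝ≥0∞) ^ 3 * J 0 + 32 * (c:ℝ≥0∞) ^ 5 * J' := by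
    have e1 : b 1 - b 0 = u (w 0) - u v' := rfl
    have hd : dist (w 0) v' ≤ 16 * r := by
      have h1 : dist (w 0) v' ≤ dist (w 0) y + dist y v' := dist_triangle _ y _
      have h2 : dist (w 0) y = dist y (w 0) := dist_comm _ _
      have h3 : dist y (w 0) < ρ 0 := (hwD 0).2
      have h4 : ρ 0 = 4 * r := by rw [hρ_def]; norm_num
      have h5 := (hyv v' hv'B).2
      linarith
    have hd16 : ENNReal.ofReal (dist (w 0) v' ^ β) ≤ 16 * ENNReal.ofReal (r ^ β) := by
      have h1 : dist (w 0) v' ^ β ≤ (16*r) ^ β := Real.rpow_le_rpow dist_nonneg hd hβ.le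
      have h2 : (16*r) ^ β = 16 ^ β * r ^ β := Real.mul_rpow (by norm_num) hr.le
      have h3 : (16:ℝ) ^ β ≤ 16 := by
        have := Real.rpow_le_rpow_of_exponent_le (by norm_num : (1:ℝ) ≤ 16) hβ1
        rwa [Real.rpow_one] at this
      have h4 : dist (w 0) v' ^ β ≤ 16 * r ^ β := by
        have := Real.rpow_nonneg hr.le β
        nlinarith
      calc ENNReal.ofReal (dist (w 0) v' ^ β) ≤ ENNReal.ofReal (16 * r ^ β) :=
            ENNReal.ofReal_le_ofReal h4
        _ = ENNReal.ofReal 16 * ENNReal.ofReal (r ^ β) := ENNReal.ofReal_mul (by norm_num)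
        _ = 16 * ENNReal.ofReal (r ^ β) := by norm_num
    have hrρ0 : ENNReal.ofReal (r ^ β) ≤ ENNReal.ofReal (ρ 0 ^ β) := by
      have hρ04 : ρ 0 = 4*r := by simp [hρ_def]
      exact ENNReal.ofReal_le_ofReal
        (Real.rpow_le_rpow hr.le (by rw [hρ04]; linarith) hβ.le)
    calc ENNReal.ofReal |b 1 - b 0|
        ≤ ENNReal.ofReal (dist (w 0) v' ^ β) * (g (w 0) + g v') := by
          rw [e1]; exact hH (w 0) (hwN 0) v' hv'N
      _ ≤ (16 * ENNReal.ofReal (r ^ β)) * (2 * (a 0 / μ (D 0)) + 2 * (a' / μ (ball z' (r/2)))) := by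
          exact mul_le_mul' hd16 (add_le_add (hwg 0) hv'g)
      _ = 32 * (ENNReal.ofReal (r ^ β) * (a 0 / μ (D 0)))
          + 32 * (ENNReal.ofReal (r ^ β) * (a' / μ (ball z' (r/2)))) := by ring
      _ ≤ 32 * (ENNReal.ofReal (ρ 0 ^ β) * (a 0 / μ (D 0))) + 32 * ((c:ℝ≥0∞) ^ 5 * J') :=
          add_le_add (mul_le_mul_right (mul_le_mul_left hrρ0 _) _)
            (mul_le_mul_right hP' _)
      _ ≤ 32 * (2 * (c:ℝ≥0∞) ^ 3 * J 0) + 32 * ((c:ℝ≥0∞) ^ 5 * J') :=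
          add_le_add (mul_le_mul_right (hP 0) _) le_rfl
      _ = 64 * (c:ℝ≥0∞) ^ 3 * J 0 + 32 * (c:ℝ≥0∞) ^ 5 * J' := by ring
  have hterm : ∀ i : ℕ, ENNReal.ofReal |b (i+2) - b (i+1)| ≤
      8 * (c:ℝ≥0∞) ^ 3 * J i + 16 * (c:ℝ≥0∞) ^ 3 * J (i+1) := by
    intro i
    have e1 : b (i+2) - b (i+1) = u (w (i+1)) - u (w i) := rfl
    have hd : dist (w (i+1)) (w i) ≤ 2 * ρ i := by
      have h1 : dist (w (i+1)) (w i) ≤ dist (w (i+1)) y + dist y (w i) := dist_triangle _ y _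
      have h2 : dist (w (i+1)) y = dist y (w (i+1)) := dist_comm _ _
      have h3 : dist y (w (i+1)) < ρ (i+1) := (hwD (i+1)).2
      have h4 : dist y (w i) < ρ i := (hwD i).2
      have h5 := hρsucc i
      have h6 := hρpos i
      have h7 := hρpos (i+1)
      linarith
    have hd2 : ENNReal.ofReal (dist (w (i+1)) (w i) ^ β) ≤ 2 * ENNReal.ofReal (ρ i ^ β) := by
      have h1 : dist (w (i+1)) (w i) ^ β ≤ (2 * ρ i) ^ β :=
        Real.rpow_le_rpow dist_nonneg hd hβ.le
      have h2 : (2 * ρ i) ^ β = 2 ^ β * ρ i ^ β := Real.mul_rpow (by norm_num) (hρpos i).le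
      have h3 : (2:ℝ) ^ β ≤ 2 := by
        have := Real.rpow_le_rpow_of_exponent_le one_le_two hβ1
        rwa [Real.rpow_one] at this
      have h4 : dist (w (i+1)) (w i) ^ β ≤ 2 * ρ i ^ β := by
        have := Real.rpow_nonneg (hρpos i).le β
        nlinarith
      calc ENNReal.ofReal (dist (w (i+1)) (w i) ^ β) ≤ ENNReal.ofReal (2 * ρ i ^ β) :=
            ENNReal.ofReal_le_ofReal h4
        _ = ENNReal.ofReal 2 * ENNReal.ofReal (ρ i ^ β) := ENNReal.ofReal_mul (by norm_num)
        _ = 2 * ENNReal.ofReal (ρ i ^ β) := by norm_num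
    calc ENNReal.ofReal |b (i+2) - b (i+1)|
        ≤ ENNReal.ofReal (dist (w (i+1)) (w i) ^ β) * (g (w (i+1)) + g (w i)) := by
          rw [e1]; exact hH (w (i+1)) (hwN (i+1)) (w i) (hwN i)
      _ ≤ (2 * ENNReal.ofReal (ρ i ^ β)) *
          (2 * (a (i+1) / μ (D (i+1))) + 2 * (a i / μ (D i))) :=
          mul_le_mul' hd2 (add_le_add (hwg (i+1)) (hwg i))
      _ = 4 * (ENNReal.ofReal (ρ i ^ β) * (a i / μ (D i)))
          + 4 * (ENNReal.ofReal (ρ i ^ β) * (a (i+1) / μ (D (i+1)))) := by ring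
      _ ≤ 4 * (2 * (c:ℝ≥0∞) ^ 3 * J i)
          + 4 * ((2 * ENNReal.ofReal (ρ (i+1) ^ β)) * (a (i+1) / μ (D (i+1)))) :=
          add_le_add (mul_le_mul_right (hP i) _)
            (mul_le_mul_right (mul_le_mul_left (hρβ2 i) _) _)
      _ = 4 * (2 * (c:ℝ≥0∞) ^ 3 * J i)
          + 8 * (ENNReal.ofReal (ρ (i+1) ^ β) * (a (i+1) / μ (D (i+1)))) := by ring
      _ ≤ 4 * (2 * (c:ℝ≥0∞) ^ 3 * J i) + 8 * (2 * (c:ℝ≥0∞) ^ 3 * J (i+1)) :=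
          add_le_add le_rfl (mul_le_mul_right (hP (i+1)) _)
      _ = 8 * (c:ℝ≥0∞) ^ 3 * J i + 16 * (c:ℝ≥0∞) ^ 3 * J (i+1) := by ring
  -- sum of J's
  set SJ : ℝ≥0∞ := ∑ i ∈ Finset.range (n+1), J i with hSJ_def
  have hSJ : SJ ≤ rieszPotential μ β g y := by
    have hdisj : (↑(Finset.range (n+1)) : Set ℕ).PairwiseDisjoint D := by
      intro i _ j _ hij
      rcases hij.lt_or_gt with hlt | hlt
      · exact Set.disjoint_left.mpr (fun v hv => hDdisj i j hlt v hv)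
      · exact Set.disjoint_right.mpr (fun v hv => hDdisj j i hlt v hv)
    have := lintegral_biUnion_finset (μ := μ) hdisj (fun i _ => hDm i) h
    rw [hSJ_def, ← this, hIeq]
    exact setLIntegral_le_lintegral _ _
  have hsum1 : ∑ i ∈ Finset.range n, J i ≤ SJ := by
    apply Finset.sum_le_sum_of_subset
    exact Finset.range_subset_range.mpr (by omega)
  have hsum2 : ∑ i ∈ Finset.range n, J (i+1) ≤ SJ := by
    rw [hSJ_def, Finset.sum_range_succ' J n]
    exact le_self_add
  have hJ0 : J 0 ≤ SJ := by
    apply Finset.single_le_sum (f := J) (fun i _ => zero_le)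
    simp
  -- assemble
  set I := rieszPotential μ β g y with hI_def
  have hc35 : (c:ℝ≥0∞) ^ 3 ≤ (c:ℝ≥0∞) ^ 5 := pow_le_pow_right₀ hc1 (by omega)
  have htotal : ENNReal.ofReal (1/2) ≤ 120 * (c:ℝ≥0∞) ^ 5 * I := by
    calc ENNReal.ofReal (1/2) ≤ ∑ i ∈ Finset.range (n+1), ENNReal.ofReal |b (i+1) - b i| := hEsum
      _ = ∑ i ∈ Finset.range n, ENNReal.ofReal |b (i+2) - b (i+1)| + ENNReal.ofReal |b 1 - b 0| := by
          rw [Finset.sum_range_succ' (fun i => ENNReal.ofReal |b (i+1) - b i|) n]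
          norm_num
      _ ≤ ∑ i ∈ Finset.range n, (8 * (c:ℝ≥0∞) ^ 3 * J i + 16 * (c:ℝ≥0∞) ^ 3 * J (i+1))
          + (64 * (c:ℝ≥0∞) ^ 3 * J 0 + 32 * (c:ℝ≥0∞) ^ 5 * J') :=
          add_le_add (Finset.sum_le_sum (fun i _ => hterm i)) hterm0
      _ = 8 * (c:ℝ≥0∞) ^ 3 * (∑ i ∈ Finset.range n, J i)
          + 16 * (c:ℝ≥0∞) ^ 3 * (∑ i ∈ Finset.range n, J (i+1))
          + 64 * (c:ℝ≥0∞) ^ 3 * J 0 + 32 * (c:ℝ≥0∞) ^ 5 * J' := by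
          rw [Finset.sum_add_distrib, ← Finset.mul_sum, ← Finset.mul_sum]; ring
      _ ≤ 8 * (c:ℝ≥0∞) ^ 3 * SJ + 16 * (c:ℝ≥0∞) ^ 3 * SJ
          + 64 * (c:ℝ≥0∞) ^ 3 * SJ + 32 * (c:ℝ≥0∞) ^ 5 * J' :=
          add_le_add (add_le_add (add_le_add
            (mul_le_mul_right hsum1 _) (mul_le_mul_right hsum2 _))
            (mul_le_mul_right hJ0 _)) le_rfl
      _ ≤ 8 * (c:ℝ≥0∞) ^ 5 * I + 16 * (c:ℝ≥0∞) ^ 5 * I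
          + 64 * (c:ℝ≥0∞) ^ 5 * I + 32 * (c:ℝ≥0∞) ^ 5 * I :=
          add_le_add (add_le_add (add_le_add
            (mul_le_mul' (mul_le_mul_right hc35 _) hSJ)
            (mul_le_mul' (mul_le_mul_right hc35 _) hSJ))
            (mul_le_mul' (mul_le_mul_right hc35 _) hSJ))
            (mul_le_mul' le_rfl hJ'le)
      _ = 120 * (c:ℝ≥0∞) ^ 5 * I := by ring
  have hhalf : ENNReal.ofReal (1/2:ℝ) = (2:ℝ≥0∞)⁻¹ := by
    rw [ENNReal.ofReal_div_of_pos (by norm_num)]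
    norm_num
  calc (1:ℝ≥0∞) = 2 * (2:ℝ≥0∞)⁻¹ := by
        rw [ENNReal.mul_inv_cancel (by norm_num) (by norm_num)]
    _ = 2 * ENNReal.ofReal (1/2) := by rw [hhalf]
    _ ≤ 2 * (120 * (c:ℝ≥0∞) ^ 5 * I) := mul_le_mul_right htotal _
    _ = (240 * (c:ℝ≥0∞) ^ 5) * I := by ring

end Helpers

theorem stmt10 {X : Type*} [MetricSpace X] [MeasurableSpace X] [BorelSpace X]
    [Nontrivial X] [ConnectedSpace X]
    (μ : Measure X)
    (hpos : ∀ (x : X) (r : ℝ), 0 < r → 0 < μ (ball x r))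
    (hfin : ∀ (x : X) (r : ℝ), μ (ball x r) < ∞)
    (c : ℝ≥0) (hc : 1 < c)
    (hdbl : ∀ (x : X) (r : ℝ), 0 < r → μ (ball x (2 * r)) ≤ (c : ℝ≥0∞) * μ (ball x r))
    (p β : ℝ) (hp : 1 ≤ p) (hβ : 0 < β) (hβ1 : β ≤ 1) :
    ∃ C : ℝ≥0, 0 < C ∧
      ∀ (E : Set X) (x : X) (r : ℝ), IsClosed E → x ∈ E → 0 < r →
        ENNReal.ofReal (8 * r) < EMetric.diam (univ : Set X) →
        (C : ℝ≥0∞) * rieszCapacity μ β p (E ∩ closure (ball x r)) ≤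
          hajlaszCapacity μ β p (E ∩ closure (ball x r)) (ball x (2 * r)) := by
  have hcpos : (0:ℝ≥0) < c := lt_trans zero_lt_one hc
  set Kc : ℝ≥0 := 240 * c ^ 5 with hKc_def
  have hKc0 : Kc ≠ 0 := by positivity
  have hKcast : ((Kc : ℝ≥0∞)) = (240 : ℝ≥0∞) * (c : ℝ≥0∞) ^ 5 := by
    rw [hKc_def]; push_cast; ring
  have hKp0 : Kc ^ p ≠ 0 := (NNReal.rpow_pos (pos_iff_ne_zero.mpr hKc0)).ne'
  refine ⟨(Kc ^ p)⁻¹, ?_, ?_⟩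
  · rw [pos_iff_ne_zero]
    simpa using hKp0
  intro E x r hE hxE hr hdiam
  refine le_sInf ?_
  rintro t ⟨u, ⟨κ, hκu⟩, hu1, hu0, g, ⟨hgm, N, hN, hH⟩, rfl⟩
  have hab : ∃ a b : X, 8 * r < dist a b := by
    by_contra hcontra
    push_neg at hcontra
    have hle : EMetric.diam (univ : Set X) ≤ ENNReal.ofReal (8*r) :=
      EMetric.diam_le (fun a _ b _ => by
        rw [edist_dist]; exact ENNReal.ofReal_le_ofReal (hcontra a b))
    exact absurd hdiam (not_lt.mpr hle)
  have hpot : ∀ y ∈ E ∩ closure (ball x r),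
      1 ≤ rieszPotential μ β (fun w => (Kc:ℝ≥0∞) * g w) y := by
    intro y hy
    have hxy : dist x y ≤ r := by
      have h1 := closure_ball_subset_closedBall hy.2
      rw [dist_comm]
      exact mem_closedBall.mp h1
    have hkey := aux_key μ hpos hfin c hc hdbl β hβ hβ1 x y r hr hab hxy u κ hκu
      (hu1 y hy) hu0 g hgm N hN hH
    have heq : rieszPotential μ β (fun w => (Kc:ℝ≥0∞) * g w) y
        = (Kc:ℝ≥0∞) * rieszPotential μ β g y := by
      unfold rieszPotential
      rw [← lintegral_const_mul' _ _ ENNReal.coe_ne_top]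
      congr 1
      ext w
      ring
    rw [heq, hKcast]
    exact hkey
  have hmem : (∫⁻ w, ((Kc:ℝ≥0∞) * g w) ^ p ∂μ) ∈
      { t | ∃ f : X → ℝ≥0∞, Measurable f ∧
        (∀ z ∈ E ∩ closure (ball x r), 1 ≤ rieszPotential μ β f z) ∧
        t = ∫⁻ w, f w ^ p ∂μ } :=
    ⟨fun w => (Kc:ℝ≥0∞) * g w, hgm.const_mul _, hpot, rfl⟩
  have hcap : rieszCapacity μ β p (E ∩ closure (ball x r)) ≤
      ∫⁻ w, ((Kc:ℝ≥0∞) * g w) ^ p ∂μ := sInf_le hmem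
  have hrp_ne_top : ((Kc:ℝ≥0∞)) ^ p ≠ ∞ :=
    ENNReal.rpow_ne_top_of_nonneg (by linarith) ENNReal.coe_ne_top
  have heq2 : ∫⁻ w, ((Kc:ℝ≥0∞) * g w) ^ p ∂μ = ((Kc:ℝ≥0∞)) ^ p * ∫⁻ w, (g w) ^ p ∂μ := by
    rw [← lintegral_const_mul' _ _ hrp_ne_top]
    congr 1
    ext w
    rw [ENNReal.mul_rpow_of_nonneg _ _ (by linarith : (0:ℝ) ≤ p)]
  have hrp_ne0 : ((Kc:ℝ≥0∞)) ^ p ≠ 0 := by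
    refine (ENNReal.rpow_pos ?_ ENNReal.coe_ne_top).ne'
    exact_mod_cast pos_iff_ne_zero.mpr hKc0
  have hinv : ((((Kc ^ p)⁻¹ : ℝ≥0)) : ℝ≥0∞) = (((Kc:ℝ≥0∞)) ^ p)⁻¹ := by
    rw [ENNReal.coe_inv hKp0, ENNReal.coe_rpow_of_ne_zero hKc0]
  calc ((((Kc ^ p)⁻¹ : ℝ≥0)) : ℝ≥0∞) * rieszCapacity μ β p (E ∩ closure (ball x r))
      ≤ ((((Kc ^ p)⁻¹ : ℝ≥0)) : ℝ≥0∞) * (((Kc:ℝ≥0∞)) ^ p * ∫⁻ w, (g w) ^ p ∂μ) := by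
        refine mul_le_mul_right ?_ _
        rw [← heq2]
        exact hcap
    _ = ∫⁻ w, (g w) ^ p ∂μ := by
        rw [hinv, ← mul_assoc, ENNReal.inv_mul_cancel hrp_ne0 hrp_ne_top, one_mul]
end

section
/- Let q > 0. The following are equivalent for a metric measure space X with doubling measure μ: (i) there is c_q > 0 with μ(B(x,r))/μ(B(x,R)) ≤ c_q (r/R)^q for all x ∈ X and 0 < r < R ≤ 2 diam(X); (ii) there is C₂ > 0 such that H^{μ,q}_r(F) ≤ C₂ H^{μ,q}_{2 diam(X)}(F) whenever F ⊂ closure of B(x,r) with x ∈ X, r > 0; (iii) there is C₃ > 0 such that r^{−q} μ(B(x,r)) ≤ C₃ H^{μ,q}_{2 diam(X)}(B(x,r)) for all x ∈ X and r > 0. -/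
open MeasureTheory Metric Set ENNReal NNReal

/-- The `ρ`-restricted Hausdorff content of codimension `q` of `F`, defined via
countable covers by balls with radii at most `ρ`. -/
noncomputable def hContent {X : Type*} [MetricSpace X] [MeasurableSpace X]
    (μ : Measure X) (q : ℝ) (ρ : ℝ≥0∞) (F : Set X) : ℝ≥0∞ :=
  sInf { t | ∃ S : Set (X × ℝ), S.Countable ∧
    (∀ b ∈ S, 0 < b.2 ∧ ENNReal.ofReal b.2 ≤ ρ) ∧
    F ⊆ ⋃ b ∈ S, ball b.1 b.2 ∧
    t = ∑' b : S, μ (ball (b : X × ℝ).1 (b : X × ℝ).2) *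
          ENNReal.ofReal ((b : X × ℝ).2 ^ (-q)) }

namespace Stmt13Aux

variable {X : Type*} [MetricSpace X] [MeasurableSpace X] [BorelSpace X] {μ : Measure X}

lemma hContent_le {q : ℝ} {ρ : ℝ≥0∞} {F : Set X} (S : Set (X × ℝ)) (hS : S.Countable)
    (hrad : ∀ b ∈ S, 0 < b.2 ∧ ENNReal.ofReal b.2 ≤ ρ)
    (hcov : F ⊆ ⋃ b ∈ S, ball b.1 b.2) :
    hContent μ q ρ F ≤ ∑' b : S, μ (ball (b : X × ℝ).1 (b : X × ℝ).2) *
      ENNReal.ofReal ((b : X × ℝ).2 ^ (-q)) :=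
  sInf_le ⟨S, hS, hrad, hcov, rfl⟩

lemma hContent_mono {q : ℝ} {ρ : ℝ≥0∞} {F₁ F₂ : Set X} (h : F₁ ⊆ F₂) :
    hContent μ q ρ F₁ ≤ hContent μ q ρ F₂ := by
  apply sInf_le_sInf
  rintro t ⟨S, hS, hrad, hcov, ht⟩
  exact ⟨S, hS, hrad, h.trans hcov, ht⟩

lemma hContent_ball_le {q : ℝ} {ρ : ℝ≥0∞} {x : X} {R : ℝ} (hR : 0 < R)
    (hRρ : ENNReal.ofReal R ≤ ρ) :
    hContent μ q ρ (ball x R) ≤ μ (ball x R) * ENNReal.ofReal (R ^ (-q)) := by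
  have h := hContent_le (μ := μ) (q := q) (F := ball x R) ({((x, R) : X × ℝ)} : Set (X × ℝ))
    (countable_singleton _)
    (by
      intro b hb
      rw [Set.mem_singleton_iff] at hb
      subst hb
      exact ⟨hR, hRρ⟩)
    (by simp)
  rwa [tsum_singleton ((x, R) : X × ℝ)
    (fun p => μ (ball p.1 p.2) * ENNReal.ofReal (p.2 ^ (-q)))] at h

lemma le_hContent_ball {q : ℝ} (hq : 0 < q) {x : X} {r : ℝ} (hr : 0 < r) :
    ENNReal.ofReal (r ^ (-q)) * μ (ball x r) ≤ hContent μ q (ENNReal.ofReal r) (ball x r) := by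
  apply le_sInf
  rintro t ⟨S, hSc, hrad, hcov, rfl⟩
  calc ENNReal.ofReal (r ^ (-q)) * μ (ball x r)
      ≤ ENNReal.ofReal (r ^ (-q)) * ∑' b : S, μ (ball (b : X × ℝ).1 (b : X × ℝ).2) := by
        gcongr
        exact (measure_mono hcov).trans (measure_biUnion_le μ hSc _)
    _ = ∑' b : S, ENNReal.ofReal (r ^ (-q)) * μ (ball (b : X × ℝ).1 (b : X × ℝ).2) :=
        ENNReal.tsum_mul_left.symm
    _ ≤ ∑' b : S, μ (ball (b : X × ℝ).1 (b : X × ℝ).2) *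
          ENNReal.ofReal ((b : X × ℝ).2 ^ (-q)) := by
        apply ENNReal.tsum_le_tsum
        intro b
        rw [mul_comm]
        refine mul_le_mul_right (ENNReal.ofReal_le_ofReal ?_) _
        exact Real.rpow_le_rpow_of_nonpos (hrad b b.2).1
          ((ENNReal.ofReal_le_ofReal_iff hr.le).mp (hrad b b.2).2) (neg_nonpos.mpr hq.le)

lemma le_mul_hContent {q : ℝ} {ρ : ℝ≥0∞} {F : Set X} {C a : ℝ≥0∞} (hC0 : C ≠ 0) (hCt : C ≠ ∞)
    (h : ∀ S : Set (X × ℝ), S.Countable →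
      (∀ b ∈ S, 0 < b.2 ∧ ENNReal.ofReal b.2 ≤ ρ) →
      F ⊆ ⋃ b ∈ S, ball b.1 b.2 →
      a ≤ C * ∑' b : S, μ (ball (b : X × ℝ).1 (b : X × ℝ).2) *
        ENNReal.ofReal ((b : X × ℝ).2 ^ (-q))) :
    a ≤ C * hContent μ q ρ F := by
  unfold hContent
  rw [sInf_eq_iInf', ENNReal.mul_iInf_of_ne hC0 hCt]
  refine le_iInf ?_
  rintro ⟨t, S, hS, h2, h3, rfl⟩
  exact h S hS h2 h3

lemma dbl_pow {c : ℝ≥0}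
    (hdbl : ∀ (x : X) (r : ℝ), 0 < r → μ (ball x (2 * r)) ≤ (c : ℝ≥0∞) * μ (ball x r))
    (n : ℕ) (x : X) {r : ℝ} (hr : 0 < r) :
    μ (ball x (2 ^ n * r)) ≤ (c : ℝ≥0∞) ^ n * μ (ball x r) := by
  induction n with
  | zero => simp
  | succ n ih =>
    have h1 : (2 : ℝ) ^ (n + 1) * r = 2 * (2 ^ n * r) := by ring
    rw [h1, pow_succ]
    calc μ (ball x (2 * (2 ^ n * r))) ≤ (c : ℝ≥0∞) * μ (ball x (2 ^ n * r)) :=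
          hdbl x _ (by positivity)
      _ ≤ (c : ℝ≥0∞) * ((c : ℝ≥0∞) ^ n * μ (ball x r)) := by gcongr
      _ = (c : ℝ≥0∞) ^ n * (c : ℝ≥0∞) * μ (ball x r) := by ring

lemma dbl_le {c : ℝ≥0}
    (hdbl : ∀ (x : X) (r : ℝ), 0 < r → μ (ball x (2 * r)) ≤ (c : ℝ≥0∞) * μ (ball x r))
    (n : ℕ) (x : X) {s r : ℝ} (hr : 0 < r) (hs : s ≤ 2 ^ n * r) :
    μ (ball x s) ≤ (c : ℝ≥0∞) ^ n * μ (ball x r) :=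
  (measure_mono (ball_subset_ball hs)).trans (dbl_pow hdbl n x hr)

lemma exists_packing (hpos : ∀ (x : X) (r : ℝ), 0 < r → 0 < μ (ball x r))
    (hfin : ∀ (x : X) (r : ℝ), μ (ball x r) < ∞)
    (x : X) {r : ℝ} (hr : 0 < r) :
    ∃ T : Set X, T.Countable ∧ T ⊆ ball x (2 * r) ∧
      (T.PairwiseDisjoint fun t => closedBall t (r / 8)) ∧
      ball x (2 * r) ⊆ ⋃ t ∈ T, ball t (3 * r / 4) := by
  obtain ⟨T, hTsub, hTdisj, hTcov⟩ :=
    Vitali.exists_disjoint_subfamily_covering_enlargement_closedBall (ball x (2 * r)) id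
      (fun _ => r / 8) (r / 8) (fun _ _ => le_rfl) 4 (by norm_num)
  refine ⟨T, ?_, hTsub, hTdisj, ?_⟩
  · have hdisj : Pairwise (Function.onFun Disjoint fun t : T => closedBall (t : X) (r / 8)) := by
      intro i j hij
      exact hTdisj i.2 j.2 (fun h => hij (Subtype.ext h))
    have hmble : ∀ t : T, MeasurableSet (closedBall (t : X) (r / 8)) :=
      fun _ => measurableSet_closedBall
    have hUfin : μ (⋃ t : T, closedBall (t : X) (r / 8)) ≠ ∞ := by
      refine ne_of_lt (lt_of_le_of_lt (measure_mono ?_) (hfin x (3 * r)))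
      rintro y hy
      simp only [Set.mem_iUnion] at hy
      obtain ⟨t, hyt⟩ := hy
      have h1 : dist (t : X) x < 2 * r := hTsub t.2
      have h2 : dist y (t : X) ≤ r / 8 := mem_closedBall.mp hyt
      have : dist y x < 3 * r := by
        calc dist y x ≤ dist y (t : X) + dist (t : X) x := dist_triangle _ _ _
          _ < r / 8 + 2 * r := by linarith
          _ ≤ 3 * r := by linarith
      exact mem_ball.mpr this
    have hcnt := MeasureTheory.Measure.countable_meas_pos_of_disjoint_of_meas_iUnion_ne_top μ
      hmble hdisj hUfin
    have heq : {i : T | 0 < μ (closedBall (i : X) (r / 8))} = univ :=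
      eq_univ_of_forall fun i =>
        lt_of_lt_of_le (hpos i (r / 8) (by positivity)) (measure_mono ball_subset_closedBall)
    rw [heq] at hcnt
    have : Countable T := Set.countable_univ_iff.mp hcnt
    exact Set.countable_coe_iff.mp this
  · intro y hy
    obtain ⟨t, htT, hsub⟩ := hTcov y hy
    have h1 : y ∈ closedBall t (4 * (r / 8)) := hsub (mem_closedBall_self (by positivity))
    have h2 : dist y t ≤ r / 2 := by
      have := mem_closedBall.mp h1
      linarith
    exact mem_biUnion htT (mem_ball.mpr (lt_of_le_of_lt h2 (by linarith)))

end Stmt13Aux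
section Part2
open MeasureTheory Metric Set ENNReal NNReal Stmt13Aux

variable {X : Type*} [MetricSpace X] [MeasurableSpace X] [BorelSpace X] {μ : Measure X}

lemma iii_imp_i {q : ℝ} (hq : 0 < q) {C₃ : ℝ≥0} (hC₃ : 0 < C₃)
    (h3 : ∀ (x : X) (r : ℝ), 0 < r →
      ENNReal.ofReal (r ^ (-q)) * μ (ball x r) ≤
        (C₃ : ℝ≥0∞) * hContent μ q (2 * EMetric.diam (univ : Set X)) (ball x r)) :
    ∀ (x : X) (r R : ℝ), 0 < r → r < R →
      ENNReal.ofReal R ≤ 2 * EMetric.diam (univ : Set X) →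
      μ (ball x r) ≤ ENNReal.ofReal ((C₃ : ℝ) * (r / R) ^ q) * μ (ball x R) := by
  intro x r R hr hrR hRD
  have hR : 0 < R := hr.trans hrR
  have h := (h3 x r hr).trans (mul_le_mul_right
    ((hContent_mono (ball_subset_ball hrR.le)).trans (hContent_ball_le hR hRD)) _)
  -- h : ofReal (r^(-q)) * μ (ball x r) ≤ C₃ * (μ (ball x R) * ofReal (R^(-q)))
  have hrq : ENNReal.ofReal (r ^ q) * ENNReal.ofReal (r ^ (-q)) = 1 := by
    rw [← ENNReal.ofReal_mul (by positivity), ← Real.rpow_add hr, add_neg_cancel,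
      Real.rpow_zero, ENNReal.ofReal_one]
  calc μ (ball x r) = ENNReal.ofReal (r ^ q) * ENNReal.ofReal (r ^ (-q)) * μ (ball x r) := by
        rw [hrq, one_mul]
    _ ≤ ENNReal.ofReal (r ^ q) * ((C₃ : ℝ≥0∞) * (μ (ball x R) * ENNReal.ofReal (R ^ (-q)))) := by
        rw [mul_assoc]
        exact mul_le_mul_right h _
    _ = ENNReal.ofReal ((C₃ : ℝ) * (r / R) ^ q) * μ (ball x R) := by
        rw [← ENNReal.ofReal_coe_nnreal]
        rw [show ((C₃ : ℝ) * (r / R) ^ q) = r ^ q * ((C₃ : ℝ) * R ^ (-q)) by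
          rw [Real.div_rpow hr.le hR.le, Real.rpow_neg hR.le]; ring]
        rw [ENNReal.ofReal_mul (by positivity), ENNReal.ofReal_mul (C₃.coe_nonneg)]
        ring

lemma ii_imp_iii {q : ℝ} (hq : 0 < q) {C₂ : ℝ≥0}
    (h2 : ∀ (x : X) (r : ℝ) (F : Set X), 0 < r → F ⊆ closure (ball x r) →
      hContent μ q (ENNReal.ofReal r) F ≤
        (C₂ : ℝ≥0∞) * hContent μ q (2 * EMetric.diam (univ : Set X)) F) :
    ∀ (x : X) (r : ℝ), 0 < r →
      ENNReal.ofReal (r ^ (-q)) * μ (ball x r) ≤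
        (C₂ : ℝ≥0∞) * hContent μ q (2 * EMetric.diam (univ : Set X)) (ball x r) :=
  fun x r hr => (le_hContent_ball hq hr).trans (h2 x r (ball x r) hr subset_closure)

end Part2
section Part3
open MeasureTheory Metric Set ENNReal NNReal Stmt13Aux

variable {X : Type*} [MetricSpace X] [MeasurableSpace X] [BorelSpace X] {μ : Measure X}

lemma i_imp_ii (hpos : ∀ (x : X) (r : ℝ), 0 < r → 0 < μ (ball x r))
    (hfin : ∀ (x : X) (r : ℝ), μ (ball x r) < ∞)
    {c : ℝ≥0}
    (hdbl : ∀ (x : X) (r : ℝ), 0 < r → μ (ball x (2 * r)) ≤ (c : ℝ≥0∞) * μ (ball x r))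
    {q : ℝ} (hq : 0 < q) {cq : ℝ} (hcq : 0 < cq)
    (h1 : ∀ (x : X) (r R : ℝ), 0 < r → r < R →
      ENNReal.ofReal R ≤ 2 * EMetric.diam (univ : Set X) →
      μ (ball x r) ≤ ENNReal.ofReal (cq * (r / R) ^ q) * μ (ball x R))
    (x : X) (r : ℝ) (F : Set X) (hr : 0 < r) (hF : F ⊆ closure (ball x r)) :
    hContent μ q (ENNReal.ofReal r) F ≤
      ((1 + cq.toNNReal * c ^ 8 : ℝ≥0) : ℝ≥0∞) *
        hContent μ q (2 * EMetric.diam (univ : Set X)) F := by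
  have hC0 : ((1 + cq.toNNReal * c ^ 8 : ℝ≥0) : ℝ≥0∞) ≠ 0 := by
    simp only [ne_eq, ENNReal.coe_eq_zero]
    positivity
  have hCcast : ((1 + cq.toNNReal * c ^ 8 : ℝ≥0) : ℝ≥0∞) =
      1 + ENNReal.ofReal cq * (c : ℝ≥0∞) ^ 8 := by
    push_cast
    rw [ENNReal.ofReal_eq_coe_nnreal hcq.le]
    congr 1
    simp [Real.toNNReal, hcq.le]
  have hC1 : (1 : ℝ≥0∞) ≤ ((1 + cq.toNNReal * c ^ 8 : ℝ≥0) : ℝ≥0∞) := by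
    rw [hCcast]; exact le_add_of_nonneg_right zero_le
  refine le_mul_hContent hC0 ENNReal.coe_ne_top ?_
  intro S hSc hrad hcov
  have hFsub : F ⊆ closedBall x r := hF.trans closure_ball_subset_closedBall
  by_cases hbig : ∃ b ∈ S, r < b.2 ∧ (ball b.1 b.2 ∩ F).Nonempty
  · -- there is a big ball meeting F
    obtain ⟨b₀, hb₀S, hb₀r, z, hz₀, hzF⟩ := hbig
    have hr₀pos : 0 < b₀.2 := hr.trans hb₀r
    have hr₀D : ENNReal.ofReal b₀.2 ≤ 2 * EMetric.diam (univ : Set X) := (hrad b₀ hb₀S).2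
    have hdzx : dist z x ≤ r := mem_closedBall.mp (hFsub hzF)
    have hdzx₀ : dist z b₀.1 < b₀.2 := mem_ball.mp hz₀
    have hdxx₀ : dist x b₀.1 < r + b₀.2 := by
      calc dist x b₀.1 ≤ dist x z + dist z b₀.1 := dist_triangle _ _ _
        _ < r + b₀.2 := by rw [dist_comm x z]; linarith
    obtain ⟨T, hTc, hTsub, hTdisj, hTcov⟩ := exists_packing hpos hfin x hr
    -- the new cover by balls of radius 3r/4
    set f : X → X × ℝ := fun t => (t, 3 * r / 4) with hf
    have hinj : Set.InjOn f T := fun a _ b _ h => congrArg Prod.fst h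
    have hcov' : F ⊆ ⋃ b ∈ f '' T, ball b.1 b.2 := by
      rw [Set.biUnion_image]
      intro y hy
      have : y ∈ ball x (2 * r) := by
        have := mem_closedBall.mp (hFsub hy)
        exact mem_ball.mpr (by linarith)
      exact hTcov this
    have hrad' : ∀ b ∈ f '' T, 0 < b.2 ∧ ENNReal.ofReal b.2 ≤ ENNReal.ofReal r := by
      rintro b ⟨t, _, rfl⟩
      refine ⟨by positivity, ENNReal.ofReal_le_ofReal ?_⟩
      show (3 * r / 4 : ℝ) ≤ r
      linarith
    refine le_trans (hContent_le (f '' T) (hTc.image f) hrad' hcov') ?_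
    rw [tsum_image (fun p : X × ℝ => μ (ball p.1 p.2) * ENNReal.ofReal (p.2 ^ (-q))) hinj]
    -- now bound the sum over T
    have stepB : ∑' t : T, μ (ball (t : X) (r / 8)) ≤ μ (ball x (3 * r)) := by
      rw [← measure_biUnion hTc (hTdisj.mono fun t => ball_subset_closedBall)
        (fun b _ => measurableSet_ball)]
      refine measure_mono ?_
      rintro y hy
      simp only [Set.mem_iUnion] at hy
      obtain ⟨t, htT, hyt⟩ := hy
      have h1 : dist (t : X) x < 2 * r := hTsub htT
      have h2 : dist y (t : X) < r / 8 := mem_ball.mp hyt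
      exact mem_ball.mpr (by
        calc dist y x ≤ dist y t + dist t x := dist_triangle _ _ _
          _ < r / 8 + 2 * r := by linarith
          _ ≤ 3 * r := by linarith)
    have key : ∑' t : T, μ (ball (t : X) (3 * r / 4)) * ENNReal.ofReal ((3 * r / 4) ^ (-q)) ≤
        ENNReal.ofReal cq * (c : ℝ≥0∞) ^ 8 *
          (μ (ball b₀.1 b₀.2) * ENNReal.ofReal (b₀.2 ^ (-q))) := by
      have hofr : ENNReal.ofReal ((3 * r / 4) ^ (-q)) *
          ENNReal.ofReal (cq * ((3 * r / 4) / b₀.2) ^ q) =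
          ENNReal.ofReal cq * ENNReal.ofReal (b₀.2 ^ (-q)) := by
        rw [← ENNReal.ofReal_mul (by positivity), ← ENNReal.ofReal_mul hcq.le]
        congr 1
        rw [Real.div_rpow (by positivity) hr₀pos.le, Real.rpow_neg (by positivity),
          Real.rpow_neg hr₀pos.le]
        have h34 : (0:ℝ) < (3 * r / 4) ^ q := Real.rpow_pos_of_pos (by positivity) q
        field_simp
      calc ∑' t : T, μ (ball (t : X) (3 * r / 4)) * ENNReal.ofReal ((3 * r / 4) ^ (-q))
          = (∑' t : T, μ (ball (t : X) (3 * r / 4))) * ENNReal.ofReal ((3 * r / 4) ^ (-q)) :=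
            ENNReal.tsum_mul_right
        _ ≤ (∑' t : T, (c : ℝ≥0∞) ^ 3 * μ (ball (t : X) (r / 8))) *
              ENNReal.ofReal ((3 * r / 4) ^ (-q)) := by
            gcongr with t
            exact dbl_le hdbl 3 t (by positivity) (by rw [show (2:ℝ)^3 * (r/8) = r by ring]; linarith)
        _ = (c : ℝ≥0∞) ^ 3 * (∑' t : T, μ (ball (t : X) (r / 8))) *
              ENNReal.ofReal ((3 * r / 4) ^ (-q)) := by rw [ENNReal.tsum_mul_left]
        _ ≤ (c : ℝ≥0∞) ^ 3 * μ (ball x (3 * r)) * ENNReal.ofReal ((3 * r / 4) ^ (-q)) := by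
            gcongr
        _ ≤ (c : ℝ≥0∞) ^ 3 * ((c : ℝ≥0∞) ^ 3 * μ (ball x (3 * r / 4))) *
              ENNReal.ofReal ((3 * r / 4) ^ (-q)) := by
            gcongr
            exact dbl_le hdbl 3 x (by positivity) (by rw [show (2:ℝ)^3 * (3*r/4) = 6*r by ring]; linarith)
        _ ≤ (c : ℝ≥0∞) ^ 3 * ((c : ℝ≥0∞) ^ 3 *
              (ENNReal.ofReal (cq * ((3 * r / 4) / b₀.2) ^ q) * μ (ball x b₀.2))) *
              ENNReal.ofReal ((3 * r / 4) ^ (-q)) := by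
            gcongr
            exact h1 x (3 * r / 4) b₀.2 (by positivity) (by linarith) hr₀D
        _ ≤ (c : ℝ≥0∞) ^ 3 * ((c : ℝ≥0∞) ^ 3 *
              (ENNReal.ofReal (cq * ((3 * r / 4) / b₀.2) ^ q) *
                ((c : ℝ≥0∞) ^ 2 * μ (ball b₀.1 b₀.2)))) *
              ENNReal.ofReal ((3 * r / 4) ^ (-q)) := by
            gcongr
            calc μ (ball x b₀.2) ≤ μ (ball b₀.1 (4 * b₀.2)) :=
                  measure_mono (ball_subset_ball' (by linarith))
              _ ≤ (c : ℝ≥0∞) ^ 2 * μ (ball b₀.1 b₀.2) :=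
                  dbl_le hdbl 2 b₀.1 hr₀pos (by rw [show (2:ℝ)^2 * b₀.2 = 4 * b₀.2 by ring])
        _ = ENNReal.ofReal ((3 * r / 4) ^ (-q)) *
              ENNReal.ofReal (cq * ((3 * r / 4) / b₀.2) ^ q) *
              ((c : ℝ≥0∞) ^ 8 * μ (ball b₀.1 b₀.2)) := by ring
        _ = ENNReal.ofReal cq * (c : ℝ≥0∞) ^ 8 *
              (μ (ball b₀.1 b₀.2) * ENNReal.ofReal (b₀.2 ^ (-q))) := by rw [hofr]; ring
    refine key.trans ?_
    have hterm : μ (ball b₀.1 b₀.2) * ENNReal.ofReal (b₀.2 ^ (-q)) ≤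
        ∑' b : S, μ (ball (b : X × ℝ).1 (b : X × ℝ).2) * ENNReal.ofReal ((b : X × ℝ).2 ^ (-q)) :=
      ENNReal.le_tsum (⟨b₀, hb₀S⟩ : S)
    calc ENNReal.ofReal cq * (c : ℝ≥0∞) ^ 8 *
          (μ (ball b₀.1 b₀.2) * ENNReal.ofReal (b₀.2 ^ (-q)))
        ≤ ENNReal.ofReal cq * (c : ℝ≥0∞) ^ 8 *
          ∑' b : S, μ (ball (b : X × ℝ).1 (b : X × ℝ).2) *
            ENNReal.ofReal ((b : X × ℝ).2 ^ (-q)) := mul_le_mul_right hterm _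
      _ ≤ ((1 + cq.toNNReal * c ^ 8 : ℝ≥0) : ℝ≥0∞) *
          ∑' b : S, μ (ball (b : X × ℝ).1 (b : X × ℝ).2) *
            ENNReal.ofReal ((b : X × ℝ).2 ^ (-q)) := by
          refine mul_le_mul_left ?_ _
          rw [hCcast]
          exact le_add_of_nonneg_left zero_le
  · -- all balls meeting F are small
    push_neg at hbig
    set S' : Set (X × ℝ) := {b ∈ S | (ball b.1 b.2 ∩ F).Nonempty} with hS'
    have hS'sub : S' ⊆ S := sep_subset _ _
    have hS'c : S'.Countable := hSc.mono hS'sub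
    have hrad' : ∀ b ∈ S', 0 < b.2 ∧ ENNReal.ofReal b.2 ≤ ENNReal.ofReal r := by
      rintro b ⟨hbS, hbne⟩
      refine ⟨(hrad b hbS).1, ENNReal.ofReal_le_ofReal ?_⟩
      by_contra hcon
      push_neg at hcon
      exact hbne.ne_empty (hbig b hbS hcon)
    have hcov' : F ⊆ ⋃ b ∈ S', ball b.1 b.2 := by
      intro y hy
      have := hcov hy
      simp only [Set.mem_iUnion] at this
      obtain ⟨b, hbS, hyb⟩ := this
      exact mem_biUnion ⟨hbS, ⟨y, hyb, hy⟩⟩ hyb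
    refine le_trans (hContent_le S' hS'c hrad' hcov') ?_
    have hsub : ∑' b : S', μ (ball (b : X × ℝ).1 (b : X × ℝ).2) *
          ENNReal.ofReal ((b : X × ℝ).2 ^ (-q)) ≤
        ∑' b : S, μ (ball (b : X × ℝ).1 (b : X × ℝ).2) *
          ENNReal.ofReal ((b : X × ℝ).2 ^ (-q)) :=
      ENNReal.summable.tsum_le_tsum_of_inj (Set.inclusion hS'sub) (Set.inclusion_injective hS'sub)
        (fun _ _ => zero_le) (fun _ => le_rfl) ENNReal.summable
    exact hsub.trans (le_mul_of_one_le_left zero_le hC1)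

end Part3
theorem stmt13 {X : Type*} [MetricSpace X] [MeasurableSpace X] [BorelSpace X]
    (μ : Measure X)
    (hpos : ∀ (x : X) (r : ℝ), 0 < r → 0 < μ (ball x r))
    (hfin : ∀ (x : X) (r : ℝ), μ (ball x r) < ∞)
    (c : ℝ≥0) (hc : 1 < c)
    (hdbl : ∀ (x : X) (r : ℝ), 0 < r → μ (ball x (2 * r)) ≤ (c : ℝ≥0∞) * μ (ball x r))
    (q : ℝ) (hq : 0 < q) :
    ((∃ cq : ℝ, 0 < cq ∧ ∀ (x : X) (r R : ℝ), 0 < r → r < R →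
        ENNReal.ofReal R ≤ 2 * EMetric.diam (univ : Set X) →
        μ (ball x r) ≤ ENNReal.ofReal (cq * (r / R) ^ q) * μ (ball x R)) ↔
      (∃ C₂ : ℝ≥0, 0 < C₂ ∧ ∀ (x : X) (r : ℝ) (F : Set X), 0 < r →
        F ⊆ closure (ball x r) →
        hContent μ q (ENNReal.ofReal r) F ≤
          (C₂ : ℝ≥0∞) * hContent μ q (2 * EMetric.diam (univ : Set X)) F)) ∧
    ((∃ C₂ : ℝ≥0, 0 < C₂ ∧ ∀ (x : X) (r : ℝ) (F : Set X), 0 < r →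
        F ⊆ closure (ball x r) →
        hContent μ q (ENNReal.ofReal r) F ≤
          (C₂ : ℝ≥0∞) * hContent μ q (2 * EMetric.diam (univ : Set X)) F) ↔
      (∃ C₃ : ℝ≥0, 0 < C₃ ∧ ∀ (x : X) (r : ℝ), 0 < r →
        ENNReal.ofReal (r ^ (-q)) * μ (ball x r) ≤
          (C₃ : ℝ≥0∞) * hContent μ q (2 * EMetric.diam (univ : Set X)) (ball x r))) := by
  have Hi_ii : (∃ cq : ℝ, 0 < cq ∧ ∀ (x : X) (r R : ℝ), 0 < r → r < R →
        ENNReal.ofReal R ≤ 2 * EMetric.diam (univ : Set X) →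
        μ (ball x r) ≤ ENNReal.ofReal (cq * (r / R) ^ q) * μ (ball x R)) →
      (∃ C₂ : ℝ≥0, 0 < C₂ ∧ ∀ (x : X) (r : ℝ) (F : Set X), 0 < r →
        F ⊆ closure (ball x r) →
        hContent μ q (ENNReal.ofReal r) F ≤
          (C₂ : ℝ≥0∞) * hContent μ q (2 * EMetric.diam (univ : Set X)) F) := by
    rintro ⟨cq, hcq, h1⟩
    exact ⟨1 + cq.toNNReal * c ^ 8, by positivity,
      fun x r F hr hF => i_imp_ii hpos hfin hdbl hq hcq h1 x r F hr hF⟩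
  have Hii_iii : (∃ C₂ : ℝ≥0, 0 < C₂ ∧ ∀ (x : X) (r : ℝ) (F : Set X), 0 < r →
        F ⊆ closure (ball x r) →
        hContent μ q (ENNReal.ofReal r) F ≤
          (C₂ : ℝ≥0∞) * hContent μ q (2 * EMetric.diam (univ : Set X)) F) →
      (∃ C₃ : ℝ≥0, 0 < C₃ ∧ ∀ (x : X) (r : ℝ), 0 < r →
        ENNReal.ofReal (r ^ (-q)) * μ (ball x r) ≤
          (C₃ : ℝ≥0∞) * hContent μ q (2 * EMetric.diam (univ : Set X)) (ball x r)) := by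
    rintro ⟨C₂, hC₂, h2⟩
    exact ⟨C₂, hC₂, ii_imp_iii hq h2⟩
  have Hiii_i : (∃ C₃ : ℝ≥0, 0 < C₃ ∧ ∀ (x : X) (r : ℝ), 0 < r →
        ENNReal.ofReal (r ^ (-q)) * μ (ball x r) ≤
          (C₃ : ℝ≥0∞) * hContent μ q (2 * EMetric.diam (univ : Set X)) (ball x r)) →
      (∃ cq : ℝ, 0 < cq ∧ ∀ (x : X) (r R : ℝ), 0 < r → r < R →
        ENNReal.ofReal R ≤ 2 * EMetric.diam (univ : Set X) →
        μ (ball x r) ≤ ENNReal.ofReal (cq * (r / R) ^ q) * μ (ball x R)) := by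
    rintro ⟨C₃, hC₃, h3⟩
    exact ⟨(C₃ : ℝ), by exact_mod_cast hC₃, iii_imp_i hq hC₃ h3⟩
  exact ⟨⟨Hi_ii, fun h => Hiii_i (Hii_iii h)⟩, ⟨Hii_iii, fun h => Hi_ii (Hiii_i h)⟩⟩
end
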